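/- arXiv:1411.1624 — 7 statements merged into one kernel-verified Lean document; each statement's English description precedes it below -/
import Mathlib

section
/- Let (X_n) be a sequence of real random variables and (κ_n) a sequence with κ_n > 0 and liminf_n κ_n > 0. Assume the regular decay hypothesis for the right tails at (κ_n) with limit function I, that I(ρ) ≥ ρ for every ρ ≥ 1, and that there exists η > 0 with limsup_n E_n[e^{(1+η)X_n}] < ∞. Then, with c_n := E_n[(e^{X_n} − e^{κ_n})^+], one has log c_n ~ log F̄_n(κ_n) + κ_n, i.e. (log c_n)/(log F̄_n(κ_n) + κ_n) → 1 as n → ∞. -/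
open MeasureTheory Filter Topology
open scoped ENNReal NNReal


private lemma grid_exists {s : ℝ} (hs : 0 < s) :
    ∀ (J : ℕ) (u : ℝ), 1 < u → u ≤ 1 + (J : ℝ) * s →
      ∃ j : ℕ, j < J ∧ 1 + (j : ℝ) * s < u ∧ u ≤ 1 + ((j : ℝ) + 1) * s := by
  intro J
  induction J with
  | zero => intro u h1 h2; simp at h2; exfalso; linarith
  | succ J ih =>
    intro u h1 h2
    by_cases h : u ≤ 1 + (J : ℝ) * s
    · obtain ⟨j, hj, h3, h4⟩ := ih u h1 h
      exact ⟨j, Nat.lt_succ_of_lt hj, h3, h4⟩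
    · push_neg at h
      refine ⟨J, Nat.lt_succ_self J, h, ?_⟩
      push_cast at h2 ⊢
      linarith

private lemma arith_upper {e hh ss e1 jj Jj lB Kk LL kk lgF : ℝ}
    (he : 0 < e) (he2 : e ≤ 1/2) (hh0 : 0 < hh)
    (hss : ss = e*hh/8) (he1 : e1 = e*hh/(8*(1+hh)))
    (hjj : 0 ≤ jj) (hjJ : jj ≤ Jj)
    (hKk : Kk = (Jj*ss + ss + 2)*(lB+1)) (hlB : 0 ≤ lB)
    (hkk : 0 < kk) (hLB : LL ≤ lB - (1+hh)*kk)
    (hlog : lgF ≤ (1-e1)*(1+jj*ss)*LL) :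
    (1+(jj+1)*ss)*kk + lgF ≤ (1-e/2)*(LL+kk) + Kk := by
  have hss0 : 0 ≤ ss := by rw [hss]; positivity
  have he10 : 0 < e1 := by rw [he1]; positivity
  have hb1 : e1 ≤ e/8 := by
    rw [he1, div_le_div_iff₀ (by positivity) (by norm_num)]
    nlinarith
  set A := (1-e1)*(1+jj*ss) with hA
  have hexpA : A = (1-e1) + (1-e1)*(jj*ss) := by rw [hA]; ring
  have hb2 : 0 ≤ (1-e1) * (jj*ss) :=
    mul_nonneg (by linarith) (mul_nonneg hjj hss0)
  have h1 : 0 ≤ A - (1 - e/2) := by rw [hexpA]; linarith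
  have h2 : (A - (1-e/2))*LL ≤ (A - (1-e/2))*(lB - (1+hh)*kk) :=
    mul_le_mul_of_nonneg_left hLB h1
  have h3 : (1+(jj+1)*ss) - (1-e/2) - (A - (1-e/2))*(1+hh)
      = jj*ss*hh*(e-8)/8 - e*hh/4 := by
    rw [hA, hss, he1]; field_simp; ring
  have h4 : ((1+(jj+1)*ss) - (1-e/2) - (A - (1-e/2))*(1+hh)) ≤ 0 := by
    rw [h3]
    have h5 : jj*ss*hh*(e-8) ≤ 0 :=
      mul_nonpos_iff.mpr (Or.inl ⟨mul_nonneg (mul_nonneg hjj hss0) hh0.le, by linarith⟩)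
    nlinarith
  have hc : ((1+(jj+1)*ss) - (1-e/2) - (A - (1-e/2))*(1+hh)) * kk ≤ 0 :=
    mul_nonpos_iff.mpr (Or.inr ⟨h4, hkk.le⟩)
  have hJs : 0 ≤ Jj*ss := mul_nonneg (hjj.trans hjJ) hss0
  have h5a : A - (1-e/2) ≤ Jj*ss + ss + 2 := by
    have h6 : jj*ss ≤ Jj*ss := mul_le_mul_of_nonneg_right hjJ hss0
    have h7 : 0 ≤ e1*(1+jj*ss) := mul_nonneg he10.le (by nlinarith)
    rw [hexpA]; nlinarith
  have h5 : (A - (1-e/2)) * lB ≤ Kk := by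
    calc (A - (1-e/2)) * lB ≤ (Jj*ss + ss + 2) * lB := mul_le_mul_of_nonneg_right h5a hlB
      _ ≤ Kk := by
          rw [hKk]
          have h8 : (Jj*ss+ss+2)*(lB+1) = (Jj*ss+ss+2)*lB + (Jj*ss+ss+2) := by ring
          linarith
  linarith [h2, hc, h5, hlog]

private lemma arith_tail {e hh ss e1 Jj lB Kk LL kk dd lgFJ : ℝ}
    (he : 0 < e) (he2 : e ≤ 1/2) (hh0 : 0 < hh)
    (hss : ss = e*hh/8) (he1 : e1 = e*hh/(8*(1+hh)))
    (hJ : 2*(1+hh)/hh ≤ 1 + Jj*ss) (hJj : 0 ≤ Jj)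
    (hKk : Kk = (Jj*ss + ss + 2)*(lB+1)) (hlB : 0 ≤ lB)
    (hkk : 0 < kk) (hdd : dd = LL + kk) (hdneg : dd < 0)
    (hlog : lgFJ ≤ (1-e1)*(1+Jj*ss)*LL) (hLL : LL < 0) :
    lB*(1/(1+hh)) + lgFJ*(hh/(1+hh)) ≤ (1-e/2)*dd + Kk := by
  have hss0 : 0 ≤ ss := by rw [hss]; positivity
  have he10 : 0 < e1 := by rw [he1]; positivity
  have hb1 : e1 ≤ e/8 := by
    rw [he1, div_le_div_iff₀ (by positivity) (by norm_num)]
    nlinarith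
  have hhalf : (1:ℝ)/2 ≤ 1 - e1 := by linarith
  have hAT : 1 ≤ (hh/(1+hh))*((1-e1)*(1+Jj*ss)) := by
    have h2 : (1+hh)/hh ≤ (1-e1)*(1+Jj*ss) := by
      calc (1+hh)/hh = (1/2)*(2*(1+hh)/hh) := by ring
        _ ≤ (1-e1)*(1+Jj*ss) := by
            apply mul_le_mul hhalf hJ (by positivity) (by linarith)
    calc (1:ℝ) = (hh/(1+hh))*((1+hh)/hh) := by field_simp
      _ ≤ _ := mul_le_mul_of_nonneg_left h2 (by positivity)
  have h3 : lgFJ*(hh/(1+hh)) ≤ ((1-e1)*(1+Jj*ss))*LL*(hh/(1+hh)) :=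
    mul_le_mul_of_nonneg_right hlog (by positivity)
  have h4 : ((hh/(1+hh))*((1-e1)*(1+Jj*ss))) * LL ≤ 1 * LL :=
    mul_le_mul_of_nonpos_right hAT hLL.le
  have h5 : lB*(1/(1+hh)) ≤ lB := by
    have : (1:ℝ)/(1+hh) ≤ 1 := by rw [div_le_one (by linarith)]; linarith
    nlinarith
  have h6 : LL ≤ (1-e/2)*dd := by
    have h7 : e*dd ≤ 0 := mul_nonpos_iff.mpr (Or.inl ⟨he.le, hdneg.le⟩)
    nlinarith
  have h7 : lB ≤ Kk := by
    rw [hKk]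
    have hJs : 0 ≤ Jj*ss := mul_nonneg hJj hss0
    nlinarith
  nlinarith [h3, h4, h5, h6, h7]

set_option maxHeartbeats 2000000 in
/-- **Right-tail atypical deviations, κ bounded away from zero, general case.**
For each `n`, the law of the log-return `X_n` is the probability measure `μ n` on `ℝ`,
so that `E_n[f(X_n)] = ∫ f dμ n` and the right tail is `F n x = μ n {y | x < y}`.
Under the regular decay hypothesis with limit function `I`, with `I ρ ≥ ρ` for `ρ ≥ 1`,
and the moment condition `limsup_n E_n[e^{(1+η)X_n}] < ∞` for some `η > 0`, the call prices
`c n = E_n[(e^{X_n} - e^{κ n})⁺]` satisfy `log (c n) ~ log (F n (κ n)) + κ n`. -/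
theorem right_tail_atypical_kappa_bounded_away
    (μ : ℕ → Measure ℝ) (hprob : ∀ n, IsProbabilityMeasure (μ n))
    (κ : ℕ → ℝ) (hκpos : ∀ n, 0 < κ n)
    (hκbdd : ∃ δ > (0:ℝ), ∀ᶠ n in atTop, δ ≤ κ n)
    (F : ℕ → ℝ → ℝ)
    (hF : ∀ n x, F n x = ((μ n) {y | x < y}).toReal)
    (hF01 : ∀ n, ∀ ρ ≥ (1:ℝ), 0 < F n (ρ * κ n) ∧ F n (ρ * κ n) < 1)
    (hFto0 : Tendsto (fun n => F n (κ n)) atTop (𝓝 0))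
    (I : ℝ → EReal)
    (hI0 : ∀ ρ ≥ (1:ℝ), (0:EReal) ≤ I ρ)
    (hI : ∀ ρ ≥ (1:ℝ),
      Tendsto (fun n => ((Real.log (F n (ρ * κ n)) / Real.log (F n (κ n)) : ℝ) : EReal))
        atTop (𝓝 (I ρ)))
    (hIcont : Tendsto I (𝓝[>] (1:ℝ)) (𝓝 (1:EReal)))
    (hIρ : ∀ ρ ≥ (1:ℝ), (ρ : EReal) ≤ I ρ)
    (η : ℝ) (hη : 0 < η)
    (hmom : limsup
        (fun n => ∫⁻ x, ENNReal.ofReal (Real.exp ((1+η)*x)) ∂(μ n)) atTop < ⊤)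
    (c : ℕ → ℝ)
    (hc : ∀ n, c n = ∫ x, max (Real.exp x - Real.exp (κ n)) 0 ∂(μ n)) :
    Tendsto (fun n => Real.log (c n) / (Real.log (F n (κ n)) + κ n)) atTop (𝓝 1) := by
  classical
  obtain ⟨δ, hδ, hκδ⟩ := hκbdd
  have hF0 : ∀ n, 0 < F n (κ n) ∧ F n (κ n) < 1 := by
    intro n; have := hF01 n 1 le_rfl; rwa [one_mul] at this
  have hLneg : ∀ n, Real.log (F n (κ n)) < 0 :=
    fun n => Real.log_neg (hF0 n).1 (hF0 n).2
  have hLbot : Tendsto (fun n => Real.log (F n (κ n))) atTop atBot := by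
    have h1 : Tendsto (fun n => F n (κ n)) atTop (𝓝[>] 0) :=
      tendsto_nhdsWithin_of_tendsto_nhds_of_eventually_within _ hFto0
        (Eventually.of_forall fun n => (hF0 n).1)
    exact Real.tendsto_log_nhdsGT_zero.comp h1
  -- moment bound
  obtain ⟨B, hBtop, hB1, hBev⟩ : ∃ B : ℝ≥0∞, B ≠ ⊤ ∧ (1:ℝ≥0∞) ≤ B ∧ ∀ᶠ n in atTop,
      (∫⁻ x, ENNReal.ofReal (Real.exp ((1+η)*x)) ∂(μ n)) ≤ B := by
    set lim := limsup (fun n => ∫⁻ x, ENNReal.ofReal (Real.exp ((1+η)*x)) ∂(μ n)) atTop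
    refine ⟨lim + 1, ?_, le_add_self, ?_⟩
    · exact (ENNReal.add_lt_top.mpr ⟨hmom, ENNReal.one_lt_top⟩).ne
    · exact (eventually_lt_of_limsup_lt (ENNReal.lt_add_right hmom.ne one_ne_zero)).mono
        fun n h => h.le
  have hBr1 : (1:ℝ) ≤ B.toReal := by
    rw [← ENNReal.toReal_one]
    exact ENNReal.toReal_mono hBtop hB1
  have hBrpos : (0:ℝ) < B.toReal := lt_of_lt_of_le one_pos hBr1
  have hlBr : 0 ≤ Real.log B.toReal := Real.log_nonneg hBr1
  -- Markov bound
  have hMar : ∀ᶠ n in atTop, ∀ x : ℝ, F n x * Real.exp ((1+η)*x) ≤ B.toReal := by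
    filter_upwards [hBev] with n hn
    intro x
    have hf : Measurable fun y : ℝ => ENNReal.ofReal (Real.exp ((1+η)*y)) :=
      (Real.measurable_exp.comp (measurable_id.const_mul (1+η))).ennreal_ofReal
    have h1 : ENNReal.ofReal (Real.exp ((1+η)*x)) * μ n {y | x < y}
        ≤ ∫⁻ y, ENNReal.ofReal (Real.exp ((1+η)*y)) ∂μ n := by
      refine le_trans (mul_le_mul_right (measure_mono ?_) _)
        (mul_meas_ge_le_lintegral₀ hf.aemeasurable _)
      intro y hy
      exact ENNReal.ofReal_le_ofReal (Real.exp_le_exp.mpr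
        (mul_le_mul_of_nonneg_left (le_of_lt hy) (by linarith)))
    have h2 := ENNReal.toReal_mono hBtop (h1.trans hn)
    rw [ENNReal.toReal_mul, ENNReal.toReal_ofReal (Real.exp_nonneg _)] at h2
    rw [hF n x]
    linarith [h2]
  have hLd : ∀ᶠ n in atTop,
      Real.log (F n (κ n)) ≤ Real.log B.toReal - (1+η)*κ n := by
    filter_upwards [hMar] with n hn
    have h1 := hn (κ n)
    have hFpos := (hF0 n).1
    have h2 : Real.log (F n (κ n) * Real.exp ((1+η)*κ n)) ≤ Real.log B.toReal :=
      Real.log_le_log (by positivity) h1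
    rw [Real.log_mul (ne_of_gt hFpos) (Real.exp_ne_zero _), Real.log_exp] at h2
    linarith
  -- d → -∞
  have hdbot : Tendsto (fun n => Real.log (F n (κ n)) + κ n) atTop atBot := by
    have h2 : Tendsto (fun n => (η * Real.log (F n (κ n)) + Real.log B.toReal) * (1+η)⁻¹)
        atTop atBot := by
      apply Tendsto.atBot_mul_const (by positivity)
      apply tendsto_atBot_add_const_right
      exact hLbot.const_mul_atBot hη
    apply tendsto_atBot_mono' atTop ?_ h2
    filter_upwards [hLd] with n hn
    rw [← sub_nonneg]
    have h3 : (η * Real.log (F n (κ n)) + Real.log B.toReal) * (1+η)⁻¹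
        - (Real.log (F n (κ n)) + κ n)
        = ((Real.log B.toReal - (1+η)*κ n) - Real.log (F n (κ n))) * (1+η)⁻¹ := by
      field_simp
      ring
    rw [h3]
    have := sub_nonneg.mpr hn
    positivity
  have hdneg : ∀ᶠ n in atTop, Real.log (F n (κ n)) + κ n < 0 :=
    hdbot.eventually (eventually_lt_atBot 0)
  -- lintegral representation of c
  have hceq : ∀ n, c n
      = (∫⁻ y, ENNReal.ofReal (max (Real.exp y - Real.exp (κ n)) 0) ∂μ n).toReal := by
    intro n
    rw [hc n]
    exact integral_eq_lintegral_of_nonneg_ae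
      (Eventually.of_forall fun y => le_max_right _ _)
      ((Real.continuous_exp.sub continuous_const).max continuous_const).aestronglyMeasurable
  have hcLfin : ∀ᶠ n in atTop,
      (∫⁻ y, ENNReal.ofReal (max (Real.exp y - Real.exp (κ n)) 0) ∂μ n) < ⊤ := by
    filter_upwards [hBev] with n hn
    have hpt : ∀ y : ℝ, ENNReal.ofReal (max (Real.exp y - Real.exp (κ n)) 0)
        ≤ 1 + ENNReal.ofReal (Real.exp ((1+η)*y)) := by
      intro y
      have h1 : max (Real.exp y - Real.exp (κ n)) 0 ≤ 1 + Real.exp ((1+η)*y) := by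
        have he1 : Real.exp y ≤ 1 + Real.exp ((1+η)*y) := by
          rcases le_or_gt y 0 with hy | hy
          · have := Real.exp_le_one_iff.mpr hy
            linarith [Real.exp_pos ((1+η)*y)]
          · have : Real.exp y ≤ Real.exp ((1+η)*y) :=
              Real.exp_le_exp.mpr (by nlinarith)
            linarith
        have := Real.exp_pos (κ n)
        have := Real.exp_pos ((1+η)*y)
        rcases max_cases (Real.exp y - Real.exp (κ n)) 0 with ⟨h2, _⟩ | ⟨h2, _⟩ <;>
          rw [h2] <;> linarith
      calc ENNReal.ofReal (max (Real.exp y - Real.exp (κ n)) 0)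
          ≤ ENNReal.ofReal (1 + Real.exp ((1+η)*y)) := ENNReal.ofReal_le_ofReal h1
        _ = 1 + ENNReal.ofReal (Real.exp ((1+η)*y)) := by
            rw [ENNReal.ofReal_add one_pos.le (Real.exp_nonneg _), ENNReal.ofReal_one]
    calc (∫⁻ y, ENNReal.ofReal (max (Real.exp y - Real.exp (κ n)) 0) ∂μ n)
        ≤ ∫⁻ y, (1 + ENNReal.ofReal (Real.exp ((1+η)*y))) ∂μ n := lintegral_mono hpt
      _ = 1 + ∫⁻ y, ENNReal.ofReal (Real.exp ((1+η)*y)) ∂μ n := by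
          rw [lintegral_add_left measurable_const, lintegral_const, measure_univ, mul_one]
      _ ≤ 1 + B := by exact add_le_add_right hn 1
      _ < ⊤ := by
          rw [ENNReal.add_lt_top]
          exact ⟨ENNReal.one_lt_top, lt_top_iff_ne_top.mpr hBtop⟩
  -- lower bound for c
  have hclow : ∀ ρ : ℝ, 1 < ρ → ∀ᶠ n in atTop,
      (Real.exp (ρ * κ n) - Real.exp (κ n)) * F n (ρ * κ n) ≤ c n
      ∧ 0 < (Real.exp (ρ * κ n) - Real.exp (κ n)) * F n (ρ * κ n) := by
    intro ρ hρ
    filter_upwards [hcLfin] with n hfin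
    have hx : Real.exp (κ n) < Real.exp (ρ*κ n) :=
      Real.exp_lt_exp.mpr (by nlinarith [hκpos n])
    have hFpos := (hF01 n ρ hρ.le).1
    constructor
    · rw [hceq n]
      have h1 : ENNReal.ofReal (Real.exp (ρ*κ n) - Real.exp (κ n)) * μ n {y | ρ*κ n < y}
          ≤ ∫⁻ y, ENNReal.ofReal (max (Real.exp y - Real.exp (κ n)) 0) ∂μ n := by
        calc ENNReal.ofReal (Real.exp (ρ*κ n) - Real.exp (κ n)) * μ n {y | ρ*κ n < y}
            = ∫⁻ _ in {y | ρ*κ n < y}, ENNReal.ofReal (Real.exp (ρ*κ n) - Real.exp (κ n)) ∂μ n := by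
              rw [setLIntegral_const]
          _ ≤ ∫⁻ y in {y | ρ*κ n < y},
                ENNReal.ofReal (max (Real.exp y - Real.exp (κ n)) 0) ∂μ n := by
              apply setLIntegral_mono
                (((Real.continuous_exp.sub continuous_const).max continuous_const).measurable.ennreal_ofReal)
              intro y hy
              apply ENNReal.ofReal_le_ofReal
              have : Real.exp (ρ*κ n) ≤ Real.exp y := Real.exp_le_exp.mpr (le_of_lt hy)
              exact le_max_of_le_left (by show Real.exp (ρ*κ n) - Real.exp (κ n) ≤ Real.exp y - Real.exp (κ n); linarith)
          _ ≤ _ := setLIntegral_le_lintegral _ _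
      have h2 := ENNReal.toReal_mono hfin.ne h1
      rwa [ENNReal.toReal_mul, ENNReal.toReal_ofReal (by linarith), ← hF n (ρ*κ n)] at h2
    · exact mul_pos (by linarith) hFpos
  have hcpos : ∀ᶠ n in atTop, 0 < c n := by
    filter_upwards [hclow 2 one_lt_two] with n hn
    linarith [hn.1, hn.2]
  -- grid bounds from regular decay
  have hgrid : ∀ r : ℝ, 1 ≤ r → ∀ e1 : ℝ, 0 < e1 →
      ∀ᶠ n in atTop, Real.log (F n (r * κ n)) ≤ (1 - e1) * r * Real.log (F n (κ n)) := by
    intro r hr e1 he1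
    have hlt : (((1 - e1) * r : ℝ) : EReal) < I r :=
      lt_of_lt_of_le (EReal.coe_lt_coe_iff.mpr (by nlinarith)) (hIρ r hr)
    filter_upwards [(hI r hr).eventually_const_lt hlt] with n hn
    rw [EReal.coe_lt_coe_iff] at hn
    have hL := hLneg n
    have h2 := (lt_div_iff_of_neg hL).mp hn
    linarith
  -- LOWER BOUND: (1+ε) d_n ≤ log c_n eventually
  have hlower : ∀ ε : ℝ, 0 < ε → ∀ᶠ n in atTop,
      (1+ε)*(Real.log (F n (κ n)) + κ n) ≤ Real.log (c n) := by
    intro ε hε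
    set θ := ε*η/(2*(1+η)) with hθdef
    have hθ : 0 < θ := by rw [hθdef]; positivity
    obtain ⟨ρ, hρlt, hρ1⟩ : ∃ ρ : ℝ, I ρ < ((1+θ : ℝ) : EReal) ∧ 1 < ρ := by
      have h1 : (1 : EReal) < ((1+θ : ℝ) : EReal) := by
        rw [show (1:EReal) = ((1:ℝ):EReal) by norm_cast]
        exact EReal.coe_lt_coe_iff.mpr (by linarith)
      obtain ⟨ρ, h2, h3⟩ := ((hIcont.eventually_lt_const h1).and
        eventually_mem_nhdsWithin).exists
      exact ⟨ρ, h2, h3⟩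
    have hCρpos : 0 < Real.exp ((ρ-1)*δ) - 1 := by
      have h1 : 0 < (ρ-1)*δ := mul_pos (by linarith) hδ
      have := Real.add_one_lt_exp (ne_of_gt h1)
      linarith
    set Cρ := Real.log (Real.exp ((ρ-1)*δ) - 1) with hCρdef
    have hFev := (hI ρ hρ1.le).eventually_lt_const hρlt
    have hsmall := hdbot.eventually_le_atBot
      ((2/ε)*(Cρ - θ*Real.log B.toReal/η))
    filter_upwards [hclow ρ hρ1, hFev, hLd, hκδ, hsmall] with n hn1 hn2 hn3 hn4 hn6
    obtain ⟨hc1, hc2⟩ := hn1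
    have hlog1 : Real.log ((Real.exp (ρ*κ n) - Real.exp (κ n)) * F n (ρ*κ n))
        ≤ Real.log (c n) := Real.log_le_log hc2 hc1
    have hFρpos := (hF01 n ρ hρ1.le).1
    have hepos : 0 < Real.exp (ρ*κ n) - Real.exp (κ n) := by
      have := Real.exp_lt_exp.mpr (show κ n < ρ*κ n by nlinarith [hκpos n])
      linarith
    rw [Real.log_mul (ne_of_gt hepos) (ne_of_gt hFρpos)] at hlog1
    have hratio : (1+θ) * Real.log (F n (κ n)) ≤ Real.log (F n (ρ*κ n)) := by
      rw [EReal.coe_lt_coe_iff] at hn2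
      have hL := hLneg n
      have := (div_lt_iff_of_neg hL).mp hn2
      linarith
    have hlog2 : κ n + Cρ ≤ Real.log (Real.exp (ρ*κ n) - Real.exp (κ n)) := by
      have h2 : Real.exp ((ρ-1)*δ) ≤ Real.exp ((ρ-1)*(κ n)) :=
        Real.exp_le_exp.mpr (mul_le_mul_of_nonneg_left hn4 (by linarith))
      have h3 : Real.exp (ρ*κ n) = Real.exp (κ n) * Real.exp ((ρ-1)*κ n) := by
        rw [← Real.exp_add]; ring_nf
      have h1 : Real.exp (κ n) * (Real.exp ((ρ-1)*δ) - 1)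
          ≤ Real.exp (ρ*κ n) - Real.exp (κ n) := by
        nlinarith [Real.exp_pos (κ n)]
      calc κ n + Cρ = Real.log (Real.exp (κ n) * (Real.exp ((ρ-1)*δ) - 1)) := by
            rw [Real.log_mul (Real.exp_ne_zero _) (ne_of_gt hCρpos), Real.log_exp]
        _ ≤ _ := Real.log_le_log (by positivity) h1
    have hB' : (ε/2)*(Real.log (F n (κ n)) + κ n) - θ*Real.log B.toReal/η
        ≤ θ * Real.log (F n (κ n)) := by
      have hLlow : ((1+η)*(Real.log (F n (κ n)) + κ n) - Real.log B.toReal)/η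
          ≤ Real.log (F n (κ n)) := by
        rw [div_le_iff₀ hη]
        nlinarith [hn3]
      have h9 := mul_le_mul_of_nonneg_left hLlow hθ.le
      have hid : θ * (((1+η)*(Real.log (F n (κ n)) + κ n) - Real.log B.toReal)/η)
          = (ε/2)*(Real.log (F n (κ n)) + κ n) - θ*Real.log B.toReal/η := by
        rw [hθdef]; field_simp
      linarith [hid ▸ h9]
    have h6 : (ε/2)*(Real.log (F n (κ n)) + κ n) ≤ Cρ - θ*Real.log B.toReal/η := by
      have h10 := mul_le_mul_of_nonneg_left hn6 (by positivity : (0:ℝ) ≤ ε/2)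
      have hid2 : (ε/2) * ((2/ε)*(Cρ - θ*Real.log B.toReal/η))
          = Cρ - θ*Real.log B.toReal/η := by field_simp
      linarith [hid2 ▸ h10]
    linarith [hlog1, hlog2, hratio, hB', h6]
  -- UPPER BOUND
  have hupper : ∀ ε : ℝ, 0 < ε → ε ≤ 1/2 → ∀ᶠ n in atTop,
      Real.log (c n) ≤ (1-ε)*(Real.log (F n (κ n)) + κ n) := by
    intro ε hε hε2
    set s := ε*η/8 with hsdef
    have hs : 0 < s := by rw [hsdef]; positivity
    set J := ⌈(2*(1+η)/η)/s⌉₊ with hJdef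
    have hJ1 : 2*(1+η)/η ≤ 1 + (J:ℝ)*s := by
      have h1 : (2*(1+η)/η)/s ≤ (J:ℝ) := Nat.le_ceil _
      have h2 := (div_le_iff₀ hs).mp h1
      linarith
    set ε₁ := ε*η/(8*(1+η)) with he1def
    have hε₁ : 0 < ε₁ := by rw [he1def]; positivity
    set K := ((J:ℝ)*s + s + 2)*(Real.log B.toReal + 1) with hKdef
    clear_value s J ε₁ K
    have hEgrid : ∀ᶠ n in atTop, ∀ j ∈ Finset.range (J+1),
        Real.log (F n ((1+(j:ℝ)*s) * κ n))
          ≤ (1-ε₁)*(1+(j:ℝ)*s)*Real.log (F n (κ n)) := by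
      rw [eventually_all_finset]
      intro j _
      exact hgrid (1+(j:ℝ)*s) (le_add_of_nonneg_right (mul_nonneg (Nat.cast_nonneg _) hs.le)) ε₁ hε₁
    have hsmallU := hdbot.eventually_le_atBot (-(2/ε)*(Real.log ((J:ℝ)+1) + K))
    filter_upwards [hEgrid, hLd, hBev, hdneg, hsmallU, hcpos] with n hn1 hn2 hn3 hn4 hn5 hn6
    have hκn := hκpos n
    set dn := Real.log (F n (κ n)) + κ n with hdndef
    set M := Real.exp ((1-ε/2)*dn + K) with hMdef
    have hMpos : 0 < M := Real.exp_pos _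
    clear_value dn M
    have hR1 : ∀ j : ℕ, j < J →
        Real.exp ((1+((j:ℝ)+1)*s)*κ n) * F n ((1+(j:ℝ)*s)*κ n) ≤ M := by
      intro j hj
      have hj1 : (1:ℝ) ≤ 1+(j:ℝ)*s := le_add_of_nonneg_right (mul_nonneg (Nat.cast_nonneg _) hs.le)
      have hFj := (hF01 n _ hj1).1
      have hlogj := hn1 j (Finset.mem_range.mpr (Nat.lt_succ_of_lt hj))
      have harith := arith_upper (e := ε) (hh := η) (ss := s) (e1 := ε₁)
        (jj := (j:ℝ)) (Jj := (J:ℝ)) (lB := Real.log B.toReal) (Kk := K)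
        (LL := Real.log (F n (κ n))) (kk := κ n) (lgF := Real.log (F n ((1+(j:ℝ)*s)*κ n)))
        hε hε2 hη hsdef he1def (Nat.cast_nonneg j) (Nat.cast_le.mpr hj.le)
        hKdef hlBr hκn hn2 hlogj
      rw [← Real.exp_log (mul_pos (Real.exp_pos ((1+((j:ℝ)+1)*s)*κ n)) hFj),
        Real.log_mul (Real.exp_ne_zero _) (ne_of_gt hFj), Real.log_exp, hMdef]
      apply Real.exp_le_exp.mpr
      rw [hdndef]
      linarith [harith]
    have hterm : ∀ j ∈ Finset.range J,
        ENNReal.ofReal (Real.exp ((1+((j:ℝ)+1)*s)*κ n)) * μ n {y | (1+(j:ℝ)*s)*κ n < y}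
          ≤ ENNReal.ofReal M := by
      intro j hj
      have hμe : μ n {y | (1+(j:ℝ)*s)*κ n < y}
          = ENNReal.ofReal (F n ((1+(j:ℝ)*s)*κ n)) := by
        rw [hF n]
        exact (ENNReal.ofReal_toReal (measure_ne_top _ _)).symm
      rw [hμe, ← ENNReal.ofReal_mul (Real.exp_nonneg _)]
      exact ENNReal.ofReal_le_ofReal (hR1 j (Finset.mem_range.mp hj))
    have hFJ1 : (1:ℝ) ≤ 1+(J:ℝ)*s := le_add_of_nonneg_right (mul_nonneg (Nat.cast_nonneg _) hs.le)
    have hFJpos := (hF01 n _ hFJ1).1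
    have hlogJ := hn1 J (Finset.mem_range.mpr (Nat.lt_succ_self J))
    have htailR : B.toReal^(1/(1+η)) * (F n ((1+(J:ℝ)*s)*κ n))^(1/((1+η)/η)) ≤ M := by
      have hq : 1/((1+η)/η) = η/(1+η) := one_div_div _ _
      have harith := arith_tail (e := ε) (hh := η) (ss := s) (e1 := ε₁)
        (Jj := (J:ℝ)) (lB := Real.log B.toReal) (Kk := K)
        (LL := Real.log (F n (κ n))) (kk := κ n) (dd := dn)
        (lgFJ := Real.log (F n ((1+(J:ℝ)*s)*κ n)))
        hε hε2 hη hsdef he1def hJ1 (Nat.cast_nonneg J) hKdef hlBr hκn hdndef hn4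
        hlogJ (hLneg n)
      rw [hq]
      have hpos1 : 0 < B.toReal^(1/(1+η)) := Real.rpow_pos_of_pos hBrpos _
      have hpos2 : 0 < (F n ((1+(J:ℝ)*s)*κ n))^(η/(1+η)) := Real.rpow_pos_of_pos hFJpos _
      rw [← Real.exp_log (mul_pos hpos1 hpos2), Real.log_mul (ne_of_gt hpos1) (ne_of_gt hpos2),
        Real.log_rpow hBrpos, Real.log_rpow hFJpos, hMdef]
      apply Real.exp_le_exp.mpr
      linarith [harith]
    have htail : (∫⁻ y in {y : ℝ | (1+(J:ℝ)*s)*κ n < y}, ENNReal.ofReal (Real.exp y) ∂μ n)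
        ≤ ENNReal.ofReal M := by
      have hconj : Real.HolderConjugate (1+η) ((1+η)/η) := by
        rw [Real.holderConjugate_iff]
        constructor
        · linarith
        · rw [inv_div]
          field_simp
      have hSm : MeasurableSet {y : ℝ | (1+(J:ℝ)*s)*κ n < y} := by
        exact measurableSet_Ioi
      have hfm : AEMeasurable (fun y : ℝ => ENNReal.ofReal (Real.exp y)) (μ n) :=
        (Real.measurable_exp.ennreal_ofReal).aemeasurable
      have hgm : AEMeasurable ({y : ℝ | (1+(J:ℝ)*s)*κ n < y}.indicator (1 : ℝ → ℝ≥0∞)) (μ n) :=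
        (measurable_one.indicator hSm).aemeasurable
      have h0 := ENNReal.lintegral_mul_le_Lp_mul_Lq (μ n) hconj hfm hgm
      simp only [Pi.mul_apply] at h0
      have hLeq : ∫⁻ y, (ENNReal.ofReal (Real.exp y))
            * ({y : ℝ | (1+(J:ℝ)*s)*κ n < y}.indicator 1 y) ∂μ n
          = ∫⁻ y in {y : ℝ | (1+(J:ℝ)*s)*κ n < y}, ENNReal.ofReal (Real.exp y) ∂μ n := by
        rw [← lintegral_indicator hSm]
        refine lintegral_congr fun y => ?_
        by_cases hy : y ∈ {y : ℝ | (1+(J:ℝ)*s)*κ n < y}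
        · rw [Set.indicator_of_mem hy, Set.indicator_of_mem hy, Pi.one_apply, mul_one]
        · rw [Set.indicator_of_notMem hy, Set.indicator_of_notMem hy, mul_zero]
      have hfp : ∫⁻ y, ((fun y : ℝ => ENNReal.ofReal (Real.exp y)) y)^(1+η) ∂μ n
          = ∫⁻ y, ENNReal.ofReal (Real.exp ((1+η)*y)) ∂μ n := by
        refine lintegral_congr fun y => ?_
        rw [ENNReal.ofReal_rpow_of_pos (Real.exp_pos y), ← Real.exp_mul, mul_comm]
      have hgq : ∫⁻ y, ({y : ℝ | (1+(J:ℝ)*s)*κ n < y}.indicator (1:ℝ→ℝ≥0∞) y)^((1+η)/η) ∂μ n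
          = μ n {y : ℝ | (1+(J:ℝ)*s)*κ n < y} := by
        have hqpos : (0:ℝ) < (1+η)/η := by positivity
        rw [← lintegral_indicator_one hSm]
        refine lintegral_congr fun y => ?_
        by_cases hy : y ∈ {y : ℝ | (1+(J:ℝ)*s)*κ n < y}
        · simp [hy, Set.indicator_of_mem]
        · simp [hy, Set.indicator_of_notMem, ENNReal.zero_rpow_of_pos hqpos]
      rw [hLeq, hfp, hgq] at h0
      have h1 : (∫⁻ y, ENNReal.ofReal (Real.exp ((1+η)*y)) ∂μ n)^(1/(1+η))
          ≤ B^(1/(1+η)) := ENNReal.rpow_le_rpow hn3 (by positivity)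
      have hμS : μ n {y : ℝ | (1+(J:ℝ)*s)*κ n < y}
          = ENNReal.ofReal (F n ((1+(J:ℝ)*s)*κ n)) := by
        rw [hF n]
        exact (ENNReal.ofReal_toReal (measure_ne_top _ _)).symm
      calc (∫⁻ y in {y : ℝ | (1+(J:ℝ)*s)*κ n < y}, ENNReal.ofReal (Real.exp y) ∂μ n)
          ≤ B^(1/(1+η)) * (μ n {y : ℝ | (1+(J:ℝ)*s)*κ n < y})^(1/((1+η)/η)) :=
            h0.trans (mul_le_mul_left h1 _)
        _ = ENNReal.ofReal (B.toReal^(1/(1+η)) * (F n ((1+(J:ℝ)*s)*κ n))^(1/((1+η)/η))) := by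
            have hBpow : B^(1/(1+η)) = ENNReal.ofReal (B.toReal^(1/(1+η))) := by
              conv_lhs => rw [← ENNReal.ofReal_toReal hBtop]
              rw [ENNReal.ofReal_rpow_of_pos hBrpos]
            rw [hμS, hBpow, ENNReal.ofReal_rpow_of_pos hFJpos,
              ← ENNReal.ofReal_mul (Real.rpow_nonneg (by linarith) _)]
        _ ≤ ENNReal.ofReal M := ENNReal.ofReal_le_ofReal htailR
    have hpoint : ∀ y : ℝ, ENNReal.ofReal (max (Real.exp y - Real.exp (κ n)) 0)
        ≤ (∑ j ∈ Finset.range J, Set.indicator {z : ℝ | (1+(j:ℝ)*s)*κ n < z}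
            (fun _ => ENNReal.ofReal (Real.exp ((1+((j:ℝ)+1)*s)*κ n))) y)
          + Set.indicator {z : ℝ | (1+(J:ℝ)*s)*κ n < z}
            (fun z => ENNReal.ofReal (Real.exp z)) y := by
      intro y
      by_cases hy1 : y ≤ κ n
      · have h1 : max (Real.exp y - Real.exp (κ n)) 0 = 0 :=
          max_eq_right (by linarith [Real.exp_le_exp.mpr hy1])
        rw [h1, ENNReal.ofReal_zero]
        exact zero_le
      push_neg at hy1
      have hmax : ENNReal.ofReal (max (Real.exp y - Real.exp (κ n)) 0)
          ≤ ENNReal.ofReal (Real.exp y) :=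
        ENNReal.ofReal_le_ofReal (max_le (by linarith [Real.exp_pos (κ n)]) (Real.exp_pos y).le)
      by_cases hy2 : (1+(J:ℝ)*s)*κ n < y
      · refine hmax.trans ?_
        have h2 : Set.indicator {z : ℝ | (1+(J:ℝ)*s)*κ n < z}
            (fun z => ENNReal.ofReal (Real.exp z)) y = ENNReal.ofReal (Real.exp y) :=
          Set.indicator_of_mem hy2 _
        rw [← h2]
        exact le_add_self
      push_neg at hy2
      have hu1 : 1 < y/κ n := (one_lt_div hκn).mpr hy1
      have hu2 : y/κ n ≤ 1 + (J:ℝ)*s := (div_le_iff₀ hκn).mpr hy2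
      obtain ⟨j, hjJ, hj1, hj2⟩ := grid_exists hs J (y/κ n) hu1 hu2
      have h1 : (1+(j:ℝ)*s)*κ n < y := (lt_div_iff₀ hκn).mp hj1
      have h2 : y ≤ (1+((j:ℝ)+1)*s)*κ n := (div_le_iff₀ hκn).mp hj2
      refine hmax.trans (le_trans ?_ le_self_add)
      calc ENNReal.ofReal (Real.exp y)
          ≤ ENNReal.ofReal (Real.exp ((1+((j:ℝ)+1)*s)*κ n)) :=
            ENNReal.ofReal_le_ofReal (Real.exp_le_exp.mpr h2)
        _ = Set.indicator {z : ℝ | (1+(j:ℝ)*s)*κ n < z}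
            (fun _ => ENNReal.ofReal (Real.exp ((1+((j:ℝ)+1)*s)*κ n))) y := by
            have h1m : y ∈ {z : ℝ | (1+(j:ℝ)*s)*κ n < z} := h1
            rw [Set.indicator_of_mem h1m]
        _ ≤ _ := Finset.single_le_sum (f := fun j : ℕ =>
            Set.indicator {z : ℝ | (1+(j:ℝ)*s)*κ n < z}
              (fun _ => ENNReal.ofReal (Real.exp ((1+((j:ℝ)+1)*s)*κ n))) y)
            (fun i _ => zero_le) (Finset.mem_range.mpr hjJ)
    have hcle : (∫⁻ y, ENNReal.ofReal (max (Real.exp y - Real.exp (κ n)) 0) ∂μ n)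
        ≤ ENNReal.ofReal (((J:ℝ)+1)*M) := by
      have hSm1 : ∀ a : ℝ, MeasurableSet {z : ℝ | a < z} := fun a => by
        exact measurableSet_Ioi
      have hmeas1 : ∀ j : ℕ, Measurable (Set.indicator {z : ℝ | (1+(j:ℝ)*s)*κ n < z}
          (fun _ => ENNReal.ofReal (Real.exp ((1+((j:ℝ)+1)*s)*κ n)))) := fun j =>
        measurable_const.indicator (hSm1 _)
      have hmeas2 : Measurable (Set.indicator {z : ℝ | (1+(J:ℝ)*s)*κ n < z}
          (fun z => ENNReal.ofReal (Real.exp z))) :=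
        (Real.measurable_exp.ennreal_ofReal).indicator (hSm1 _)
      calc (∫⁻ y, ENNReal.ofReal (max (Real.exp y - Real.exp (κ n)) 0) ∂μ n)
          ≤ ∫⁻ y, ((∑ j ∈ Finset.range J, Set.indicator {z : ℝ | (1+(j:ℝ)*s)*κ n < z}
              (fun _ => ENNReal.ofReal (Real.exp ((1+((j:ℝ)+1)*s)*κ n))) y)
            + Set.indicator {z : ℝ | (1+(J:ℝ)*s)*κ n < z}
              (fun z => ENNReal.ofReal (Real.exp z)) y) ∂μ n := lintegral_mono hpoint
        _ = (∑ j ∈ Finset.range J, ∫⁻ y, Set.indicator {z : ℝ | (1+(j:ℝ)*s)*κ n < z}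
              (fun _ => ENNReal.ofReal (Real.exp ((1+((j:ℝ)+1)*s)*κ n))) y ∂μ n)
            + ∫⁻ y, Set.indicator {z : ℝ | (1+(J:ℝ)*s)*κ n < z}
              (fun z => ENNReal.ofReal (Real.exp z)) y ∂μ n := by
            rw [lintegral_add_left (Finset.measurable_sum _ (fun j _ => hmeas1 j)),
              lintegral_finset_sum _ (fun j _ => hmeas1 j)]
        _ ≤ (∑ _j ∈ Finset.range J, ENNReal.ofReal M) + ENNReal.ofReal M := by
            apply add_le_add
            · apply Finset.sum_le_sum
              intro j hj
              rw [lintegral_indicator (hSm1 _), setLIntegral_const]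
              exact hterm j hj
            · rw [lintegral_indicator (hSm1 _)]
              exact htail
        _ = ENNReal.ofReal (((J:ℝ)+1)*M) := by
            rw [Finset.sum_const, Finset.card_range, nsmul_eq_mul,
              ← ENNReal.ofReal_natCast J, ← ENNReal.ofReal_mul (Nat.cast_nonneg J),
              ← ENNReal.ofReal_add (by positivity) hMpos.le]
            congr 1
            ring
    have hcM : c n ≤ ((J:ℝ)+1)*M := by
      rw [hceq n]
      calc (∫⁻ y, ENNReal.ofReal (max (Real.exp y - Real.exp (κ n)) 0) ∂μ n).toReal
          ≤ (ENNReal.ofReal (((J:ℝ)+1)*M)).toReal :=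
            ENNReal.toReal_mono ENNReal.ofReal_ne_top hcle
        _ = ((J:ℝ)+1)*M := ENNReal.toReal_ofReal (by positivity)
    have hlogc : Real.log (c n) ≤ Real.log ((J:ℝ)+1) + ((1-ε/2)*dn + K) := by
      have h1 := Real.log_le_log hn6 hcM
      rw [hMdef] at h1
      rw [Real.log_mul (by positivity) (Real.exp_ne_zero _), Real.log_exp] at h1
      exact h1
    have hfinal : Real.log ((J:ℝ)+1) + K ≤ -(ε/2)*dn := by
      have h1 := mul_le_mul_of_nonneg_left hn5 (by positivity : (0:ℝ) ≤ ε/2)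
      have hid : (ε/2)*(-(2/ε)*(Real.log ((J:ℝ)+1)+K)) = -(Real.log ((J:ℝ)+1)+K) := by
        field_simp
      linarith [hid ▸ h1]
    linarith [hlogc, hfinal]
  -- CONCLUSION
  rw [Metric.tendsto_nhds]
  intro ε hε
  have hm : 0 < min (ε/2) (1/2) := lt_min (by linarith) (by norm_num)
  have hm2 : min (ε/2) (1/2) ≤ 1/2 := min_le_right _ _
  filter_upwards [hupper _ hm hm2, hlower _ hm, hdneg] with n h1 h2 h3
  rw [Real.dist_eq]
  have hub : Real.log (c n) / (Real.log (F n (κ n)) + κ n) ≤ 1 + min (ε/2) (1/2) :=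
    (div_le_iff_of_neg h3).mpr h2
  have hlb : 1 - min (ε/2) (1/2) ≤ Real.log (c n) / (Real.log (F n (κ n)) + κ n) :=
    (le_div_iff_of_neg h3).mpr h1
  calc |Real.log (c n) / (Real.log (F n (κ n)) + κ n) - 1|
      ≤ min (ε/2) (1/2) := abs_le.mpr ⟨by linarith, by linarith⟩
    _ ≤ ε/2 := min_le_left _ _
    _ < ε := by linarith
end

section
/- Let (X_n) be a sequence of real random variables and (κ_n) a sequence with κ_n > 0 and liminf_n κ_n > 0. Assume the regular decay hypothesis for the right tails at (κ_n) with limit function I, that (−log F̄_n(κ_n))/κ_n → ∞, that I(ρ) → ∞ as ρ → ∞, and that there exists η > 0 with limsup_n E_n[e^{(1+η)X_n}] < ∞. Then, with c_n := E_n[(e^{X_n} − e^{κ_n})^+], one has log c_n ~ log F̄_n(κ_n), i.e. (log c_n)/(log F̄_n(κ_n)) → 1 as n → ∞. -/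
open MeasureTheory Filter Topology
open scoped ENNReal NNReal


lemma rtad_lower_aux (μ : Measure ℝ) (f : ℝ → ℝ≥0∞) (a : ℝ≥0∞) (t : ℝ)
    (h : ∀ x, t < x → a ≤ f x) :
    a * μ {y | t < y} ≤ ∫⁻ x, f x ∂μ := by
  have hset : {y : ℝ | t < y} = Set.Ioi t := rfl
  have hm : MeasurableSet {y : ℝ | t < y} := by rw [hset]; exact measurableSet_Ioi
  calc a * μ {y | t < y} = ∫⁻ x, {y : ℝ | t < y}.indicator (fun _ => a) x ∂μ := by
        rw [lintegral_indicator hm, setLIntegral_const]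
    _ ≤ ∫⁻ x, f x ∂μ := by
        refine lintegral_mono fun x => ?_
        by_cases hx : x ∈ {y : ℝ | t < y}
        · rw [Set.indicator_of_mem hx]; exact h x hx
        · rw [Set.indicator_of_notMem hx]; exact zero_le

lemma rtad_upper_aux (μ : Measure ℝ) (κ R : ℝ) {η : ℝ} (hη : 0 < η) :
    ∫⁻ x, ENNReal.ofReal (max (Real.exp x - Real.exp κ) 0) ∂μ ≤
      ENNReal.ofReal (Real.exp (R * κ)) * μ {y | κ < y}
      + (∫⁻ x, ENNReal.ofReal (Real.exp ((1+η)*x)) ∂μ) ^ (1/(1+η))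
        * (μ {y | R*κ < y}) ^ (η/(1+η)) := by
  have hm1 : MeasurableSet {y : ℝ | κ < y} := measurableSet_Ioi
  have hm2 : MeasurableSet {y : ℝ | R*κ < y} := measurableSet_Ioi
  have hpq : Real.HolderConjugate (1+η) ((1+η)/η) := by
    constructor
    · rw [inv_div]
      rw [inv_eq_one_div]
      field_simp
    · linarith
    · positivity
  have step1 : ∫⁻ x, ENNReal.ofReal (max (Real.exp x - Real.exp κ) 0) ∂μ ≤
      ∫⁻ x, ({y : ℝ | κ < y}.indicator (fun _ => ENNReal.ofReal (Real.exp (R * κ))) x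
        + {y : ℝ | R*κ < y}.indicator (fun y => ENNReal.ofReal (Real.exp y)) x) ∂μ := by
    refine lintegral_mono fun x => ?_
    rcases le_or_gt x κ with hx | hx
    · have : max (Real.exp x - Real.exp κ) 0 = 0 := by
        rw [max_eq_right]; nlinarith [Real.exp_le_exp.mpr hx]
      rw [this, ENNReal.ofReal_zero]; exact zero_le
    · rcases le_or_gt x (R*κ) with hx2 | hx2
      · refine le_trans ?_ (le_add_right (le_refl _))
        rw [Set.indicator_of_mem (by exact hx)]
        refine ENNReal.ofReal_le_ofReal ?_
        have := Real.exp_le_exp.mpr hx2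
        have := Real.exp_pos κ
        rw [max_le_iff]
        constructor
        · linarith
        · positivity
      · refine le_trans ?_ (le_add_left (le_refl _))
        rw [Set.indicator_of_mem (by exact hx2)]
        refine ENNReal.ofReal_le_ofReal ?_
        have := Real.exp_pos κ
        rw [max_le_iff]
        constructor
        · linarith
        · positivity
  have step2 : ∫⁻ x, ({y : ℝ | κ < y}.indicator (fun _ => ENNReal.ofReal (Real.exp (R * κ))) x
        + {y : ℝ | R*κ < y}.indicator (fun y => ENNReal.ofReal (Real.exp y)) x) ∂μ
      = ENNReal.ofReal (Real.exp (R * κ)) * μ {y | κ < y}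
        + ∫⁻ x, {y : ℝ | R*κ < y}.indicator (fun y => ENNReal.ofReal (Real.exp y)) x ∂μ := by
    rw [lintegral_add_left]
    · rw [lintegral_indicator hm1, setLIntegral_const]
    · exact (measurable_const.indicator hm1)
  have step3 : ∫⁻ x, {y : ℝ | R*κ < y}.indicator (fun y => ENNReal.ofReal (Real.exp y)) x ∂μ ≤
      (∫⁻ x, ENNReal.ofReal (Real.exp ((1+η)*x)) ∂μ) ^ (1/(1+η))
        * (μ {y | R*κ < y}) ^ (η/(1+η)) := by
    have heq : (fun x => {y : ℝ | R*κ < y}.indicator (fun y => ENNReal.ofReal (Real.exp y)) x)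
        = (fun x => ENNReal.ofReal (Real.exp x)) * ({y : ℝ | R*κ < y}.indicator 1) := by
      funext x
      by_cases hx : x ∈ {y : ℝ | R*κ < y}
      · simp [Set.indicator_of_mem hx]
      · simp [Set.indicator_of_notMem hx]
    rw [heq]
    have hf : AEMeasurable (fun x => ENNReal.ofReal (Real.exp x)) μ :=
      (ENNReal.measurable_ofReal.comp Real.measurable_exp).aemeasurable
    have hg : AEMeasurable ({y : ℝ | R*κ < y}.indicator (1 : ℝ → ℝ≥0∞)) μ :=
      (measurable_one.indicator hm2).aemeasurable
    have := ENNReal.lintegral_mul_le_Lp_mul_Lq μ hpq hf hg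
    refine le_trans this (le_of_eq ?_)
    congr 1
    · congr 1
      refine lintegral_congr fun x => ?_
      rw [ENNReal.ofReal_rpow_of_pos (Real.exp_pos x), ← Real.exp_mul, mul_comm]
    · have h1q : (1:ℝ)/((1+η)/η) = η/(1+η) := one_div_div _ _
      rw [h1q]
      congr 1
      have : ∫⁻ x, ({y : ℝ | R*κ < y}.indicator (1 : ℝ → ℝ≥0∞)) x ^ ((1+η)/η) ∂μ
          = μ {y | R*κ < y} := by
        have heq2 : (fun x => ({y : ℝ | R*κ < y}.indicator (1 : ℝ → ℝ≥0∞)) x ^ ((1+η)/η))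
            = {y : ℝ | R*κ < y}.indicator (1 : ℝ → ℝ≥0∞) := by
          funext x
          by_cases hx : x ∈ {y : ℝ | R*κ < y}
          · simp [Set.indicator_of_mem hx]
          · simp [Set.indicator_of_notMem hx]
            positivity
        rw [heq2, lintegral_indicator_one hm2]
      rw [this]
  exact le_trans (le_trans step1 (le_of_eq step2)) (add_le_add_right step3 _)

set_option maxHeartbeats 2000000 in
/-- **Right-tail atypical deviations, special case `-log F̄_n(κ_n)/κ_n → ∞`.**
For each `n`, the law of `X_n` is the probability measure `μ n` on `ℝ`; the right tail is
`F n x = μ n {y | x < y}`. Under the regular decay hypothesis with limit function `I`,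
with `I(ρ) → ∞` as `ρ → ∞`, with `(-log F n (κ n))/κ n → ∞`, and the moment condition
`limsup_n E_n[e^{(1+η)X_n}] < ∞` for some `η > 0`, the call prices
`c n = E_n[(e^{X_n} - e^{κ n})⁺]` satisfy `log (c n) ~ log (F n (κ n))`. -/
theorem right_tail_atypical_special_case
    (μ : ℕ → Measure ℝ) (hprob : ∀ n, IsProbabilityMeasure (μ n))
    (κ : ℕ → ℝ) (hκpos : ∀ n, 0 < κ n)
    (hκbdd : ∃ δ > (0:ℝ), ∀ᶠ n in atTop, δ ≤ κ n)
    (F : ℕ → ℝ → ℝ)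
    (hF : ∀ n x, F n x = ((μ n) {y | x < y}).toReal)
    (hF01 : ∀ n, ∀ ρ ≥ (1:ℝ), 0 < F n (ρ * κ n) ∧ F n (ρ * κ n) < 1)
    (hFto0 : Tendsto (fun n => F n (κ n)) atTop (𝓝 0))
    (hfast : Tendsto (fun n => (-Real.log (F n (κ n))) / κ n) atTop atTop)
    (I : ℝ → EReal)
    (hI0 : ∀ ρ ≥ (1:ℝ), (0:EReal) ≤ I ρ)
    (hI : ∀ ρ ≥ (1:ℝ),
      Tendsto (fun n => ((Real.log (F n (ρ * κ n)) / Real.log (F n (κ n)) : ℝ) : EReal))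
        atTop (𝓝 (I ρ)))
    (hIcont : Tendsto I (𝓝[>] (1:ℝ)) (𝓝 (1:EReal)))
    (hIinf : Tendsto I atTop (𝓝 (⊤:EReal)))
    (η : ℝ) (hη : 0 < η)
    (hmom : limsup
        (fun n => ∫⁻ x, ENNReal.ofReal (Real.exp ((1+η)*x)) ∂(μ n)) atTop < ⊤)
    (c : ℕ → ℝ)
    (hc : ∀ n, c n = ∫ x, max (Real.exp x - Real.exp (κ n)) 0 ∂(μ n)) :
    Tendsto (fun n => Real.log (c n) / Real.log (F n (κ n))) atTop (𝓝 1) := by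
  obtain ⟨δ, hδ, hκδ⟩ := hκbdd
  have hFpos : ∀ n, 0 < F n (κ n) := fun n => by
    have := (hF01 n 1 le_rfl).1; rwa [one_mul] at this
  have hFlt1 : ∀ n, F n (κ n) < 1 := fun n => by
    have := (hF01 n 1 le_rfl).2; rwa [one_mul] at this
  set L : ℕ → ℝ := fun n => Real.log (F n (κ n)) with hLdef
  have hLneg : ∀ n, L n < 0 := fun n => Real.log_neg (hFpos n) (hFlt1 n)
  -- -L → ∞
  have hLtop : Tendsto (fun n => -L n) atTop atTop := by
    rw [tendsto_atTop]
    intro b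
    filter_upwards [hκδ, hfast.eventually_ge_atTop (max (b/δ) 0)] with n h1 h2
    have hκ := hκpos n
    have h3 : max (b/δ) 0 * κ n ≤ -L n := (le_div_iff₀ hκ).mp h2
    have h4 : b/δ ≤ max (b/δ) 0 := le_max_left _ _
    have h5 : (0:ℝ) ≤ max (b/δ) 0 := le_max_right _ _
    have hbb : (b/δ)*δ = b := div_mul_cancel₀ b hδ.ne'
    nlinarith [mul_le_mul_of_nonneg_left h1 h5, mul_le_mul_of_nonneg_right h4 hδ.le]
  -- moment bound constant
  obtain ⟨C, hCtop, hCev⟩ : ∃ C : ℝ≥0∞, C ≠ ⊤ ∧ ∀ᶠ n in atTop,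
      (∫⁻ x, ENNReal.ofReal (Real.exp ((1+η)*x)) ∂(μ n)) ≤ C := by
    obtain ⟨C, hC1, hC2⟩ := exists_between hmom
    exact ⟨C, hC2.ne, (eventually_lt_of_limsup_lt hC1).mono fun n h => h.le⟩
  set C1 : ℝ≥0∞ := max C 1 with hC1def
  have hC1top : C1 ≠ ⊤ := by
    rw [hC1def]; simp [hCtop, lt_top_iff_ne_top]
  have hC1ev : ∀ᶠ n in atTop,
      (∫⁻ x, ENNReal.ofReal (Real.exp ((1+η)*x)) ∂(μ n)) ≤ C1 :=
    hCev.mono fun n h => h.trans (le_max_left _ _)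
  set C₀ : ℝ := C1.toReal with hC₀def
  have hC₀ge1 : 1 ≤ C₀ := by
    rw [hC₀def]
    rw [show (1:ℝ) = (1:ℝ≥0∞).toReal by simp]
    exact ENNReal.toReal_mono hC1top (le_max_right _ _)
  have hC₀pos : 0 < C₀ := lt_of_lt_of_le one_pos hC₀ge1
  have hlogC₀ : 0 ≤ Real.log C₀ := Real.log_nonneg hC₀ge1
  -- the lintegral expression for c
  have hJ : ∀ n, c n =
      (∫⁻ x, ENNReal.ofReal (max (Real.exp x - Real.exp (κ n)) 0) ∂(μ n)).toReal := by
    intro n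
    rw [hc]
    exact integral_eq_lintegral_of_nonneg_ae
      (Eventually.of_forall fun x => le_max_right _ _)
      (((Real.continuous_exp.sub continuous_const).max continuous_const).aestronglyMeasurable)
  set J : ℕ → ℝ≥0∞ := fun n =>
    ∫⁻ x, ENNReal.ofReal (max (Real.exp x - Real.exp (κ n)) 0) ∂(μ n) with hJdef
  -- start the epsilon argument
  rw [Metric.tendsto_nhds]
  intro ε hε
  set ε₂ : ℝ := ε/4 with hε₂def
  have hε₂ : 0 < ε₂ := by positivity
  -- choose ρ
  obtain ⟨ρ, hρ1, hρI⟩ : ∃ ρ > (1:ℝ), I ρ < ((1 + ε₂ : ℝ) : EReal) := by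
    have h1 : (1:EReal) < ((1+ε₂:ℝ):EReal) := by
      rw [show (1:EReal) = ((1:ℝ):EReal) from rfl, EReal.coe_lt_coe_iff]; linarith
    obtain ⟨ρ, hρ⟩ := ((hIcont.eventually_lt_const h1).and self_mem_nhdsWithin).exists
    exact ⟨ρ, hρ.2, hρ.1⟩
  -- choose R
  set b : ℝ := (1+η)/η + 1 with hbdef
  obtain ⟨R, hR1, hRI⟩ : ∃ R ≥ (1:ℝ), ((b:ℝ):EReal) < I R := by
    obtain ⟨R, hR⟩ := ((hIinf.eventually_const_lt (EReal.coe_lt_top b)).and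
      (eventually_ge_atTop 1)).exists
    exact ⟨R, hR.2, hR.1⟩
  have hrρ : ∀ᶠ n in atTop, Real.log (F n (ρ * κ n)) / L n < 1 + ε₂ := by
    filter_upwards [(hI ρ hρ1.le).eventually_lt_const hρI] with n h
    exact_mod_cast h
  have hrR : ∀ᶠ n in atTop, b < Real.log (F n (R * κ n)) / L n := by
    filter_upwards [(hI R hR1).eventually_const_lt hRI] with n h
    exact_mod_cast h
  -- the constant a₀ for the lower bound
  set a₀ : ℝ := Real.exp ((ρ-1)*δ) - 1 with ha₀def
  have ha₀pos : 0 < a₀ := by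
    have := Real.add_one_le_exp ((ρ-1)*δ)
    have : (ρ-1)*δ > 0 := by nlinarith
    nlinarith [Real.add_one_le_exp ((ρ-1)*δ)]
  -- upper bound on J
  have hupJ : ∀ᶠ n in atTop, J n ≤
      ENNReal.ofReal (Real.exp (R * κ n)) * μ n {y | κ n < y}
      + C1 ^ (1/(1+η)) * (μ n {y | R * κ n < y}) ^ (η/(1+η)) := by
    filter_upwards [hC1ev] with n hCn
    refine le_trans (rtad_upper_aux (μ n) (κ n) R hη) ?_
    refine add_le_add_right ?_ _
    refine mul_le_mul_left ?_ _
    exact ENNReal.rpow_le_rpow hCn (by positivity)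
  have hRHSfin : ∀ n, ENNReal.ofReal (Real.exp (R * κ n)) * μ n {y | κ n < y}
      + C1 ^ (1/(1+η)) * (μ n {y | R * κ n < y}) ^ (η/(1+η)) ≠ ⊤ := by
    intro n
    haveI := hprob n
    have h1 : μ n {y | κ n < y} ≤ 1 := prob_le_one
    have h2 : (μ n {y | R * κ n < y}) ^ (η/(1+η)) ≤ 1 := by
      calc (μ n {y | R * κ n < y}) ^ (η/(1+η)) ≤ (1:ℝ≥0∞) ^ (η/(1+η)) :=
            ENNReal.rpow_le_rpow prob_le_one (by positivity)
        _ = 1 := ENNReal.one_rpow _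
    have h3 : C1 ^ (1/(1+η)) ≠ ⊤ := by
      exact (ENNReal.rpow_lt_top_of_nonneg (by positivity) hC1top).ne
    refine ENNReal.add_ne_top.mpr ⟨?_, ?_⟩
    · exact (ENNReal.mul_lt_top ENNReal.ofReal_lt_top (lt_of_le_of_lt h1 ENNReal.one_lt_top)).ne
    · exact (ENNReal.mul_lt_top (lt_top_iff_ne_top.mpr h3)
        (lt_of_le_of_lt h2 ENNReal.one_lt_top)).ne
  have hJfin : ∀ᶠ n in atTop, J n ≠ ⊤ :=
    hupJ.mono fun n h => ne_top_of_le_ne_top (hRHSfin n) h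
  -- real upper bound on c
  have hcup : ∀ᶠ n in atTop, c n ≤
      Real.exp (R * κ n) * F n (κ n) + C₀ ^ (1/(1+η)) * (F n (R * κ n)) ^ (η/(1+η)) := by
    filter_upwards [hupJ] with n h
    haveI := hprob n
    rw [hJ n]
    refine le_trans (ENNReal.toReal_mono (hRHSfin n) h) (le_of_eq ?_)
    rw [ENNReal.toReal_add, ENNReal.toReal_mul, ENNReal.toReal_mul, ENNReal.toReal_ofReal
      (Real.exp_pos _).le, ← ENNReal.toReal_rpow, ← ENNReal.toReal_rpow, hF n, hF n]
    · exact (ENNReal.mul_lt_top ENNReal.ofReal_lt_top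
        (lt_of_le_of_lt prob_le_one ENNReal.one_lt_top)).ne
    · have h3 : C1 ^ (1/(1+η)) ≠ ⊤ :=
        (ENNReal.rpow_lt_top_of_nonneg (by positivity) hC1top).ne
      have h2 : (μ n {y | R * κ n < y}) ^ (η/(1+η)) ≤ 1 := by
        calc (μ n {y | R * κ n < y}) ^ (η/(1+η)) ≤ (1:ℝ≥0∞) ^ (η/(1+η)) :=
              ENNReal.rpow_le_rpow prob_le_one (by positivity)
          _ = 1 := ENNReal.one_rpow _
      exact (ENNReal.mul_lt_top (lt_top_iff_ne_top.mpr h3)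
        (lt_of_le_of_lt h2 ENNReal.one_lt_top)).ne
  -- real lower bound on c
  have hclow : ∀ᶠ n in atTop, a₀ * F n (ρ * κ n) ≤ c n := by
    filter_upwards [hκδ, hJfin] with n h1 hfin
    have key : ENNReal.ofReal a₀ * μ n {y | ρ * κ n < y} ≤ J n := by
      refine rtad_lower_aux (μ n) _ _ _ fun x hx => ?_
      refine ENNReal.ofReal_le_ofReal ?_
      have hκ := hκpos n
      have e1 : Real.exp (ρ * κ n) ≤ Real.exp x := Real.exp_le_exp.mpr hx.le
      have e2 : Real.exp (ρ * κ n) = Real.exp (κ n) * Real.exp ((ρ-1) * κ n) := by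
        rw [← Real.exp_add]; ring_nf
      have e3 : Real.exp ((ρ-1)*δ) ≤ Real.exp ((ρ-1) * κ n) :=
        Real.exp_le_exp.mpr (by nlinarith)
      have e4 : (1:ℝ) ≤ Real.exp (κ n) := Real.one_le_exp hκ.le
      have : a₀ ≤ Real.exp x - Real.exp (κ n) := by nlinarith
      exact le_trans this (le_max_left _ _)
    rw [hJ n]
    have := ENNReal.toReal_mono hfin key
    rwa [ENNReal.toReal_mul, ENNReal.toReal_ofReal ha₀pos.le, ← hF n] at this
  have hcpos : ∀ᶠ n in atTop, 0 < c n := by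
    filter_upwards [hclow] with n h
    have := (hF01 n ρ hρ1.le).1
    nlinarith
  -- quantitative eventual facts
  have hq1 : ∀ᶠ n in atTop, R * κ n ≤ ε₂ * (-L n) := by
    filter_upwards [hfast.eventually_ge_atTop (R/ε₂)] with n h
    have hκ := hκpos n
    rw [div_le_div_iff₀ hε₂ hκ] at h
    linarith
  have hq2 : ∀ᶠ n in atTop, Real.log C₀ / (1+η) ≤ (ε₂ + η/(1+η)) * (-L n) := by
    have hpos : 0 < ε₂ + η/(1+η) := by positivity
    filter_upwards [hLtop.eventually_ge_atTop ((Real.log C₀ / (1+η)) / (ε₂ + η/(1+η)))]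
      with n h
    rw [div_le_iff₀ hpos] at h
    linarith [h]
  have hq3 : ∀ᶠ n in atTop, |Real.log a₀| ≤ ε₂ * (-L n) := by
    filter_upwards [hLtop.eventually_ge_atTop (|Real.log a₀|/ε₂)] with n h
    rw [div_le_iff₀ hε₂] at h
    linarith
  have hq4 : ∀ᶠ n in atTop, |Real.log 2| ≤ ε₂ * (-L n) := by
    filter_upwards [hLtop.eventually_ge_atTop (|Real.log 2|/ε₂)] with n h
    rw [div_le_iff₀ hε₂] at h
    linarith
  -- final
  filter_upwards [hclow, hcup, hcpos, hrρ, hrR, hq1, hq2, hq3, hq4] with n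
    h1 h2 h3 h4 h5 h6 h7 h8 h9
  have hL := hLneg n
  have hLne : L n ≠ 0 := hL.ne
  have hFρ := (hF01 n ρ hρ1.le).1
  have hFR := (hF01 n R hR1).1
  -- upper bound on the ratio
  have hub : Real.log (c n) / L n < 1 + 2*ε₂ := by
    have hlog1 : Real.log a₀ + Real.log (F n (ρ * κ n)) ≤ Real.log (c n) := by
      rw [← Real.log_mul ha₀pos.ne' hFρ.ne']
      exact Real.log_le_log (by positivity) h1
    have : Real.log (c n) / L n ≤ (Real.log a₀ + Real.log (F n (ρ * κ n))) / L n :=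
      div_le_div_of_nonpos_of_le hL.le hlog1
    rw [add_div] at this
    have hd : Real.log a₀ / L n ≤ ε₂ := by
      rw [div_le_iff_of_neg hL]
      calc ε₂ * L n = -(ε₂ * (-L n)) := by ring
        _ ≤ -|Real.log a₀| := by linarith
        _ ≤ Real.log a₀ := neg_abs_le _
    linarith
  -- lower bound on the ratio
  have hlb : 1 - 2*ε₂ ≤ Real.log (c n) / L n := by
    have hA : Real.exp (R * κ n) * F n (κ n) ≤ Real.exp ((1-ε₂) * L n) := by
      have : F n (κ n) = Real.exp (L n) := (Real.exp_log (hFpos n)).symm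
      rw [this, ← Real.exp_add]
      exact Real.exp_le_exp.mpr (by nlinarith)
    have hB : C₀ ^ (1/(1+η)) * (F n (R * κ n)) ^ (η/(1+η)) ≤ Real.exp ((1-ε₂) * L n) := by
      have hFRb : F n (R * κ n) ≤ Real.exp (b * L n) := by
        have : Real.log (F n (R * κ n)) = (Real.log (F n (R * κ n)) / L n) * L n := by
          field_simp
        have h10 : Real.log (F n (R * κ n)) ≤ b * L n := by
          rw [this]
          nlinarith
        calc F n (R * κ n) = Real.exp (Real.log (F n (R * κ n))) :=
              (Real.exp_log hFR).symm
          _ ≤ Real.exp (b * L n) := Real.exp_le_exp.mpr h10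
      have hs : (0:ℝ) ≤ η/(1+η) := by positivity
      have e1 : (F n (R * κ n)) ^ (η/(1+η)) ≤ Real.exp (b * L n * (η/(1+η))) := by
        rw [Real.exp_mul]
        exact Real.rpow_le_rpow hFR.le hFRb hs
      have e2 : C₀ ^ (1/(1+η)) = Real.exp (Real.log C₀ * (1/(1+η))) := by
        rw [Real.rpow_def_of_pos hC₀pos]
      rw [e2]
      calc Real.exp (Real.log C₀ * (1/(1+η))) * (F n (R * κ n)) ^ (η/(1+η))
          ≤ Real.exp (Real.log C₀ * (1/(1+η))) * Real.exp (b * L n * (η/(1+η))) := by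
            exact mul_le_mul_of_nonneg_left e1 (Real.exp_pos _).le
        _ = Real.exp (Real.log C₀ * (1/(1+η)) + b * L n * (η/(1+η))) :=
            (Real.exp_add _ _).symm
        _ ≤ Real.exp ((1-ε₂) * L n) := by
            refine Real.exp_le_exp.mpr ?_
            have hbs : b * (η/(1+η)) = 1 + η/(1+η) := by
              rw [hbdef]; field_simp
            have : b * L n * (η/(1+η)) = (1 + η/(1+η)) * L n := by
              rw [← hbs]; ring
            rw [this]
            have hc7 : Real.log C₀ * (1/(1+η)) = Real.log C₀ / (1+η) := by ring
            rw [hc7]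
            nlinarith [h7]
    have hc2 : c n ≤ 2 * Real.exp ((1-ε₂) * L n) := by linarith
    have hlog2 : Real.log (c n) ≤ Real.log 2 + (1-ε₂) * L n := by
      calc Real.log (c n) ≤ Real.log (2 * Real.exp ((1-ε₂) * L n)) :=
            Real.log_le_log h3 hc2
        _ = Real.log 2 + (1-ε₂) * L n := by
            rw [Real.log_mul two_ne_zero (Real.exp_pos _).ne', Real.log_exp]
    have : (Real.log 2 + (1-ε₂) * L n) / L n ≤ Real.log (c n) / L n :=
      div_le_div_of_nonpos_of_le hL.le hlog2
    rw [add_div, mul_div_assoc, div_self hLne, mul_one] at this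
    have hd : -ε₂ ≤ Real.log 2 / L n := by
      rw [le_div_iff_of_neg hL]
      calc Real.log 2 ≤ |Real.log 2| := le_abs_self _
        _ ≤ ε₂ * (-L n) := h9
        _ = -ε₂ * L n := by ring
    linarith
  rw [Real.dist_eq, abs_sub_lt_iff]
  constructor
  · rw [hε₂def] at hub; linarith
  · rw [hε₂def] at hlb; linarith
end

section
/- Let (X_n) be a sequence of real random variables and (κ_n) a sequence with κ_n > 0 and κ_n → 0. Assume the regular decay hypothesis for the right tails at (κ_n), and assume that for every η > 0 one has limsup_n E_n[|(e^{X_n} − 1)/κ_n|^{1+η}] < ∞. Then, with c_n := E_n[(e^{X_n} − e^{κ_n})^+], one has log(c_n/κ_n) ~ log F̄_n(κ_n), i.e. (log(c_n/κ_n))/(log F̄_n(κ_n)) → 1 as n → ∞. -/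
open MeasureTheory Filter Topology
open scoped ENNReal NNReal

lemma lower_call (ν : Measure ℝ) (κ' ρ : ℝ) (hκ' : 0 < κ') (hρ : 1 < ρ) :
    ENNReal.ofReal ((ρ - 1) * κ') * ν {y | ρ * κ' < y}
      ≤ ∫⁻ x, ENNReal.ofReal (max (Real.exp x - Real.exp κ') 0) ∂ν := by
  calc ENNReal.ofReal ((ρ - 1) * κ') * ν {y | ρ * κ' < y}
      = ∫⁻ _ in {y | ρ * κ' < y}, ENNReal.ofReal ((ρ - 1) * κ') ∂ν := by
        rw [setLIntegral_const]
    _ ≤ ∫⁻ x in {y | ρ * κ' < y}, ENNReal.ofReal (max (Real.exp x - Real.exp κ') 0) ∂ν := by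
        refine setLIntegral_mono_ae
          ((Measurable.max (Real.measurable_exp.sub measurable_const) measurable_const).ennreal_ofReal.aemeasurable)
          (Filter.Eventually.of_forall fun x hx => ?_)
        refine ENNReal.ofReal_le_ofReal ?_
        have hx' : ρ * κ' < x := hx
        have h1 : Real.exp (ρ * κ') ≤ Real.exp x := Real.exp_le_exp.2 hx'.le
        have h2 : Real.exp κ' * (1 + (ρ - 1) * κ') ≤ Real.exp (ρ * κ') := by
          calc Real.exp κ' * (1 + (ρ - 1) * κ') ≤ Real.exp κ' * Real.exp ((ρ - 1) * κ') := by
                nlinarith [Real.exp_pos κ', Real.add_one_le_exp ((ρ - 1) * κ')]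
            _ = Real.exp (ρ * κ') := by rw [← Real.exp_add]; ring_nf
        have h3 : 1 ≤ Real.exp κ' := Real.one_le_exp hκ'.le
        have : (ρ - 1) * κ' ≤ Real.exp x - Real.exp κ' := by nlinarith [mul_nonneg (mul_nonneg (sub_nonneg.2 hρ.le) hκ'.le) (sub_nonneg.2 h3)]
        exact le_max_of_le_left this
    _ ≤ ∫⁻ x, ENNReal.ofReal (max (Real.exp x - Real.exp κ') 0) ∂ν :=
        setLIntegral_le_lintegral _ _

lemma holder_call (ν : Measure ℝ) (κ' p q : ℝ) (hκ' : 0 ≤ κ') (hpq : Real.HolderConjugate p q) :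
    ∫⁻ x, ENNReal.ofReal (max (Real.exp x - Real.exp κ') 0) ∂ν ≤
    (∫⁻ x, ENNReal.ofReal (|Real.exp x - 1| ^ p) ∂ν) ^ (1/p) * (ν {y | κ' < y}) ^ (1/q) := by
  set f : ℝ → ℝ≥0∞ := fun x => ENNReal.ofReal |Real.exp x - 1|
  set g : ℝ → ℝ≥0∞ := fun x => {y : ℝ | κ' < y}.indicator (fun _ => 1) x
  have hf : Measurable f :=
    ((Real.measurable_exp.sub measurable_const).abs).ennreal_ofReal
  have hg : Measurable g :=
    (measurable_const.indicator (measurableSet_Ioi (a := κ')))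
  have hpt : ∀ x, ENNReal.ofReal (max (Real.exp x - Real.exp κ') 0) ≤ (f * g) x := by
    intro x
    by_cases hx : κ' < x
    · have : g x = 1 := Set.indicator_of_mem hx _
      simp only [Pi.mul_apply, this, mul_one]
      refine ENNReal.ofReal_le_ofReal ?_
      have h1 : 1 ≤ Real.exp κ' := Real.one_le_exp hκ'
      have h2 : Real.exp κ' ≤ Real.exp x := Real.exp_le_exp.2 hx.le
      rw [max_le_iff]
      constructor
      · rw [abs_of_nonneg (by linarith)]; linarith
      · positivity
    · have hg0 : g x = 0 := Set.indicator_of_notMem hx _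
      have : Real.exp x - Real.exp κ' ≤ 0 := by
        have : Real.exp x ≤ Real.exp κ' := Real.exp_le_exp.2 (not_lt.1 hx)
        linarith
      simp [Pi.mul_apply, hg0, max_eq_right this]
  calc ∫⁻ x, ENNReal.ofReal (max (Real.exp x - Real.exp κ') 0) ∂ν
      ≤ ∫⁻ x, (f * g) x ∂ν := lintegral_mono hpt
    _ ≤ (∫⁻ x, f x ^ p ∂ν) ^ (1/p) * (∫⁻ x, g x ^ q ∂ν) ^ (1/q) :=
        ENNReal.lintegral_mul_le_Lp_mul_Lq ν hpq hf.aemeasurable hg.aemeasurable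
    _ = (∫⁻ x, ENNReal.ofReal (|Real.exp x - 1| ^ p) ∂ν) ^ (1/p) * (ν {y | κ' < y}) ^ (1/q) := by
        congr 1
        · congr 1
          refine lintegral_congr fun x => ?_
          rw [← ENNReal.ofReal_rpow_of_nonneg (abs_nonneg _) hpq.nonneg]
        · congr 1
          have : ∀ x, g x ^ q = g x := by
            intro x
            by_cases hx : κ' < x
            · simp [g, Set.indicator_apply, hx]
            · simp [g, Set.indicator_apply, hx, ENNReal.zero_rpow_of_pos hpq.symm.pos]
          rw [lintegral_congr this]
          have : ∫⁻ a, g a ∂ν = ∫⁻ a, (Set.Ioi κ').indicator (fun _ => (1:ℝ≥0∞)) a ∂ν := rfl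
          rw [this, lintegral_indicator (measurableSet_Ioi (a := κ'))]
          simp
          rfl

private lemma div_le_div_of_le_of_neg' {a b c : ℝ} (h : a ≤ b) (hc : c < 0) : b / c ≤ a / c :=
  div_le_div_of_nonpos_of_le hc.le h


/-- **Right-tail atypical deviations, regime `κ_n → 0`.**
For each `n`, the law of `X_n` is the probability measure `μ n` on `ℝ`; the right tail is
`F n x = μ n {y | x < y}`. Under the regular decay hypothesis with limit function `I`,
and the moment condition `limsup_n E_n[|(e^{X_n}-1)/κ_n|^{1+η}] < ∞` for every `η > 0`,
the call prices `c n = E_n[(e^{X_n} - e^{κ n})⁺]` satisfy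
`log (c n / κ n) ~ log (F n (κ n))`. -/
theorem right_tail_atypical_kappa_to_zero
    (μ : ℕ → Measure ℝ) (hprob : ∀ n, IsProbabilityMeasure (μ n))
    (κ : ℕ → ℝ) (hκpos : ∀ n, 0 < κ n)
    (hκ0 : Tendsto κ atTop (𝓝 0))
    (F : ℕ → ℝ → ℝ)
    (hF : ∀ n x, F n x = ((μ n) {y | x < y}).toReal)
    (hF01 : ∀ n, ∀ ρ ≥ (1:ℝ), 0 < F n (ρ * κ n) ∧ F n (ρ * κ n) < 1)
    (hFto0 : Tendsto (fun n => F n (κ n)) atTop (𝓝 0))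
    (I : ℝ → EReal)
    (hI0 : ∀ ρ ≥ (1:ℝ), (0:EReal) ≤ I ρ)
    (hI : ∀ ρ ≥ (1:ℝ),
      Tendsto (fun n => ((Real.log (F n (ρ * κ n)) / Real.log (F n (κ n)) : ℝ) : EReal))
        atTop (𝓝 (I ρ)))
    (hIcont : Tendsto I (𝓝[>] (1:ℝ)) (𝓝 (1:EReal)))
    (hmom : ∀ η > (0:ℝ), limsup
        (fun n => ∫⁻ x, ENNReal.ofReal (|(Real.exp x - 1) / κ n| ^ (1+η)) ∂(μ n)) atTop < ⊤)
    (c : ℕ → ℝ)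
    (hc : ∀ n, c n = ∫ x, max (Real.exp x - Real.exp (κ n)) 0 ∂(μ n)) :
    Tendsto (fun n => Real.log (c n / κ n) / Real.log (F n (κ n))) atTop (𝓝 1) := by
  set T : ℕ → ℝ≥0∞ := fun n => ∫⁻ x, ENNReal.ofReal (max (Real.exp x - Real.exp (κ n)) 0) ∂(μ n)
    with hTdef
  set L : ℕ → ℝ := fun n => Real.log (F n (κ n)) with hLdef
  have ceq : ∀ n, c n = (T n).toReal := by
    intro n
    rw [hc n]
    exact integral_eq_lintegral_of_nonneg_ae
      (Filter.Eventually.of_forall fun x => le_max_right _ _)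
      ((Continuous.max (Real.continuous_exp.sub continuous_const)
        continuous_const).aestronglyMeasurable)
  have hμS : ∀ n x, (μ n) {y | x < y} = ENNReal.ofReal (F n x) := by
    intro n x
    haveI := hprob n
    rw [hF n x, ENNReal.ofReal_toReal (measure_ne_top _ _)]
  have hFκpos : ∀ n, 0 < F n (κ n) := by
    intro n; have := (hF01 n 1 le_rfl).1; rwa [one_mul] at this
  have hFκlt1 : ∀ n, F n (κ n) < 1 := by
    intro n; have := (hF01 n 1 le_rfl).2; rwa [one_mul] at this
  have hLneg : ∀ n, L n < 0 := fun n => Real.log_neg (hFκpos n) (hFκlt1 n)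
  have hLbot : Tendsto L atTop atBot := by
    refine Real.tendsto_log_nhdsGT_zero.comp ?_
    exact tendsto_nhdsWithin_of_tendsto_nhds_of_eventually_within _ hFto0
      (Filter.Eventually.of_forall fun n => hFκpos n)
  have hLinv : Tendsto (fun n => (L n)⁻¹) atTop (𝓝 0) := by
    have h1 : Tendsto (fun n => -(L n)) atTop atTop := tendsto_neg_atBot_atTop.comp hLbot
    have h2 : Tendsto (fun n => (-(L n))⁻¹) atTop (𝓝 0) := h1.inv_tendsto_atTop
    have h3 : Tendsto (fun n => -(-(L n))⁻¹) atTop (𝓝 (-0)) := h2.neg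
    simp only [neg_neg, inv_neg, neg_neg, neg_zero] at h3
    exact h3
  -- lower bound for the call price
  have lower : ∀ ρ, 1 < ρ → ∀ n, T n ≠ ⊤ → (ρ - 1) * κ n * F n (ρ * κ n) ≤ c n := by
    intro ρ hρ n hTn
    have h := lower_call (μ n) (κ n) ρ (hκpos n) hρ
    rw [hμS n (ρ * κ n), ← ENNReal.ofReal_mul
      (mul_nonneg (sub_nonneg.2 hρ.le) (hκpos n).le)] at h
    rw [ceq n]
    have hnn : 0 ≤ (ρ - 1) * κ n * F n (ρ * κ n) :=
      mul_nonneg (mul_nonneg (sub_nonneg.2 hρ.le) (hκpos n).le) (hF01 n ρ hρ.le).1.le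
    calc (ρ - 1) * κ n * F n (ρ * κ n)
        = (ENNReal.ofReal ((ρ - 1) * κ n * F n (ρ * κ n))).toReal := by
          rw [ENNReal.toReal_ofReal hnn]
      _ ≤ (T n).toReal := ENNReal.toReal_mono hTn h
  -- key upper bound via Hölder and the moment hypothesis
  have key : ∀ η : ℝ, 0 < η → ∃ B : ℝ, 1 ≤ B ∧ ∀ᶠ n in atTop,
      T n ≠ ⊤ ∧ c n ≤ B * κ n * (F n (κ n)) ^ (1 - 1/(1+η)) := by
    intro η hη
    set p : ℝ := 1 + η with hpdef
    have hp1 : 1 < p := by rw [hpdef]; linarith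
    have hp0 : 0 < p := by linarith
    have hpq : p.HolderConjugate (Real.conjExponent p) := Real.HolderConjugate.conjExponent hp1
    set q : ℝ := Real.conjExponent p with hqdef
    have hmomη := hmom η hη
    set M : ℝ≥0∞ := (limsup (fun n => ∫⁻ x,
      ENNReal.ofReal (|(Real.exp x - 1) / κ n| ^ (1+η)) ∂(μ n)) atTop) + 1 with hMdef
    have hMne : M ≠ ⊤ := by
      rw [hMdef]; exact ENNReal.add_ne_top.2 ⟨hmomη.ne, ENNReal.one_ne_top⟩
    have hMev : ∀ᶠ n in atTop, (∫⁻ x,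
        ENNReal.ofReal (|(Real.exp x - 1) / κ n| ^ (1+η)) ∂(μ n)) ≤ M :=
      (eventually_lt_of_limsup_lt (ENNReal.lt_add_right hmomη.ne one_ne_zero)).mono
        fun n h => h.le
    refine ⟨max 1 (M.toReal ^ (1/p)), le_max_left _ _, ?_⟩
    filter_upwards [hMev] with n hMn
    -- moment integral conversion
    have hmompt : ∀ x : ℝ, ENNReal.ofReal (|Real.exp x - 1| ^ p)
        = ENNReal.ofReal (|(Real.exp x - 1) / κ n| ^ (1+η)) * ENNReal.ofReal (κ n ^ p) := by
      intro x
      rw [← ENNReal.ofReal_mul (by positivity)]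
      congr 1
      rw [abs_div, Real.div_rpow (abs_nonneg _) (abs_nonneg _), abs_of_pos (hκpos n),
        ← hpdef, div_mul_cancel₀]
      exact (Real.rpow_pos_of_pos (hκpos n) p).ne'
    have hIn : (∫⁻ x, ENNReal.ofReal (|Real.exp x - 1| ^ p) ∂(μ n))
        ≤ M * ENNReal.ofReal (κ n ^ p) := by
      calc (∫⁻ x, ENNReal.ofReal (|Real.exp x - 1| ^ p) ∂(μ n))
          = (∫⁻ x, ENNReal.ofReal (|(Real.exp x - 1) / κ n| ^ (1+η)) ∂(μ n))
              * ENNReal.ofReal (κ n ^ p) := by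
            rw [← lintegral_mul_const' _ _ ENNReal.ofReal_ne_top]
            exact lintegral_congr fun x => hmompt x
        _ ≤ M * ENNReal.ofReal (κ n ^ p) := by
            exact mul_le_mul_left hMn _
    have hHolder := holder_call (μ n) (κ n) p q (hκpos n).le hpq
    rw [hμS n (κ n)] at hHolder
    have hTle : T n ≤ (M * ENNReal.ofReal (κ n ^ p)) ^ (1/p)
        * (ENNReal.ofReal (F n (κ n))) ^ (1/q) := by
      refine hHolder.trans ?_
      exact mul_le_mul_left (ENNReal.rpow_le_rpow hIn (one_div_pos.2 hp0).le) _
    have hRfin : (M * ENNReal.ofReal (κ n ^ p)) ^ (1/p)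
        * (ENNReal.ofReal (F n (κ n))) ^ (1/q) ≠ ⊤ := by
      apply ENNReal.mul_ne_top
      · exact (ENNReal.rpow_lt_top_of_nonneg (one_div_pos.2 hp0).le
          (ENNReal.mul_ne_top hMne ENNReal.ofReal_ne_top)).ne
      · exact (ENNReal.rpow_lt_top_of_nonneg (one_div_pos.2 hpq.symm.pos).le
          ENNReal.ofReal_ne_top).ne
    have hTfin : T n ≠ ⊤ := (lt_of_le_of_lt hTle hRfin.lt_top).ne
    refine ⟨hTfin, ?_⟩
    have hq1 : 1/q = 1 - 1/p := by
      have h := hpq.inv_add_inv_eq_one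
      rw [one_div, one_div]
      linarith [h]
    have hceq : c n ≤ ((M * ENNReal.ofReal (κ n ^ p)) ^ (1/p)
        * (ENNReal.ofReal (F n (κ n))) ^ (1/q)).toReal := by
      rw [ceq n]; exact ENNReal.toReal_mono hRfin hTle
    have htoReal : ((M * ENNReal.ofReal (κ n ^ p)) ^ (1/p)
        * (ENNReal.ofReal (F n (κ n))) ^ (1/q)).toReal
        = (M.toReal * κ n ^ p) ^ (1/p) * (F n (κ n)) ^ (1/q) := by
      rw [ENNReal.toReal_mul, ← ENNReal.toReal_rpow, ← ENNReal.toReal_rpow,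
        ENNReal.toReal_mul, ENNReal.toReal_ofReal (Real.rpow_nonneg (hκpos n).le p),
        ENNReal.toReal_ofReal (hFκpos n).le]
    have hstep : (M.toReal * κ n ^ p) ^ (1/p) = M.toReal ^ (1/p) * κ n := by
      rw [Real.mul_rpow ENNReal.toReal_nonneg (Real.rpow_nonneg (hκpos n).le p)]
      congr 1
      rw [← Real.rpow_mul (hκpos n).le, mul_one_div_cancel hp0.ne', Real.rpow_one]
    have hq1' : (1:ℝ) - 1/(1+η) = 1 - 1/p := by rw [hpdef]
    rw [hq1']
    calc c n ≤ (M.toReal * κ n ^ p) ^ (1/p) * (F n (κ n)) ^ (1/q) := by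
          rw [← htoReal]; exact hceq
      _ = M.toReal ^ (1/p) * κ n * (F n (κ n)) ^ (1 - 1/p) := by
          rw [hstep, hq1]
      _ ≤ max 1 (M.toReal ^ (1/p)) * κ n * (F n (κ n)) ^ (1 - 1/p) := by
          have h1 : (0:ℝ) ≤ κ n * (F n (κ n)) ^ (1 - 1/p) :=
            mul_nonneg (hκpos n).le (Real.rpow_nonneg (hFκpos n).le _)
          rw [mul_assoc, mul_assoc]
          exact mul_le_mul_of_nonneg_right (le_max_right _ _) h1
  -- positivity of c n whenever T n is finite
  have cpos : ∀ n, T n ≠ ⊤ → 0 < c n := by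
    intro n hTn
    refine lt_of_lt_of_le ?_ (lower 2 one_lt_two n hTn)
    have h2 : 0 < F n (2 * κ n) := (hF01 n 2 (by norm_num)).1
    nlinarith [hκpos n]
  -- lower eventual bound for the ratio
  have haveL : ∀ ε : ℝ, 0 < ε → ∀ᶠ n in atTop,
      1 - ε < Real.log (c n / κ n) / L n := by
    intro ε hε
    obtain ⟨B, hB1, hBev⟩ := key (2/ε) (by positivity)
    have hBpos : (0:ℝ) < B := lt_of_lt_of_le one_pos hB1
    have hBlog : Tendsto (fun n => Real.log B * (L n)⁻¹) atTop (𝓝 0) := by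
      simpa using hLinv.const_mul (Real.log B)
    have hev2 : ∀ᶠ n in atTop, -(ε/2) < Real.log B * (L n)⁻¹ :=
      hBlog.eventually_const_lt (by linarith)
    have hqgt : 1 - ε/2 < 1 - 1/(1+2/ε) := by
      have h1 : (0:ℝ) < 1 + 2/ε := by positivity
      have h2 : ε * (1 + 2/ε) = ε + 2 := by field_simp
      have : 1/(1+2/ε) < ε/2 := by
        rw [div_lt_div_iff₀ h1 two_pos]
        linarith
      linarith
    filter_upwards [hBev, hev2] with n hn hlb
    obtain ⟨hTn, hcle⟩ := hn
    have hcpos : 0 < c n := cpos n hTn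
    have hcκ : 0 < c n / κ n := div_pos hcpos (hκpos n)
    have hFq : (0:ℝ) < F n (κ n) ^ (1 - 1/(1+2/ε)) := Real.rpow_pos_of_pos (hFκpos n) _
    have h1 : Real.log (c n / κ n) ≤ Real.log B + (1 - 1/(1+2/ε)) * L n := by
      have hle : c n / κ n ≤ B * F n (κ n) ^ (1 - 1/(1+2/ε)) := by
        rw [div_le_iff₀ (hκpos n)]
        calc c n ≤ B * κ n * F n (κ n) ^ (1 - 1/(1+2/ε)) := hcle
          _ = B * F n (κ n) ^ (1 - 1/(1+2/ε)) * κ n := by ring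
      calc Real.log (c n / κ n) ≤ Real.log (B * F n (κ n) ^ (1 - 1/(1+2/ε))) :=
            Real.log_le_log hcκ hle
        _ = Real.log B + (1 - 1/(1+2/ε)) * L n := by
            rw [Real.log_mul hBpos.ne' hFq.ne', Real.log_rpow (hFκpos n)]
    have h2 : (Real.log B + (1 - 1/(1+2/ε)) * L n) / L n ≤ Real.log (c n / κ n) / L n :=
      div_le_div_of_le_of_neg' h1 (hLneg n)
    have h3 : (Real.log B + (1 - 1/(1+2/ε)) * L n) / L n
        = Real.log B * (L n)⁻¹ + (1 - 1/(1+2/ε)) := by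
      rw [add_div, div_eq_mul_inv, mul_div_assoc, div_self (hLneg n).ne, mul_one]
    rw [h3] at h2
    linarith
  -- upper eventual bound for the ratio
  have haveU : ∀ ε : ℝ, 0 < ε → ∀ᶠ n in atTop,
      Real.log (c n / κ n) / L n < 1 + ε := by
    intro ε hε
    have h1e : (1:EReal) < ((1+ε/2 : ℝ) : EReal) := by
      have : ((1:ℝ) : EReal) < ((1+ε/2 : ℝ) : EReal) := EReal.coe_lt_coe_iff.2 (by linarith)
      simpa using this
    obtain ⟨ρ, hρI, hρmem⟩ := ((hIcont.eventually_lt_const h1e).and self_mem_nhdsWithin).exists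
    have hρ : 1 < ρ := hρmem
    have hratio : ∀ᶠ n in atTop, Real.log (F n (ρ * κ n)) / L n < 1 + ε/2 := by
      have h := (hI ρ hρ.le).eventually_lt_const hρI
      filter_upwards [h] with n hn
      exact_mod_cast EReal.coe_lt_coe_iff.1 hn
    obtain ⟨B, hB1, hBev⟩ := key 1 one_pos
    have hlogρ : Tendsto (fun n => Real.log (ρ-1) * (L n)⁻¹) atTop (𝓝 0) := by
      simpa using hLinv.const_mul (Real.log (ρ-1))
    have hev2 : ∀ᶠ n in atTop, Real.log (ρ-1) * (L n)⁻¹ < ε/2 :=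
      hlogρ.eventually_lt_const (by linarith)
    filter_upwards [hBev, hratio, hev2] with n hn hrat hlr
    obtain ⟨hTn, _⟩ := hn
    have hlow := lower ρ hρ n hTn
    have hFρpos : 0 < F n (ρ * κ n) := (hF01 n ρ hρ.le).1
    have hρ1 : (0:ℝ) < ρ - 1 := by linarith
    have hlowpos : 0 < (ρ - 1) * F n (ρ * κ n) := mul_pos hρ1 hFρpos
    have hcpos : 0 < c n := cpos n hTn
    have hcκ : 0 < c n / κ n := div_pos hcpos (hκpos n)
    have h1 : Real.log (ρ-1) + Real.log (F n (ρ * κ n)) ≤ Real.log (c n / κ n) := by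
      have hle : (ρ - 1) * F n (ρ * κ n) ≤ c n / κ n := by
        rw [le_div_iff₀ (hκpos n)]
        calc (ρ - 1) * F n (ρ * κ n) * κ n = (ρ - 1) * κ n * F n (ρ * κ n) := by ring
          _ ≤ c n := hlow
      calc Real.log (ρ-1) + Real.log (F n (ρ * κ n))
          = Real.log ((ρ - 1) * F n (ρ * κ n)) := (Real.log_mul hρ1.ne' hFρpos.ne').symm
        _ ≤ Real.log (c n / κ n) := Real.log_le_log hlowpos hle
    have h2 : Real.log (c n / κ n) / L n
        ≤ (Real.log (ρ-1) + Real.log (F n (ρ * κ n))) / L n :=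
      div_le_div_of_le_of_neg' h1 (hLneg n)
    have h3 : (Real.log (ρ-1) + Real.log (F n (ρ * κ n))) / L n
        = Real.log (ρ-1) * (L n)⁻¹ + Real.log (F n (ρ * κ n)) / L n := by
      rw [add_div, div_eq_mul_inv]
    rw [h3] at h2
    linarith
  -- conclusion
  refine tendsto_order.2 ⟨fun a ha => ?_, fun b hb => ?_⟩
  · filter_upwards [haveL (1 - a) (by linarith)] with n hn
    simpa using hn
  · filter_upwards [haveU (b - 1) (by linarith)] with n hn
    simpa using hn
end

section
/- Let (X_n) be a sequence of real random variables and (κ_n) a sequence with κ_n > 0 and liminf_n κ_n > 0. Assume the regular decay hypothesis for the left tails at (κ_n). Then, with no moment condition, the put prices p_n := E_n[(e^{−κ_n} − e^{X_n})^+] satisfy log p_n ~ log F_n(−κ_n) − κ_n, i.e. (log p_n)/(log F_n(−κ_n) − κ_n) → 1 as n → ∞. -/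
open MeasureTheory Filter Topology

/-- **Left-tail atypical deviations, κ bounded away from zero.**
For each `n`, the law of `X_n` is the probability measure `μ n` on `ℝ`; the left tail is
`G n x = μ n {y | y ≤ -x}` (i.e. `F_n(-x)`). Under the regular decay hypothesis for the
left tails with limit function `I`, with no moment condition, the put prices
`p n = E_n[(e^{-κ n} - e^{X_n})⁺]` satisfy `log (p n) ~ log (G n (κ n)) - κ n`. -/
theorem left_tail_atypical_kappa_bounded_away
    (μ : ℕ → Measure ℝ) (hprob : ∀ n, IsProbabilityMeasure (μ n))
    (κ : ℕ → ℝ) (hκpos : ∀ n, 0 < κ n)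
    (hκbdd : ∃ δ > (0:ℝ), ∀ᶠ n in atTop, δ ≤ κ n)
    (G : ℕ → ℝ → ℝ)
    (hG : ∀ n x, G n x = ((μ n) {y | y ≤ -x}).toReal)
    (hG01 : ∀ n, ∀ ρ ≥ (1:ℝ), 0 < G n (ρ * κ n) ∧ G n (ρ * κ n) < 1)
    (hGto0 : Tendsto (fun n => G n (κ n)) atTop (𝓝 0))
    (I : ℝ → EReal)
    (hI0 : ∀ ρ ≥ (1:ℝ), (0:EReal) ≤ I ρ)
    (hI : ∀ ρ ≥ (1:ℝ),
      Tendsto (fun n => ((Real.log (G n (ρ * κ n)) / Real.log (G n (κ n)) : ℝ) : EReal))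
        atTop (𝓝 (I ρ)))
    (hIcont : Tendsto I (𝓝[>] (1:ℝ)) (𝓝 (1:EReal)))
    (p : ℕ → ℝ)
    (hp : ∀ n, p n = ∫ x, max (Real.exp (-κ n) - Real.exp x) 0 ∂(μ n)) :
    Tendsto (fun n => Real.log (p n) / (Real.log (G n (κ n)) - κ n)) atTop (𝓝 1) := by
  obtain ⟨δ, hδ, hκδ⟩ := hκbdd
  have hGpos : ∀ n, 0 < G n (κ n) := fun n => by
    have := (hG01 n 1 le_rfl).1; rwa [one_mul] at this
  have hGlt1 : ∀ n, G n (κ n) < 1 := fun n => by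
    have := (hG01 n 1 le_rfl).2; rwa [one_mul] at this
  have hlogGneg : ∀ n, Real.log (G n (κ n)) < 0 := fun n =>
    Real.log_neg (hGpos n) (hGlt1 n)
  -- integrability of the payoff
  have hint : ∀ n, Integrable (fun x => max (Real.exp (-κ n) - Real.exp x) 0) (μ n) := by
    intro n
    have := hprob n
    refine Integrable.mono' (integrable_const (Real.exp (-κ n)))
      ((Continuous.max (by continuity) continuous_const).aestronglyMeasurable) ?_
    filter_upwards with x
    rw [Real.norm_eq_abs, abs_of_nonneg (le_max_right _ _)]
    exact max_le (by linarith [Real.exp_pos x]) (Real.exp_pos _).le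
  -- upper bound for p
  have hpub : ∀ n, p n ≤ Real.exp (-κ n) * G n (κ n) := by
    intro n
    have := hprob n
    have hIic : MeasurableSet (Set.Iic (-κ n)) := measurableSet_Iic
    have hle : ∀ x, max (Real.exp (-κ n) - Real.exp x) 0
        ≤ (Set.Iic (-κ n)).indicator (fun _ => Real.exp (-κ n)) x := by
      intro x
      by_cases hx : x ≤ -κ n
      · rw [Set.indicator_of_mem (show x ∈ Set.Iic (-κ n) from hx)]
        exact max_le (by linarith [Real.exp_pos x]) (Real.exp_pos _).le
      · rw [Set.indicator_of_notMem (show x ∉ Set.Iic (-κ n) from hx)]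
        push_neg at hx
        have : Real.exp (-κ n) < Real.exp x := Real.exp_lt_exp.2 hx
        exact max_le (by linarith) le_rfl
    have := integral_mono (hint n) ((integrable_const _).indicator hIic) hle
    rw [← hp n] at this
    rw [integral_indicator_const _ hIic, smul_eq_mul] at this
    have hset : Set.Iic (-κ n) = {y | y ≤ -κ n} := rfl
    rw [hset, measureReal_def, ← hG n (κ n)] at this
    linarith
  -- lower bound for p
  have hplb : ∀ n, ∀ ρ ≥ (1:ℝ),
      (Real.exp (-κ n) - Real.exp (-(ρ * κ n))) * G n (ρ * κ n) ≤ p n := by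
    intro n ρ hρ
    have := hprob n
    have hIic : MeasurableSet (Set.Iic (-(ρ * κ n))) := measurableSet_Iic
    have hle : ∀ x, (Set.Iic (-(ρ * κ n))).indicator
        (fun _ => Real.exp (-κ n) - Real.exp (-(ρ * κ n))) x
        ≤ max (Real.exp (-κ n) - Real.exp x) 0 := by
      intro x
      by_cases hx : x ≤ -(ρ * κ n)
      · rw [Set.indicator_of_mem (show x ∈ Set.Iic (-(ρ * κ n)) from hx)]
        have : Real.exp x ≤ Real.exp (-(ρ * κ n)) := Real.exp_le_exp.2 hx
        exact le_max_of_le_left (by linarith)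
      · rw [Set.indicator_of_notMem (show x ∉ Set.Iic (-(ρ * κ n)) from hx)]
        exact le_max_right _ _
    have := integral_mono ((integrable_const _).indicator hIic) (hint n) hle
    rw [← hp n] at this
    rw [integral_indicator_const _ hIic, smul_eq_mul] at this
    have hset : Set.Iic (-(ρ * κ n)) = {y | y ≤ -(ρ * κ n)} := rfl
    rw [hset, measureReal_def, ← hG n (ρ * κ n)] at this
    linarith
  -- positivity of p
  have hppos : ∀ n, 0 < p n := by
    intro n
    have h2 : (2:ℝ) ≥ 1 := by norm_num
    have hlow := hplb n 2 h2
    have hκ := hκpos n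
    have hexp : Real.exp (-(2 * κ n)) < Real.exp (-κ n) := Real.exp_lt_exp.2 (by linarith)
    have hGp := (hG01 n 2 h2).1
    calc (0:ℝ) < (Real.exp (-κ n) - Real.exp (-(2 * κ n))) * G n (2 * κ n) :=
      mul_pos (by linarith) hGp
    _ ≤ p n := hlow
  -- log of p upper bound: log p n ≤ D n
  have hlogp_ub : ∀ n, Real.log (p n) ≤ Real.log (G n (κ n)) - κ n := by
    intro n
    have := Real.log_le_log (hppos n) (hpub n)
    rwa [Real.log_mul (Real.exp_ne_zero _) (hGpos n).ne', Real.log_exp, neg_add_eq_sub] at this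
  -- the denominator tends to -∞
  have hlogG_bot : Tendsto (fun n => Real.log (G n (κ n))) atTop atBot := by
    have h1 : Tendsto (fun n => G n (κ n)) atTop (𝓝[>] 0) :=
      tendsto_nhdsWithin_of_tendsto_nhds_of_eventually_within _ hGto0
        (Eventually.of_forall fun n => hGpos n)
    exact Real.tendsto_log_nhdsGT_zero.comp h1
  have hDbot : Tendsto (fun n => Real.log (G n (κ n)) - κ n) atTop atBot :=
    tendsto_atBot_mono (fun n => by linarith [hκpos n]) hlogG_bot
  have hDneg : ∀ᶠ n in atTop, Real.log (G n (κ n)) - κ n < 0 :=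
    hDbot.eventually (eventually_lt_atBot 0)
  -- ratio is eventually ≥ 1
  have hge1 : ∀ᶠ n in atTop,
      1 ≤ Real.log (p n) / (Real.log (G n (κ n)) - κ n) := by
    filter_upwards [hDneg] with n hD
    have h := hlogp_ub n
    have := div_le_div_of_nonpos_of_le hD.le h
    rwa [div_self hD.ne] at this
  -- main upper bound: for every ε > 0, eventually ratio ≤ 1 + ε
  have hub : ∀ ε > (0:ℝ), ∀ᶠ n in atTop,
      Real.log (p n) / (Real.log (G n (κ n)) - κ n) ≤ 1 + ε := by
    intro ε hε
    -- choose ρ > 1 with I ρ < 1 + ε/2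
    have h1lt : (1:EReal) < ((1 + ε/2 : ℝ) : EReal) := by
      rw [show (1:EReal) = ((1:ℝ):EReal) from rfl, EReal.coe_lt_coe_iff]; linarith
    have hev : ∀ᶠ ρ in 𝓝[>] (1:ℝ), I ρ < ((1 + ε/2 : ℝ) : EReal) :=
      hIcont.eventually_lt_const h1lt
    obtain ⟨ρ, hIρ, hρ1⟩ := (hev.and (eventually_mem_nhdsWithin)).exists
    have hρ : (1:ℝ) ≤ ρ := hρ1.le
    -- eventually the ratio of logs is ≤ 1 + ε/2
    have hratio : ∀ᶠ n in atTop,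
        Real.log (G n (ρ * κ n)) / Real.log (G n (κ n)) < 1 + ε/2 := by
      have := (hI ρ hρ).eventually_lt_const hIρ
      filter_upwards [this] with n hn
      exact_mod_cast hn
    -- the constant c
    set c : ℝ := 1 - Real.exp (-((ρ - 1) * δ)) with hc
    have hcpos : 0 < c := by
      have : Real.exp (-((ρ - 1) * δ)) < 1 := by
        rw [Real.exp_lt_one_iff]
        have h1ρ : (1:ℝ) < ρ := hρ1
        nlinarith
      simp only [hc]; linarith
    -- log c / D tends to 0
    have hcd : Tendsto (fun n => Real.log c / (Real.log (G n (κ n)) - κ n)) atTop (𝓝 0) := by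
      have hDtop : Tendsto (fun n => -(Real.log (G n (κ n)) - κ n)) atTop atTop :=
        tendsto_neg_atBot_atTop.comp hDbot
      have := hDtop.const_div_atTop (Real.log c)
      have h0 : Tendsto (fun n => -(Real.log c / -(Real.log (G n (κ n)) - κ n))) atTop
          (𝓝 (-0)) := this.neg
      rw [neg_zero] at h0
      refine h0.congr fun n => ?_
      rw [div_neg, neg_neg]
    have hcd2 : ∀ᶠ n in atTop,
        Real.log c / (Real.log (G n (κ n)) - κ n) < ε/2 :=
      hcd.eventually_lt_const (by linarith)
    filter_upwards [hDneg, hratio, hcd2, hκδ] with n hD hr hcd' hκd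
    set Lκ := Real.log (G n (κ n)) with hLκ
    set Lρ := Real.log (G n (ρ * κ n)) with hLρ
    set D := Lκ - κ n with hDdef
    have hLκneg : Lκ < 0 := hlogGneg n
    -- from hr : Lρ / Lκ < 1 + ε/2 and Lκ < 0, get Lρ ≥ (1+ε/2) * Lκ
    have hLρ_ge : (1 + ε/2) * Lκ ≤ Lρ := by
      have := (div_le_iff_of_neg hLκneg).1 hr.le
      linarith
    -- lower bound on p n: p n ≥ exp(-κ n) * c * G n (ρ κ n)
    have hlow := hplb n ρ hρ
    have hexpfac : Real.exp (-κ n) * c ≤ Real.exp (-κ n) - Real.exp (-(ρ * κ n)) := by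
      have : Real.exp (-(ρ * κ n)) ≤ Real.exp (-κ n) * Real.exp (-((ρ - 1) * δ)) := by
        rw [← Real.exp_add]
        apply Real.exp_le_exp.2
        have h1 : (ρ - 1) * δ ≤ (ρ - 1) * κ n :=
          mul_le_mul_of_nonneg_left hκd (by linarith)
        nlinarith
      simp only [hc]; nlinarith [Real.exp_pos (-κ n)]
    have hGρpos := (hG01 n ρ hρ).1
    have hplow : Real.exp (-κ n) * c * G n (ρ * κ n) ≤ p n := by
      have : Real.exp (-κ n) * c * G n (ρ * κ n)
          ≤ (Real.exp (-κ n) - Real.exp (-(ρ * κ n))) * G n (ρ * κ n) :=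
        mul_le_mul_of_nonneg_right hexpfac hGρpos.le
      linarith
    -- take logs
    have hlogp_lb : Real.log c - κ n + Lρ ≤ Real.log (p n) := by
      have hpos : 0 < Real.exp (-κ n) * c * G n (ρ * κ n) := by positivity
      have := Real.log_le_log hpos hplow
      rw [Real.log_mul (by positivity) hGρpos.ne',
        Real.log_mul (Real.exp_ne_zero _) hcpos.ne', Real.log_exp] at this
      linarith
    -- hence log p ≥ log c + (1+ε/2) * D
    have hkey : Real.log c + (1 + ε/2) * D ≤ Real.log (p n) := by
      have h1 : (1 + ε/2) * D ≤ (1 + ε/2) * Lκ - κ n := by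
        rw [hDdef]; nlinarith [hκpos n]
      calc Real.log c + (1 + ε/2) * D ≤ Real.log c + ((1 + ε/2) * Lκ - κ n) := by linarith
      _ ≤ Real.log c + (Lρ - κ n) := by linarith
      _ ≤ Real.log (p n) := by linarith
    -- divide by D < 0
    have hdiv := div_le_div_of_nonpos_of_le hD.le hkey
    rw [add_div, mul_div_assoc, div_self hD.ne, mul_one] at hdiv
    calc Real.log (p n) / D ≤ Real.log c / D + (1 + ε/2) := hdiv
    _ ≤ ε/2 + (1 + ε/2) := by linarith
    _ = 1 + ε := by ring
  -- conclude
  rw [tendsto_order]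
  constructor
  · intro a ha
    filter_upwards [hge1] with n hn
    exact lt_of_lt_of_le ha hn
  · intro a ha
    have hε : 0 < (a - 1) / 2 := by linarith
    filter_upwards [hub ((a-1)/2) hε] with n hn
    calc Real.log (p n) / (Real.log (G n (κ n)) - κ n) ≤ 1 + (a-1)/2 := hn
    _ < a := by linarith
end

section
/- Let (X_n) be a sequence of real random variables and (κ_n) a sequence with κ_n > 0 and κ_n → 0. Assume the regular decay hypothesis for the left tails at (κ_n), and assume that for every η > 0 one has limsup_n E_n[|(e^{X_n} − 1)/κ_n|^{1+η}] < ∞. Then, with p_n := E_n[(e^{−κ_n} − e^{X_n})^+], one has log(p_n/κ_n) ~ log F_n(−κ_n), i.e. (log(p_n/κ_n))/(log F_n(−κ_n)) → 1 as n → ∞. -/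
open MeasureTheory Filter Topology

open scoped ENNReal

/-- Integrability of the put payoff. -/
lemma payoff_integrable_aux (μ : Measure ℝ) [IsProbabilityMeasure μ] (c : ℝ) :
    Integrable (fun x => max (c - Real.exp x) 0) μ := by
  apply Integrable.mono' (integrable_const (max c 0))
  · exact ((continuous_const.sub Real.continuous_exp).max continuous_const).aestronglyMeasurable
  · filter_upwards with x
    rw [Real.norm_eq_abs, abs_of_nonneg (le_max_right _ _)]
    exact max_le_max (by linarith [Real.exp_pos x]) le_rfl

/-- Lower bound on the put price by a tail probability. -/
lemma lower_bd_aux (μ : Measure ℝ) [IsProbabilityMeasure μ] (a b : ℝ) (hab : b ≤ a) :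
    (Real.exp a - Real.exp b) * (μ {y | y ≤ b}).toReal
      ≤ ∫ x, max (Real.exp a - Real.exp x) 0 ∂μ := by
  set c := Real.exp a - Real.exp b with hc
  have hc0 : 0 ≤ c := sub_nonneg.2 (Real.exp_le_exp.2 hab)
  have hB : MeasurableSet {y : ℝ | y ≤ b} := measurableSet_Iic
  have := integral_indicator_const (μ := μ) c hB
  calc c * (μ {y | y ≤ b}).toReal = ∫ x, ({y : ℝ | y ≤ b}).indicator (fun _ => c) x ∂μ := by
        rw [this, smul_eq_mul, mul_comm]; rfl
    _ ≤ ∫ x, max (Real.exp a - Real.exp x) 0 ∂μ := by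
        apply integral_mono ((integrable_const c).indicator hB) (payoff_integrable_aux μ _)
        intro x
        by_cases hx : x ∈ {y : ℝ | y ≤ b}
        · rw [Set.indicator_of_mem hx]
          simp only [Set.mem_setOf_eq] at hx
          have := Real.exp_le_exp.2 hx
          exact le_max_of_le_left (by rw [hc]; linarith)
        · rw [Set.indicator_of_notMem hx]
          exact le_max_right _ _

/-- Hölder upper bound on the normalized put price. -/
lemma upper_bd_aux (μ : Measure ℝ) [IsProbabilityMeasure μ] (κ η : ℝ) (hκ : 0 < κ) (hη : 0 < η)
    (hf : Integrable (fun x => max (Real.exp (-κ) - Real.exp x) 0) μ)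
    (heT : ∫⁻ x, ENNReal.ofReal (|(Real.exp x - 1)/κ| ^ (1+η)) ∂μ ≠ ⊤) :
    (∫ x, max (Real.exp (-κ) - Real.exp x) 0 ∂μ) / κ
      ≤ (∫⁻ x, ENNReal.ofReal (|(Real.exp x - 1)/κ| ^ (1+η)) ∂μ).toReal ^ (1/(1+η))
        * (μ {y | y ≤ -κ}).toReal ^ (η/(1+η)) := by
  set e := ∫⁻ x, ENNReal.ofReal (|(Real.exp x - 1)/κ| ^ (1+η)) ∂μ with he
  set A : Set ℝ := {y | y ≤ -κ} with hA
  have hAm : MeasurableSet A := measurableSet_Iic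
  set g : ℝ → ℝ≥0∞ := fun x => ENNReal.ofReal (|(Real.exp x - 1)/κ|) with hg
  have hgm : AEMeasurable g μ := by
    apply Measurable.aemeasurable
    apply ENNReal.measurable_ofReal.comp
    exact (((Real.continuous_exp.sub continuous_const).div_const κ).abs).measurable
  have hpq : Real.HolderConjugate (1+η) ((1+η)/η) := by
    rw [Real.holderConjugate_iff]
    constructor
    · linarith
    · field_simp
  have h1 : ENNReal.ofReal (∫ x, max (Real.exp (-κ) - Real.exp x) 0 ∂μ)
      = ∫⁻ x, ENNReal.ofReal (max (Real.exp (-κ) - Real.exp x) 0) ∂μ := by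
    exact MeasureTheory.ofReal_integral_eq_lintegral_ofReal hf
      (Filter.Eventually.of_forall fun x => le_max_right _ _)
  have h2 : ∀ x, ENNReal.ofReal (max (Real.exp (-κ) - Real.exp x) 0)
      ≤ (g * A.indicator (1 : ℝ → ℝ≥0∞)) x * ENNReal.ofReal κ := by
    intro x
    by_cases hx : x ∈ A
    · have hx' : x ≤ -κ := hx
      have h3 : Real.exp x ≤ 1 := by
        rw [← Real.exp_zero]; exact Real.exp_le_exp.2 (by linarith)
      have h4 : max (Real.exp (-κ) - Real.exp x) 0 ≤ |(Real.exp x - 1)/κ| * κ := by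
        rw [abs_div, abs_of_pos hκ, div_mul_cancel₀ _ hκ.ne', abs_sub_comm,
          abs_of_nonneg (by linarith)]
        apply max_le (by linarith [Real.exp_le_one_iff.2 (neg_nonpos.2 hκ.le)]) (by linarith)
      calc ENNReal.ofReal (max (Real.exp (-κ) - Real.exp x) 0)
          ≤ ENNReal.ofReal (|(Real.exp x - 1)/κ| * κ) := ENNReal.ofReal_le_ofReal h4
        _ = (g * A.indicator (1 : ℝ → ℝ≥0∞)) x * ENNReal.ofReal κ := by
            rw [ENNReal.ofReal_mul (abs_nonneg _)]
            simp [hg, Set.indicator_of_mem hx, mul_comm]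
    · have hx' : -κ < x := lt_of_not_ge hx
      have : Real.exp (-κ) - Real.exp x ≤ 0 := by linarith [Real.exp_lt_exp.2 hx']
      simp [max_eq_right this, Set.indicator_of_notMem hx]
  have h5 : ∫⁻ x, (g * A.indicator (1 : ℝ → ℝ≥0∞)) x ∂μ
      ≤ (∫⁻ x, g x ^ (1+η) ∂μ) ^ (1/(1+η))
        * (∫⁻ x, (A.indicator (1 : ℝ → ℝ≥0∞) x : ℝ≥0∞) ^ ((1+η)/η) ∂μ) ^ (1/((1+η)/η)) :=
    ENNReal.lintegral_mul_le_Lp_mul_Lq μ hpq hgm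
      ((measurable_one.indicator hAm).aemeasurable)
  have hgp : ∀ x, g x ^ (1+η) = ENNReal.ofReal (|(Real.exp x - 1)/κ| ^ (1+η)) := fun x =>
    ENNReal.ofReal_rpow_of_nonneg (abs_nonneg _) (by linarith)
  have hind : ∀ x, (A.indicator (1 : ℝ → ℝ≥0∞) x : ℝ≥0∞) ^ ((1+η)/η)
      = A.indicator (1 : ℝ → ℝ≥0∞) x := by
    intro x
    by_cases hx : x ∈ A
    · simp [Set.indicator_of_mem hx]
    · have hpos : (0:ℝ) < (1+η)/η := by positivity
      simp [Set.indicator_of_notMem hx, ENNReal.zero_rpow_of_pos hpos]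
  have h6 : ∫⁻ x, (A.indicator (1 : ℝ → ℝ≥0∞) x : ℝ≥0∞) ^ ((1+η)/η) ∂μ = μ A := by
    simp only [hind]
    exact lintegral_indicator_one hAm
  have h7 : ENNReal.ofReal (∫ x, max (Real.exp (-κ) - Real.exp x) 0 ∂μ)
      ≤ e ^ (1/(1+η)) * (μ A) ^ (1/((1+η)/η)) * ENNReal.ofReal κ := by
    rw [h1]
    calc ∫⁻ x, ENNReal.ofReal (max (Real.exp (-κ) - Real.exp x) 0) ∂μ
        ≤ ∫⁻ x, (g * A.indicator (1 : ℝ → ℝ≥0∞)) x * ENNReal.ofReal κ ∂μ := lintegral_mono h2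
      _ = (∫⁻ x, (g * A.indicator (1 : ℝ → ℝ≥0∞)) x ∂μ) * ENNReal.ofReal κ :=
          lintegral_mul_const'' _
            ((hgm.mul (measurable_one.indicator hAm).aemeasurable))
      _ ≤ e ^ (1/(1+η)) * (μ A) ^ (1/((1+η)/η)) * ENNReal.ofReal κ := by
          apply mul_le_mul_left _ _
          calc _ ≤ _ := h5
          _ = e ^ (1/(1+η)) * (μ A) ^ (1/((1+η)/η)) := by
              rw [h6]
              congr 1
              congr 1
              exact lintegral_congr fun x => hgp x
  have hq : 1/((1+η)/η) = η/(1+η) := by field_simp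
  have hpint : 0 ≤ ∫ x, max (Real.exp (-κ) - Real.exp x) 0 ∂μ :=
    integral_nonneg fun x => le_max_right _ _
  have hfin : e ^ (1/(1+η)) * (μ A) ^ (1/((1+η)/η)) * ENNReal.ofReal κ ≠ ⊤ := by
    apply ENNReal.mul_ne_top
    apply ENNReal.mul_ne_top
    · exact ENNReal.rpow_ne_top_of_nonneg (by positivity) heT
    · exact ENNReal.rpow_ne_top_of_nonneg (by positivity) (measure_ne_top _ _)
    · exact ENNReal.ofReal_ne_top
  have h8 := ENNReal.toReal_mono hfin h7
  rw [ENNReal.toReal_ofReal hpint] at h8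
  rw [ENNReal.toReal_mul, ENNReal.toReal_mul, ENNReal.toReal_ofReal hκ.le,
    ← ENNReal.toReal_rpow, ← ENNReal.toReal_rpow, hq] at h8
  rw [div_le_iff₀ hκ]
  exact h8

/-- Elementary lower bound for `exp(-κ) - exp(-ρκ)`. -/
lemma exp_diff_lower_aux (κ ρ : ℝ) (hκ : 0 < κ) (hκ2 : κ ≤ 1/2) (hρ : 1 < ρ)
    (hs1 : (ρ-1)*κ ≤ 1) :
    (ρ-1)*κ/4 ≤ Real.exp (-κ) - Real.exp (-(ρ*κ)) := by
  set s := (ρ-1)*κ with hsdef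
  have hs0 : 0 < s := mul_pos (by linarith) hκ
  have h1 : Real.exp (-(ρ*κ)) = Real.exp (-κ) * Real.exp (-s) := by
    rw [← Real.exp_add, hsdef]; ring_nf
  have h2 : Real.exp (-s) ≤ 1 - s/2 := by
    have h := Real.add_one_le_exp s
    rw [Real.exp_neg]
    have h2 : (0:ℝ) < s + 1 := by linarith
    have h3 : (Real.exp s)⁻¹ ≤ (s+1)⁻¹ := inv_anti₀ h2 h
    apply h3.trans
    rw [inv_le_iff_one_le_mul₀ h2]
    nlinarith
  have h4 : (1:ℝ)/2 ≤ Real.exp (-κ) := by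
    have := Real.add_one_le_exp (-κ)
    linarith
  have h5 : Real.exp (-κ) - Real.exp (-(ρ*κ)) = Real.exp (-κ) * (1 - Real.exp (-s)) := by
    rw [h1]; ring
  rw [h5]
  have h6 : s/2 ≤ 1 - Real.exp (-s) := by linarith
  calc s/4 = (1/2) * (s/2) := by ring
    _ ≤ Real.exp (-κ) * (1 - Real.exp (-s)) := by
        apply mul_le_mul h4 h6 (by linarith) (Real.exp_pos _).le

lemma const_div_atBot_aux (c : ℝ) (L : ℕ → ℝ) (hL : Tendsto L atTop atBot) :
    Tendsto (fun n => c / L n) atTop (𝓝 0) := by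
  have h1 : Tendsto (fun n => -L n) atTop atTop := tendsto_neg_atTop_iff.mpr hL
  have h2 := Filter.Tendsto.const_div_atTop h1 (-c)
  simpa [neg_div_neg_eq] using h2

/-- **Left-tail atypical deviations, regime `κ_n → 0`.**
For each `n`, the law of `X_n` is the probability measure `μ n` on `ℝ`; the left tail is
`G n x = μ n {y | y ≤ -x}` (i.e. `F_n(-x)`). Under the regular decay hypothesis for the
left tails with limit function `I`, and the moment condition
`limsup_n E_n[|(e^{X_n}-1)/κ_n|^{1+η}] < ∞` for every `η > 0`, the put prices
`p n = E_n[(e^{-κ n} - e^{X_n})⁺]` satisfy `log (p n / κ n) ~ log (G n (κ n))`. -/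
theorem left_tail_atypical_kappa_to_zero
    (μ : ℕ → Measure ℝ) (hprob : ∀ n, IsProbabilityMeasure (μ n))
    (κ : ℕ → ℝ) (hκpos : ∀ n, 0 < κ n)
    (hκ0 : Tendsto κ atTop (𝓝 0))
    (G : ℕ → ℝ → ℝ)
    (hG : ∀ n x, G n x = ((μ n) {y | y ≤ -x}).toReal)
    (hG01 : ∀ n, ∀ ρ ≥ (1:ℝ), 0 < G n (ρ * κ n) ∧ G n (ρ * κ n) < 1)
    (hGto0 : Tendsto (fun n => G n (κ n)) atTop (𝓝 0))
    (I : ℝ → EReal)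
    (hI0 : ∀ ρ ≥ (1:ℝ), (0:EReal) ≤ I ρ)
    (hI : ∀ ρ ≥ (1:ℝ),
      Tendsto (fun n => ((Real.log (G n (ρ * κ n)) / Real.log (G n (κ n)) : ℝ) : EReal))
        atTop (𝓝 (I ρ)))
    (hIcont : Tendsto I (𝓝[>] (1:ℝ)) (𝓝 (1:EReal)))
    (hmom : ∀ η > (0:ℝ), limsup
        (fun n => ∫⁻ x, ENNReal.ofReal (|(Real.exp x - 1) / κ n| ^ (1+η)) ∂(μ n)) atTop < ⊤)
    (p : ℕ → ℝ)
    (hp : ∀ n, p n = ∫ x, max (Real.exp (-κ n) - Real.exp x) 0 ∂(μ n)) :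
    Tendsto (fun n => Real.log (p n / κ n) / Real.log (G n (κ n))) atTop (𝓝 1) := by
  haveI := hprob
  set L : ℕ → ℝ := fun n => Real.log (G n (κ n)) with hL
  -- basic facts about G and L
  have hGpos : ∀ n, 0 < G n (κ n) := by
    intro n; have := (hG01 n 1 le_rfl).1; rwa [one_mul] at this
  have hLbot : Tendsto L atTop atBot :=
    Real.tendsto_log_nhdsGT_zero.comp
      (tendsto_nhdsWithin_of_tendsto_nhds_of_eventually_within _ hGto0
        (Eventually.of_forall hGpos))
  -- positivity of p n / κ n (crucial for logs)
  have hppos : ∀ n, 0 < p n := by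
    intro n
    have h2 : (2:ℝ) * κ n ≤ 2 * κ n := le_rfl
    have hGρ := (hG01 n 2 (by norm_num)).1
    have hlb := lower_bd_aux (μ n) (-κ n) (-(2 * κ n)) (by linarith [hκpos n])
    rw [hp n]
    refine lt_of_lt_of_le ?_ hlb
    apply mul_pos
    · have : Real.exp (-(2 * κ n)) < Real.exp (-κ n) :=
        Real.exp_lt_exp.2 (by linarith [hκpos n])
      linarith
    · rw [hG n (2 * κ n)] at hGρ; exact hGρ
  have hpκpos : ∀ n, 0 < p n / κ n := fun n => div_pos (hppos n) (hκpos n)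
  -- the target, via tendsto_order
  apply tendsto_order.2
  constructor
  · -- lower bound: ∀ c < 1, eventually c < r n
    intro c hc
    -- choose η with c < η/(1+η)
    set η : ℝ := max 1 (c/(1-c) + 1) with hη
    have hη1 : (1:ℝ) ≤ η := le_max_left _ _
    have hηpos : 0 < η := by linarith
    have hηc : c < η/(1+η) := by
      rw [lt_div_iff₀ (by linarith)]
      have h1 : c/(1-c) + 1 ≤ η := le_max_right _ _
      have h2 : c/(1-c) * (1-c) = c := div_mul_cancel₀ _ (by linarith)
      nlinarith
    -- moment bound
    have hS := hmom η hηpos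
    set S := limsup
        (fun n => ∫⁻ x, ENNReal.ofReal (|(Real.exp x - 1) / κ n| ^ (1+η)) ∂(μ n)) atTop with hSdef
    have hev : ∀ᶠ n in atTop,
        (∫⁻ x, ENNReal.ofReal (|(Real.exp x - 1) / κ n| ^ (1+η)) ∂(μ n)) < S + 1 := by
      apply eventually_lt_of_limsup_lt (ENNReal.lt_add_right hS.ne one_ne_zero)
    have hS1top : S + 1 ≠ ⊤ := by
      simp [ENNReal.add_ne_top, hS.ne]
    set C : ℝ := (S+1).toReal ^ ((1:ℝ)/(1+η)) with hC
    have hCpos : 0 < C := by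
      have h1 : 0 < (S+1).toReal := ENNReal.toReal_pos (by simp) hS1top
      positivity
    -- log C / L → 0
    have hzero := const_div_atBot_aux (Real.log C) L hLbot
    have hev2 : ∀ᶠ n in atTop, Real.log C / L n > -(η/(1+η) - c) := by
      have := hzero.eventually (eventually_gt_nhds (show -(η/(1+η) - c) < 0 by linarith))
      exact this
    have hevL : ∀ᶠ n in atTop, L n < 0 := hLbot.eventually (eventually_lt_atBot 0)
    filter_upwards [hev, hev2, hevL] with n h1 h2 h3
    -- upper bound on p n / κ n
    have hub := upper_bd_aux (μ n) (κ n) η (hκpos n) hηpos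
      (payoff_integrable_aux (μ n) _) (h1.trans_le le_top).ne
    rw [← hp n, ← hG n (κ n)] at hub
    have htR : (∫⁻ x, ENNReal.ofReal (|(Real.exp x - 1) / κ n| ^ (1+η)) ∂(μ n)).toReal
        ≤ (S+1).toReal := ENNReal.toReal_mono hS1top h1.le
    have hub2 : p n / κ n ≤ C * (G n (κ n)) ^ (η/(1+η)) := by
      refine hub.trans ?_
      apply mul_le_mul_of_nonneg_right _ (Real.rpow_nonneg (hGpos n).le _)
      exact Real.rpow_le_rpow ENNReal.toReal_nonneg htR (by positivity)
    -- take logs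
    have hlog : Real.log (p n / κ n) ≤ Real.log C + (η/(1+η)) * L n := by
      have := Real.log_le_log (hpκpos n) hub2
      rwa [Real.log_mul hCpos.ne' (Real.rpow_pos_of_pos (hGpos n) _).ne', Real.log_rpow (hGpos n)] at this
    have hdiv : Real.log C / L n + (η/(1+η)) ≤ Real.log (p n / κ n) / L n := by
      have h4 := div_le_div_of_nonpos_of_le h3.le hlog
      rw [add_div] at h4
      rw [mul_div_assoc, div_self h3.ne, mul_one] at h4
      exact h4
    have hfin : c < Real.log C / L n + η/(1+η) := by linarith
    exact lt_of_lt_of_le hfin hdiv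
  · -- upper bound: ∀ c > 1, eventually r n < c
    intro c hc
    set c' : ℝ := (1+c)/2 with hc'
    have hc'1 : 1 < c' := by rw [hc']; linarith
    have hc'c : c' < c := by rw [hc']; linarith
    -- choose ρ > 1 with I ρ < c'
    have hball : ∀ᶠ ρ in 𝓝[>] (1:ℝ), I ρ < ((c' : ℝ) : EReal) := by
      apply hIcont.eventually_lt_const
      exact_mod_cast hc'1
    obtain ⟨ρ, hIρ, hρmem⟩ := (hball.and eventually_mem_nhdsWithin).exists
    have hρ1 : (1:ℝ) < ρ := hρmem
    -- eventually q n < c'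
    have hq := Tendsto.eventually_lt_const hIρ (hI ρ hρ1.le)
    have hq' : ∀ᶠ n in atTop,
        Real.log (G n (ρ * κ n)) / Real.log (G n (κ n)) < c' := by
      filter_upwards [hq] with n hn
      exact_mod_cast hn
    -- eventual smallness of κ
    have hκsmall : ∀ᶠ n in atTop, κ n < 1/2 :=
      hκ0.eventually (eventually_lt_nhds (by norm_num))
    have hκsmall2 : ∀ᶠ n in atTop, κ n < 1/(ρ-1) :=
      hκ0.eventually (eventually_lt_nhds (div_pos one_pos (by linarith)))
    -- log d / L → 0, where d = (ρ-1)/4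
    set d : ℝ := (ρ-1)/4 with hd
    have hdpos : 0 < d := by rw [hd]; linarith
    have hzero := const_div_atBot_aux (Real.log d) L hLbot
    have hev2 : ∀ᶠ n in atTop, Real.log d / L n < c - c' := by
      exact hzero.eventually (eventually_lt_nhds (by linarith))
    have hevL : ∀ᶠ n in atTop, L n < 0 := hLbot.eventually (eventually_lt_atBot 0)
    filter_upwards [hq', hκsmall, hκsmall2, hev2, hevL] with n h1 h2 h3 h4 h5
    -- lower bound p n ≥ d * κ n * G n (ρ κ n)
    have hGρ := (hG01 n ρ hρ1.le).1
    have hlb := lower_bd_aux (μ n) (-κ n) (-(ρ * κ n))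
      (by nlinarith [hκpos n])
    rw [← hG n (ρ * κ n)] at hlb
    have hs1 : (ρ-1) * κ n ≤ 1 := by
      have hρpos : (0:ℝ) < ρ - 1 := by linarith
      have := (lt_div_iff₀ hρpos).1 h3
      linarith
    have hexp : (ρ-1)*(κ n)/4 ≤ Real.exp (-κ n) - Real.exp (-(ρ * κ n)) :=
      exp_diff_lower_aux (κ n) ρ (hκpos n) h2.le hρ1 hs1
    -- p n / κ n ≥ d * G n (ρ κ n)
    have hplow : d * G n (ρ * κ n) ≤ p n / κ n := by
      rw [le_div_iff₀ (hκpos n), hp n]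
      calc d * G n (ρ * κ n) * κ n = (ρ-1)*(κ n)/4 * G n (ρ * κ n) := by rw [hd]; ring
        _ ≤ (Real.exp (-κ n) - Real.exp (-(ρ * κ n))) * G n (ρ * κ n) :=
            mul_le_mul_of_nonneg_right hexp hGρ.le
        _ ≤ _ := hlb
    have hloglow : Real.log d + Real.log (G n (ρ * κ n)) ≤ Real.log (p n / κ n) := by
      have := Real.log_le_log (mul_pos hdpos hGρ) hplow
      rwa [Real.log_mul hdpos.ne' hGρ.ne'] at this
    have hdiv := div_le_div_of_nonpos_of_le h5.le hloglow
    rw [add_div] at hdiv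
    calc Real.log (p n / κ n) / L n
        ≤ Real.log d / L n + Real.log (G n (ρ * κ n)) / L n := hdiv
      _ < (c - c') + c' := by
          apply add_lt_add h4
          exact h1
      _ = c := by ring
end

section
/- Let (X_n) be a sequence of real random variables and (γ_n) a sequence of positive reals with γ_n → 0, such that X_n/γ_n converges in distribution to a real random variable Y. Assume E_n[e^{X_n}] = 1 for every n, and that there exists η > 0 with limsup_n E_n[|(e^{X_n} − 1)/γ_n|^{1+η}] < ∞. Then Y is integrable and E[Y] = 0. -/
open MeasureTheory Filter Topology

/-- clamp to `[-M, M]`. -/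
noncomputable def clampFun (M t : ℝ) : ℝ := max (-M) (min t M)

lemma clampFun_abs_le_abs (M t : ℝ) : |clampFun M t| ≤ |M| := by
  unfold clampFun
  rw [abs_le]
  refine ⟨le_trans (by simpa using le_abs_self M) (le_max_left _ _), ?_⟩
  exact max_le (neg_le_abs M) (le_trans (min_le_right t M) (le_abs_self M))

lemma clampFun_abs_le (M t : ℝ) (hM : 0 ≤ M) : |clampFun M t| ≤ M := by
  simpa [abs_of_nonneg hM] using clampFun_abs_le_abs M t

lemma clampFun_lipschitz (M a b : ℝ) : |clampFun M a - clampFun M b| ≤ |a - b| := by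
  unfold clampFun
  calc |max (-M) (min a M) - max (-M) (min b M)| ≤ |min a M - min b M| := by
        rw [max_comm (-M) _, max_comm (-M) _]; exact abs_max_sub_max_le_abs _ _ _
    _ ≤ |a - b| := by simpa using abs_min_sub_min_le_max a M b M

lemma clampFun_eq_self (M t : ℝ) (ht : |t| ≤ M) : clampFun M t = t := by
  rw [abs_le] at ht
  unfold clampFun
  rw [min_eq_left ht.2, max_eq_right ht.1]

noncomputable def clampBCF (M : ℝ) : BoundedContinuousFunction ℝ ℝ :=
  BoundedContinuousFunction.ofNormedAddCommGroup (clampFun M)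
    (continuous_const.max (continuous_id.min continuous_const)) |M|
    (fun t => by simpa using clampFun_abs_le_abs M t)

@[simp] lemma clampBCF_apply (M t : ℝ) : clampBCF M t = clampFun M t := rfl

/-- truncated absolute value. -/
noncomputable def atruncFun (M t : ℝ) : ℝ := min |t| M

lemma atruncFun_abs_le_abs (M t : ℝ) : |atruncFun M t| ≤ |M| := by
  unfold atruncFun
  rw [abs_le]
  constructor
  · rcases le_total |t| M with h | h
    · rw [min_eq_left h]; exact le_trans (by simpa using neg_abs_le M) (abs_nonneg t)
    · rw [min_eq_right h]; exact neg_abs_le M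
  · exact le_trans (min_le_right _ _) (le_abs_self M)

lemma atruncFun_lipschitz (M a b : ℝ) : |atruncFun M a - atruncFun M b| ≤ |a - b| := by
  unfold atruncFun
  calc |min |a| M - min |b| M| ≤ max (|(|a|) - (|b|)|) (|M - M|) := abs_min_sub_min_le_max _ _ _ _
    _ ≤ |a - b| := by
        simpa using abs_abs_sub_abs_le_abs_sub a b

noncomputable def atruncBCF (M : ℝ) : BoundedContinuousFunction ℝ ℝ :=
  BoundedContinuousFunction.ofNormedAddCommGroup (atruncFun M)
    ((continuous_abs).min continuous_const) |M|
    (fun t => by simpa using atruncFun_abs_le_abs M t)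

@[simp] lemma atruncBCF_apply (M t : ℝ) : atruncBCF M t = atruncFun M t := rfl

/-- clamp error bounded by the power tail. -/
lemma clampFun_sub_self_le (M t η : ℝ) (hM : 0 < M) (hη : 0 < η) :
    |clampFun M t - t| ≤ |t| ^ (1 + η) / M ^ η := by
  rcases le_total |t| M with h | h
  · rw [clampFun_eq_self M t h]
    simp only [sub_self, abs_zero]
    positivity
  · have htpos : 0 < |t| := lt_of_lt_of_le hM h
    have h1 : |clampFun M t - t| ≤ |clampFun M t| + |t| := abs_sub _ _
    have h2 : |clampFun M t - t| ≤ |t| - M ∨ True := Or.inr trivial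
    -- show |clampFun M t - t| ≤ |t| and |t| ≤ |t|^(1+η)/M^η.
    have hc : |clampFun M t - t| ≤ |t| := by
      rcases le_total t 0 with ht | ht
      · have : clampFun M t = -M := by
          unfold clampFun
          rw [min_eq_left (by rw [abs_of_nonpos ht] at h; linarith), max_eq_left (by rw [abs_of_nonpos ht] at h; linarith)]
        rw [this, abs_of_nonpos ht] at *
        rw [abs_le]; constructor <;> linarith [abs_nonneg t]
      · have : clampFun M t = M := by
          unfold clampFun
          rw [min_eq_right (by rw [abs_of_nonneg ht] at h; linarith), max_eq_right (by linarith)]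
        rw [this, abs_of_nonneg ht] at *
        rw [abs_le]; constructor <;> linarith
    refine hc.trans ?_
    rw [le_div_iff₀ (by positivity)]
    calc |t| * M ^ η ≤ |t| * |t| ^ η := by
          gcongr
      _ = |t| ^ (1 + η) := by
          rw [Real.rpow_add htpos, Real.rpow_one]

/-- Taylor bound: for `|γ t| ≤ 1`, `|(e^{γ t}-1)/γ - t| ≤ γ K²` when `|t| ≤ K`. -/
lemma exp_div_approx (γ t K : ℝ) (hγ : 0 < γ) (ht : |t| ≤ K) (h1 : γ * K ≤ 1) :
    |(Real.exp (γ * t) - 1) / γ - t| ≤ γ * K ^ 2 := by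
  have hK : 0 ≤ K := le_trans (abs_nonneg t) ht
  have habs : |γ * t| ≤ 1 := by
    rw [abs_mul, abs_of_pos hγ]
    calc γ * |t| ≤ γ * K := by gcongr
      _ ≤ 1 := h1
  have := Real.abs_exp_sub_one_sub_id_le habs
  have heq : (Real.exp (γ * t) - 1) / γ - t = (Real.exp (γ * t) - 1 - γ * t) / γ := by
    field_simp
  rw [heq, abs_div, abs_of_pos hγ, div_le_iff₀ hγ]
  have ht2 : t ^ 2 ≤ K ^ 2 :=
    sq_le_sq' (by linarith [neg_abs_le t]) (abs_le.1 ht).2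
  calc |Real.exp (γ * t) - 1 - γ * t| ≤ (γ * t) ^ 2 := this
    _ ≤ γ * K ^ 2 * γ := by nlinarith [mul_nonneg (sq_nonneg γ) (sub_nonneg.2 ht2)]

/-- Tail comparison: if `|t| > K` then `|(e^{γ t}-1)/γ| ≥ K/2`. -/
lemma exp_div_tail (γ t K : ℝ) (hγ : 0 < γ) (hK : 0 < K) (h1 : γ * K ≤ 1) (ht : K < |t|) :
    K / 2 ≤ |(Real.exp (γ * t) - 1) / γ| := by
  rcases lt_abs.1 ht with h | h
  · -- K < t
    have h2 : γ * t + 1 ≤ Real.exp (γ * t) := Real.add_one_le_exp _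
    have hle : K ≤ (Real.exp (γ * t) - 1) / γ := by
      rw [le_div_iff₀ hγ]; nlinarith
    calc K / 2 ≤ K := by linarith
      _ ≤ _ := hle.trans (le_abs_self _)
  · -- t < -K
    have hlt : γ * t ≤ -(γ * K) := by nlinarith
    have he1 : Real.exp (γ * t) ≤ Real.exp (-(γ * K)) := Real.exp_le_exp.2 hlt
    have hpos : (0:ℝ) < 1 + γ * K := by positivity
    have he2 : Real.exp (-(γ * K)) ≤ 1 / (1 + γ * K) := by
      rw [Real.exp_neg, ← one_div]
      apply one_div_le_one_div_of_le hpos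
      linarith [Real.add_one_le_exp (γ * K)]
    have he3 : 1 / (1 + γ * K) ≤ 1 - γ * K / 2 := by
      rw [div_le_iff₀ hpos]
      nlinarith [mul_nonneg (mul_pos hγ hK).le (sub_nonneg.2 h1)]
    have hexp1 : Real.exp (γ * t) ≤ 1 - γ * K / 2 := le_trans he1 (le_trans he2 he3)
    have habs : |(Real.exp (γ * t) - 1) / γ| = (1 - Real.exp (γ * t)) / γ := by
      rw [abs_div, abs_of_pos hγ, abs_of_nonpos (by nlinarith)]
      ring
    rw [habs, le_div_iff₀ hγ]
    nlinarith

set_option maxHeartbeats 1000000 in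
/-- **Typical deviations: the small-time limit `Y` is centered.**
For each `n`, the law of `X_n` is the probability measure `μ n` on `ℝ`, and `ν` is the law
of `Y`. Convergence in distribution of `X_n/γ_n` to `Y` is expressed by convergence of
integrals of bounded continuous functions. If `E_n[e^{X_n}] = 1` for every `n` and
`limsup_n E_n[|(e^{X_n}-1)/γ_n|^{1+η}] < ∞` for some `η > 0`, then `Y` is integrable and
`E[Y] = 0`. -/
theorem typical_deviations_centered_limit
    (μ : ℕ → Measure ℝ) (hprob : ∀ n, IsProbabilityMeasure (μ n))
    (γ : ℕ → ℝ) (hγ : ∀ n, 0 < γ n) (hγ0 : Tendsto γ atTop (𝓝 0))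
    (ν : Measure ℝ) (hν : IsProbabilityMeasure ν)
    (hconv : ∀ f : BoundedContinuousFunction ℝ ℝ,
      Tendsto (fun n => ∫ x, f (x / γ n) ∂(μ n)) atTop (𝓝 (∫ y, f y ∂ν)))
    (hmart : ∀ n, ∫ x, Real.exp x ∂(μ n) = 1)
    (η : ℝ) (hη : 0 < η)
    (hmom : limsup
        (fun n => ∫⁻ x, ENNReal.ofReal (|(Real.exp x - 1) / γ n| ^ (1+η)) ∂(μ n)) atTop < ⊤) :
    Integrable (fun y : ℝ => y) ν ∧ ∫ y, y ∂ν = 0 := by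
  have h1η : (0:ℝ) < 1 + η := by linarith
  -- measurability of Z n = (exp - 1)/γ n
  have hZmeas : ∀ n, Measurable (fun x : ℝ => (Real.exp x - 1) / γ n) := fun n =>
    (Real.measurable_exp.sub measurable_const).div_const _
  have hpmeas : ∀ n, Measurable (fun x : ℝ => |(Real.exp x - 1) / γ n| ^ (1+η)) := fun n =>
    (Real.continuous_rpow_const h1η.le).measurable.comp (hZmeas n).abs
  -- integrability of exp and Z
  have hexpint : ∀ n, Integrable Real.exp (μ n) := by
    intro n
    by_contra h
    have := hmart n
    rw [integral_undef h] at this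
    norm_num at this
  have hZint : ∀ n, Integrable (fun x : ℝ => (Real.exp x - 1) / γ n) (μ n) := fun n =>
    ((hexpint n).sub (integrable_const 1)).div_const _
  have hZzero : ∀ n, ∫ x, (Real.exp x - 1) / γ n ∂(μ n) = 0 := by
    intro n
    rw [integral_div, integral_sub (hexpint n) (integrable_const 1), hmart n, integral_const]
    simp
  -- the uniform moment bound constant
  obtain ⟨b, hb1, hb2⟩ := exists_between hmom
  set C : ℝ := b.toReal with hCdef
  have hC0 : 0 ≤ C := ENNReal.toReal_nonneg
  have hbC : b = ENNReal.ofReal C := (ENNReal.ofReal_toReal hb2.ne).symm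
  obtain ⟨N, hN⟩ := eventually_atTop.1 (eventually_lt_of_limsup_lt hb1)
  have hCb : ∀ n ≥ N, ∫⁻ x, ENNReal.ofReal (|(Real.exp x - 1) / γ n| ^ (1+η)) ∂(μ n)
      ≤ ENNReal.ofReal C := fun n hn => hbC ▸ (hN n hn).le
  -- integrability and integral bound for the power
  have hpint : ∀ n ≥ N, Integrable (fun x => |(Real.exp x - 1) / γ n| ^ (1+η)) (μ n) := by
    intro n hn
    refine ⟨(hpmeas n).aestronglyMeasurable, ?_⟩
    rw [hasFiniteIntegral_iff_ofReal (Eventually.of_forall fun x => by positivity)]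
    exact lt_of_le_of_lt (hCb n hn) ENNReal.ofReal_lt_top
  have hpval : ∀ n ≥ N, ∫ x, |(Real.exp x - 1) / γ n| ^ (1+η) ∂(μ n) ≤ C := by
    intro n hn
    rw [integral_eq_lintegral_of_nonneg_ae (Eventually.of_forall fun x => by positivity)
      (hpmeas n).aestronglyMeasurable]
    calc (∫⁻ x, ENNReal.ofReal (|(Real.exp x - 1) / γ n| ^ (1+η)) ∂(μ n)).toReal
        ≤ (ENNReal.ofReal C).toReal :=
          ENNReal.toReal_mono ENNReal.ofReal_ne_top (hCb n hn)
      _ = C := ENNReal.toReal_ofReal hC0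
  -- Markov inequality
  have hmarkov : ∀ n ≥ N, ∀ a : ℝ, 0 < a →
      (μ n {x | a ≤ |(Real.exp x - 1) / γ n|}).toReal ≤ C / a ^ (1+η) := by
    intro n hn a ha
    have h1 := mul_meas_ge_le_integral_of_nonneg (μ := μ n)
      (f := fun x => |(Real.exp x - 1) / γ n| ^ (1+η))
      (Eventually.of_forall fun x => by positivity) (hpint n hn) (a ^ (1+η))
    have hsub : {x : ℝ | a ≤ |(Real.exp x - 1) / γ n|}
        ⊆ {x : ℝ | a ^ (1+η) ≤ |(Real.exp x - 1) / γ n| ^ (1+η)} :=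
      fun x hx => Real.rpow_le_rpow ha.le hx h1η.le
    have hmono := ENNReal.toReal_mono (measure_ne_top (μ n) _) (measure_mono hsub)
    rw [le_div_iff₀ (by positivity)]
    calc (μ n {x | a ≤ |(Real.exp x - 1) / γ n|}).toReal * a ^ (1+η)
        ≤ (μ n {x | a ^ (1+η) ≤ |(Real.exp x - 1) / γ n| ^ (1+η)}).toReal * a ^ (1+η) := by
          gcongr
      _ = a ^ (1+η) * (μ n {x | a ^ (1+η) ≤ |(Real.exp x - 1) / γ n| ^ (1+η)}).toReal :=
          mul_comm _ _
      _ ≤ ∫ x, |(Real.exp x - 1) / γ n| ^ (1+η) ∂(μ n) := h1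
      _ ≤ C := hpval n hn
  -- first moment bound
  have habs : ∀ n ≥ N, ∫ x, |(Real.exp x - 1) / γ n| ∂(μ n) ≤ 1 + C := by
    intro n hn
    have hptw : ∀ x : ℝ, |(Real.exp x - 1) / γ n| ≤ 1 + |(Real.exp x - 1) / γ n| ^ (1+η) := by
      intro x
      set z := |(Real.exp x - 1) / γ n| with hz
      have hz0 : 0 ≤ z := abs_nonneg _
      rcases le_total z 1 with h | h
      · have : (0:ℝ) ≤ z ^ (1+η) := by positivity
        linarith
      · calc z = z ^ (1:ℝ) := (Real.rpow_one z).symm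
          _ ≤ z ^ (1+η) := Real.rpow_le_rpow_of_exponent_le h (by linarith)
          _ ≤ 1 + z ^ (1+η) := by linarith
    calc ∫ x, |(Real.exp x - 1) / γ n| ∂(μ n)
        ≤ ∫ x, (1 + |(Real.exp x - 1) / γ n| ^ (1+η)) ∂(μ n) :=
          integral_mono (hZint n).abs ((integrable_const 1).add (hpint n hn)) hptw
      _ = 1 + ∫ x, |(Real.exp x - 1) / γ n| ^ (1+η) ∂(μ n) := by
          rw [integral_add (integrable_const 1) (hpint n hn), integral_const]
          simp
      _ ≤ 1 + C := by linarith [hpval n hn]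
  -- the bad set has small measure
  have hSmeas : ∀ n, ∀ K : ℝ, MeasurableSet {x : ℝ | K < |x / γ n|} := fun n K =>
    measurableSet_lt measurable_const (measurable_id.div_const _).abs
  have hSbound : ∀ K ≥ (1:ℝ), ∀ n ≥ N, γ n * K ≤ 1 →
      (μ n {x | K < |x / γ n|}).toReal ≤ C / (K/2) ^ (1+η) := by
    intro K hK n hn hγK
    have hsub : {x : ℝ | K < |x / γ n|} ⊆ {x : ℝ | K/2 ≤ |(Real.exp x - 1) / γ n|} := by
      intro x hx
      have hx' : γ n * (x / γ n) = x := by rw [mul_comm]; exact div_mul_cancel₀ x (hγ n).ne'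
      have := exp_div_tail (γ n) (x / γ n) K (hγ n) (by linarith) hγK hx
      rwa [hx'] at this
    exact le_trans (ENNReal.toReal_mono (measure_ne_top (μ n) _) (measure_mono hsub))
      (hmarkov n hn (K/2) (by linarith))
  -- integrability of the clamped/truncated pull-backs
  have hclampint : ∀ n, ∀ M : ℝ, Integrable (fun x => clampFun M (x / γ n)) (μ n) := by
    intro n M
    refine ⟨(((continuous_const.max (continuous_id.min continuous_const)).measurable).comp
      (measurable_id.div_const _)).aestronglyMeasurable, ?_⟩
    exact HasFiniteIntegral.of_bounded (μ := μ n) (C := |M|)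
      (Eventually.of_forall fun x => by simpa using clampFun_abs_le_abs M (x / γ n))
  have hatruncint : ∀ n, ∀ M : ℝ, Integrable (fun x => atruncFun M (x / γ n)) (μ n) := by
    intro n M
    refine ⟨(((continuous_abs.min continuous_const).measurable).comp
      (measurable_id.div_const _)).aestronglyMeasurable, ?_⟩
    exact HasFiniteIntegral.of_bounded (μ := μ n) (C := |M|)
      (Eventually.of_forall fun x => by simpa using atruncFun_abs_le_abs M (x / γ n))
  -- core eventual estimate for the clamp
  have hclamp_est : ∀ M : ℝ, 0 < M → ∀ K : ℝ, 1 ≤ K → ∀ᶠ n in atTop,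
      |∫ x, clampFun M (x / γ n) ∂(μ n)|
        ≤ γ n * K ^ 2 + (2 * M * (C / (K/2) ^ (1+η)) + C / M ^ η) := by
    intro M hM K hK
    have hKpos : (0:ℝ) < K := by linarith
    filter_upwards [eventually_ge_atTop N,
      hγ0.eventually_lt_const (show (0:ℝ) < 1/K by positivity)] with n hn hγn
    have hγK : γ n * K ≤ 1 := by
      have h := mul_le_mul_of_nonneg_right hγn.le hKpos.le
      rwa [div_mul_cancel₀ 1 hKpos.ne'] at h
    -- pointwise bound
    have hptw : ∀ x : ℝ, |clampFun M (x / γ n) - (Real.exp x - 1) / γ n|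
        ≤ γ n * K ^ 2 + (Set.indicator {x : ℝ | K < |x / γ n|} (fun _ => 2*M) x
          + |(Real.exp x - 1) / γ n| ^ (1+η) / M ^ η) := by
      intro x
      have hx' : γ n * (x / γ n) = x := by rw [mul_comm]; exact div_mul_cancel₀ x (hγ n).ne'
      have h2 : |clampFun M ((Real.exp x - 1) / γ n) - (Real.exp x - 1) / γ n|
          ≤ |(Real.exp x - 1) / γ n| ^ (1+η) / M ^ η := clampFun_sub_self_le M _ η hM hη
      have htri : |clampFun M (x / γ n) - (Real.exp x - 1) / γ n|
          ≤ |clampFun M (x / γ n) - clampFun M ((Real.exp x - 1) / γ n)|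
            + |clampFun M ((Real.exp x - 1) / γ n) - (Real.exp x - 1) / γ n| := by
        have := abs_sub_le (clampFun M (x / γ n)) (clampFun M ((Real.exp x - 1) / γ n))
          ((Real.exp x - 1) / γ n)
        linarith
      by_cases hx : K < |x / γ n|
      · have h3 : |clampFun M (x / γ n) - clampFun M ((Real.exp x - 1) / γ n)| ≤ 2 * M := by
          have a1 := clampFun_abs_le M (x / γ n) hM.le
          have a2 := clampFun_abs_le M ((Real.exp x - 1) / γ n) hM.le
          have := abs_sub (clampFun M (x / γ n)) (clampFun M ((Real.exp x - 1) / γ n))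
          linarith
        rw [Set.indicator_of_mem (show x ∈ {x : ℝ | K < |x / γ n|} from hx)]
        have hγK2 : 0 ≤ γ n * K ^ 2 := mul_nonneg (hγ n).le (by positivity)
        linarith
      · push_neg at hx
        have h3 : |clampFun M (x / γ n) - clampFun M ((Real.exp x - 1) / γ n)|
            ≤ γ n * K ^ 2 := by
          refine le_trans (clampFun_lipschitz M _ _) ?_
          have := exp_div_approx (γ n) (x / γ n) K (hγ n) hx hγK
          rw [hx'] at this
          rw [abs_sub_comm]
          exact this
        rw [Set.indicator_of_notMem (show x ∉ {x : ℝ | K < |x / γ n|} by simpa using hx)]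
        simp only [add_zero, zero_add]
        have h4 : (0:ℝ) ≤ |(Real.exp x - 1) / γ n| ^ (1+η) / M ^ η := by positivity
        linarith
    -- integrate
    have hint1 : Integrable (fun x : ℝ =>
        clampFun M (x / γ n) - (Real.exp x - 1) / γ n) (μ n) := (hclampint n M).sub (hZint n)
    have hint2 : Integrable (fun x : ℝ => γ n * K ^ 2
        + (Set.indicator {x : ℝ | K < |x / γ n|} (fun _ => 2*M) x
          + |(Real.exp x - 1) / γ n| ^ (1+η) / M ^ η)) (μ n) :=
      (integrable_const _).add (((integrable_const (2*M)).indicator (hSmeas n K)).add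
        ((hpint n hn).div_const _))
    calc |∫ x, clampFun M (x / γ n) ∂(μ n)|
        = |∫ x, (clampFun M (x / γ n) - (Real.exp x - 1) / γ n) ∂(μ n)| := by
          rw [integral_sub (hclampint n M) (hZint n), hZzero n, sub_zero]
      _ ≤ ∫ x, |clampFun M (x / γ n) - (Real.exp x - 1) / γ n| ∂(μ n) := by
          simpa [Real.norm_eq_abs] using norm_integral_le_integral_norm
            (μ := μ n) (fun x : ℝ => clampFun M (x / γ n) - (Real.exp x - 1) / γ n)
      _ ≤ ∫ x, (γ n * K ^ 2 + (Set.indicator {x : ℝ | K < |x / γ n|} (fun _ => 2*M) x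
          + |(Real.exp x - 1) / γ n| ^ (1+η) / M ^ η)) ∂(μ n) :=
          integral_mono hint1.abs hint2 hptw
      _ ≤ γ n * K ^ 2 + (2 * M * (C / (K/2) ^ (1+η)) + C / M ^ η) := by
          have hiB : Integrable (fun x : ℝ =>
              Set.indicator {x : ℝ | K < |x / γ n|} (fun _ => 2*M) x) (μ n) := by
            exact (integrable_const (2*M)).indicator (hSmeas n K)
          have hiC : Integrable (fun x : ℝ =>
              |(Real.exp x - 1) / γ n| ^ (1+η) / M ^ η) (μ n) := (hpint n hn).div_const _
          have hiBC : Integrable (fun x : ℝ =>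
              Set.indicator {x : ℝ | K < |x / γ n|} (fun _ => 2*M) x
                + |(Real.exp x - 1) / γ n| ^ (1+η) / M ^ η) (μ n) := by
            exact hiB.add hiC
          rw [integral_add (integrable_const _) hiBC, integral_add hiB hiC,
            integral_indicator_const _ (hSmeas n K), integral_const, integral_div]
          have e1 : (μ n Set.univ).toReal = 1 := by simp
          have e2 := hSbound K hK n hn hγK
          have e3 : ∫ x, |(Real.exp x - 1) / γ n| ^ (1+η) ∂(μ n) ≤ C := hpval n hn
          have e4 : (0:ℝ) < M ^ η := by positivity
          have e5 : (0:ℝ) ≤ (μ n {x | K < |x / γ n|}).toReal := ENNReal.toReal_nonneg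
          simp only [measureReal_def]
          rw [e1]
          simp only [smul_eq_mul, one_mul]
          have e6 : (μ n {x | K < |x / γ n|}).toReal * (2 * M)
              ≤ (C / (K/2) ^ (1+η)) * (2 * M) :=
            mul_le_mul_of_nonneg_right e2 (by linarith)
          have e7 : (∫ a, |(Real.exp a - 1) / γ n| ^ (1+η) ∂(μ n)) / M ^ η ≤ C / M ^ η :=
            (div_le_div_iff_of_pos_right e4).2 e3
          nlinarith [e6, e7]
  -- core eventual estimate for the truncated absolute value
  have hatrunc_est : ∀ M : ℝ, 0 < M → ∀ K : ℝ, 1 ≤ K → ∀ᶠ n in atTop,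
      ∫ x, atruncFun M (x / γ n) ∂(μ n)
        ≤ (1 + C) + (γ n * K ^ 2 + 2 * M * (C / (K/2) ^ (1+η))) := by
    intro M hM K hK
    have hKpos : (0:ℝ) < K := by linarith
    filter_upwards [eventually_ge_atTop N,
      hγ0.eventually_lt_const (show (0:ℝ) < 1/K by positivity)] with n hn hγn
    have hγK : γ n * K ≤ 1 := by
      have h := mul_le_mul_of_nonneg_right hγn.le hKpos.le
      rwa [div_mul_cancel₀ 1 hKpos.ne'] at h
    have hptw : ∀ x : ℝ, atruncFun M (x / γ n)
        ≤ |(Real.exp x - 1) / γ n| + (γ n * K ^ 2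
          + Set.indicator {x : ℝ | K < |x / γ n|} (fun _ => 2*M) x) := by
      intro x
      have hx' : γ n * (x / γ n) = x := by rw [mul_comm]; exact div_mul_cancel₀ x (hγ n).ne'
      have h0 : atruncFun M ((Real.exp x - 1) / γ n) ≤ |(Real.exp x - 1) / γ n| :=
        min_le_left _ _
      by_cases hx : K < |x / γ n|
      · have h3 : |atruncFun M (x / γ n) - atruncFun M ((Real.exp x - 1) / γ n)| ≤ 2 * M := by
          have a1 : |atruncFun M (x / γ n)| ≤ M := by
            simpa [abs_of_nonneg hM.le] using atruncFun_abs_le_abs M (x / γ n)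
          have a2 : |atruncFun M ((Real.exp x - 1) / γ n)| ≤ M := by
            simpa [abs_of_nonneg hM.le] using atruncFun_abs_le_abs M ((Real.exp x - 1) / γ n)
          have := abs_sub (atruncFun M (x / γ n)) (atruncFun M ((Real.exp x - 1) / γ n))
          linarith
        rw [Set.indicator_of_mem (show x ∈ {x : ℝ | K < |x / γ n|} from hx)]
        have hγK2 : 0 ≤ γ n * K ^ 2 := mul_nonneg (hγ n).le (by positivity)
        have := abs_le.1 h3
        linarith
      · push_neg at hx
        have h3 : |atruncFun M (x / γ n) - atruncFun M ((Real.exp x - 1) / γ n)|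
            ≤ γ n * K ^ 2 := by
          refine le_trans (atruncFun_lipschitz M _ _) ?_
          have := exp_div_approx (γ n) (x / γ n) K (hγ n) hx hγK
          rw [hx'] at this
          rw [abs_sub_comm]
          exact this
        rw [Set.indicator_of_notMem (show x ∉ {x : ℝ | K < |x / γ n|} by simpa using hx)]
        have := abs_le.1 h3
        linarith
    have hint2 : Integrable (fun x : ℝ => |(Real.exp x - 1) / γ n| + (γ n * K ^ 2
        + Set.indicator {x : ℝ | K < |x / γ n|} (fun _ => 2*M) x)) (μ n) :=
      (hZint n).abs.add ((integrable_const _).add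
        ((integrable_const (2*M)).indicator (hSmeas n K)))
    calc ∫ x, atruncFun M (x / γ n) ∂(μ n)
        ≤ ∫ x, (|(Real.exp x - 1) / γ n| + (γ n * K ^ 2
          + Set.indicator {x : ℝ | K < |x / γ n|} (fun _ => 2*M) x)) ∂(μ n) :=
          integral_mono (hatruncint n M) hint2 hptw
      _ ≤ (1 + C) + (γ n * K ^ 2 + 2 * M * (C / (K/2) ^ (1+η))) := by
          have hiA : Integrable (fun x : ℝ => |(Real.exp x - 1) / γ n|) (μ n) := (hZint n).abs
          have hiB : Integrable (fun x : ℝ =>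
              Set.indicator {x : ℝ | K < |x / γ n|} (fun _ => 2*M) x) (μ n) := by
            exact (integrable_const (2*M)).indicator (hSmeas n K)
          have hiBC : Integrable (fun x : ℝ => γ n * K ^ 2
              + Set.indicator {x : ℝ | K < |x / γ n|} (fun _ => 2*M) x) (μ n) := by
            exact (integrable_const _).add hiB
          rw [integral_add hiA hiBC, integral_add (integrable_const _) hiB,
            integral_indicator_const _ (hSmeas n K), integral_const]
          have e1 : (μ n Set.univ).toReal = 1 := by simp
          have e2 := hSbound K hK n hn hγK
          have e5 : (0:ℝ) ≤ (μ n {x | K < |x / γ n|}).toReal := ENNReal.toReal_nonneg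
          have e6 : (μ n {x | K < |x / γ n|}).toReal * (2 * M)
              ≤ (C / (K/2) ^ (1+η)) * (2 * M) :=
            mul_le_mul_of_nonneg_right e2 (by linarith)
          have e8 := habs n hn
          simp only [measureReal_def]
          rw [e1]
          simp only [smul_eq_mul, one_mul]
          nlinarith [e6]
  -- limit of the error term in K
  have hKtend : Tendsto (fun j : ℕ => C / ((((j:ℝ)+1))/2) ^ (1+η)) atTop (𝓝 0) := by
    apply Tendsto.div_atTop tendsto_const_nhds
    apply (tendsto_rpow_atTop h1η).comp
    exact (tendsto_atTop_add_const_right atTop 1 tendsto_natCast_atTop_atTop).atTop_div_const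
      (by norm_num)
  -- key bound on ∫ clampFun M dν
  have hkey : ∀ M : ℝ, 0 < M → |∫ y, clampFun M y ∂ν| ≤ C / M ^ η := by
    intro M hM
    have hKstep : ∀ K : ℝ, 1 ≤ K →
        |∫ y, clampFun M y ∂ν| ≤ 2 * M * (C / (K/2) ^ (1+η)) + C / M ^ η := by
      intro K hK
      have htendL : Tendsto (fun n => |∫ x, clampFun M (x / γ n) ∂(μ n)|) atTop
          (𝓝 |∫ y, clampFun M y ∂ν|) := by
        have := hconv (clampBCF M)
        simp only [clampBCF_apply] at this
        exact this.abs
      have htendR : Tendsto (fun n => γ n * K ^ 2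
          + (2 * M * (C / (K/2) ^ (1+η)) + C / M ^ η)) atTop
          (𝓝 (0 * K ^ 2 + (2 * M * (C / (K/2) ^ (1+η)) + C / M ^ η))) :=
        Tendsto.add_const _ (hγ0.mul_const _)
      have := le_of_tendsto_of_tendsto htendL htendR (hclamp_est M hM K hK)
      simpa using this
    have htendc : Tendsto (fun _ : ℕ => |∫ y, clampFun M y ∂ν|) atTop
        (𝓝 |∫ y, clampFun M y ∂ν|) := tendsto_const_nhds
    have htendR : Tendsto (fun j : ℕ => 2 * M * (C / ((((j:ℝ)+1))/2) ^ (1+η)) + C / M ^ η)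
        atTop (𝓝 (2 * M * 0 + C / M ^ η)) :=
      Tendsto.add_const _ (hKtend.const_mul _)
    have := le_of_tendsto_of_tendsto htendc htendR
      (Eventually.of_forall fun j => hKstep ((j:ℝ)+1) (by push_cast; linarith [Nat.cast_nonneg (α := ℝ) j]))
    simpa using this
  -- key bound on ∫ atruncFun M dν
  have hkey2 : ∀ M : ℝ, 0 < M → ∫ y, atruncFun M y ∂ν ≤ 1 + C := by
    intro M hM
    have hKstep : ∀ K : ℝ, 1 ≤ K →
        ∫ y, atruncFun M y ∂ν ≤ (1 + C) + 2 * M * (C / (K/2) ^ (1+η)) := by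
      intro K hK
      have htendL : Tendsto (fun n => ∫ x, atruncFun M (x / γ n) ∂(μ n)) atTop
          (𝓝 (∫ y, atruncFun M y ∂ν)) := by
        have := hconv (atruncBCF M)
        simpa only [atruncBCF_apply] using this
      have htendR : Tendsto (fun n => (1 + C) + (γ n * K ^ 2
          + 2 * M * (C / (K/2) ^ (1+η)))) atTop
          (𝓝 ((1 + C) + (0 * K ^ 2 + 2 * M * (C / (K/2) ^ (1+η))))) :=
        Tendsto.const_add _ (Tendsto.add_const _ (hγ0.mul_const _))
      have := le_of_tendsto_of_tendsto htendL htendR (hatrunc_est M hM K hK)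
      simpa using this
    have htendc : Tendsto (fun _ : ℕ => ∫ y, atruncFun M y ∂ν) atTop
        (𝓝 (∫ y, atruncFun M y ∂ν)) := tendsto_const_nhds
    have htendR : Tendsto (fun j : ℕ => (1 + C) + 2 * M * (C / ((((j:ℝ)+1))/2) ^ (1+η)))
        atTop (𝓝 ((1 + C) + 2 * M * 0)) :=
      Tendsto.const_add _ (hKtend.const_mul _)
    have := le_of_tendsto_of_tendsto htendc htendR
      (Eventually.of_forall fun j => hKstep ((j:ℝ)+1) (by push_cast; linarith [Nat.cast_nonneg (α := ℝ) j]))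
    simpa using this
  -- integrability of Y
  have hatruncBCFint : ∀ M : ℝ, Integrable (fun y => atruncFun M y) ν := by
    intro M
    have := (atruncBCF M).integrable ν
    exact this
  have hint : Integrable (fun y : ℝ => y) ν := by
    refine ⟨measurable_id.aestronglyMeasurable, ?_⟩
    have hfin : ∫⁻ y, ENNReal.ofReal |y| ∂ν ≤ ENNReal.ofReal (1 + C) := by
      have hmc : Tendsto (fun m : ℕ => ∫⁻ y, ENNReal.ofReal (atruncFun ((m:ℝ)+1) y) ∂ν)
          atTop (𝓝 (∫⁻ y, ENNReal.ofReal |y| ∂ν)) := by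
        apply lintegral_tendsto_of_tendsto_of_monotone
        · exact fun m => ((continuous_abs.min continuous_const).measurable.ennreal_ofReal).aemeasurable
        · refine Eventually.of_forall fun y => ?_
          intro m m' hmm'
          apply ENNReal.ofReal_le_ofReal
          unfold atruncFun
          have : ((m:ℝ)+1) ≤ ((m':ℝ)+1) := by
            have := Nat.cast_le (α := ℝ).2 hmm'
            linarith
          exact min_le_min le_rfl this
        · refine Eventually.of_forall fun y => ?_
          apply tendsto_atTop_of_eventually_const (i₀ := ⌈|y|⌉₊)
          intro m hm
          congr 1
          unfold atruncFun
          apply min_eq_left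
          calc |y| ≤ (⌈|y|⌉₊ : ℝ) := Nat.le_ceil _
            _ ≤ (m:ℝ) := Nat.cast_le.2 hm
            _ ≤ (m:ℝ)+1 := by linarith
      refine le_of_tendsto hmc (Eventually.of_forall fun m => ?_)
      have hMpos : (0:ℝ) < (m:ℝ)+1 := by positivity
      have hintM : Integrable (fun y => atruncFun ((m:ℝ)+1) y) ν := hatruncBCFint _
      rw [← ofReal_integral_eq_lintegral_ofReal hintM (Eventually.of_forall fun y => by
        unfold atruncFun
        exact le_min (abs_nonneg y) hMpos.le)]
      exact ENNReal.ofReal_le_ofReal (hkey2 _ hMpos)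
    rw [hasFiniteIntegral_iff_norm]
    calc ∫⁻ y, ENNReal.ofReal ‖(fun y : ℝ => y) y‖ ∂ν
        = ∫⁻ y, ENNReal.ofReal |y| ∂ν := by
          simp only [Real.norm_eq_abs]
      _ ≤ ENNReal.ofReal (1 + C) := hfin
      _ < ⊤ := ENNReal.ofReal_lt_top
  -- conclusion
  have hclampνint : ∀ M : ℝ, Integrable (fun y => clampFun M y) ν := by
    intro M
    have := (clampBCF M).integrable ν
    exact this
  have htend1 : Tendsto (fun m : ℕ => ∫ y, clampFun ((m:ℝ)+1) y ∂ν) atTop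
      (𝓝 (∫ y, y ∂ν)) := by
    apply tendsto_integral_of_dominated_convergence (fun y => |y|)
      (fun m => (hclampνint ((m:ℝ)+1)).aestronglyMeasurable) hint.abs
    · intro m
      refine Eventually.of_forall fun y => ?_
      rw [Real.norm_eq_abs]
      rcases le_total |y| ((m:ℝ)+1) with h | h
      · rw [clampFun_eq_self _ _ h]
      · calc |clampFun ((m:ℝ)+1) y| ≤ (m:ℝ)+1 := clampFun_abs_le _ _ (by positivity)
          _ ≤ |y| := h
    · refine Eventually.of_forall fun y => ?_
      apply tendsto_atTop_of_eventually_const (i₀ := ⌈|y|⌉₊)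
      intro m hm
      apply clampFun_eq_self
      calc |y| ≤ (⌈|y|⌉₊ : ℝ) := Nat.le_ceil _
        _ ≤ (m:ℝ) := Nat.cast_le.2 hm
        _ ≤ (m:ℝ)+1 := by linarith
  have hMtend : Tendsto (fun m : ℕ => C / ((m:ℝ)+1) ^ η) atTop (𝓝 0) := by
    apply Tendsto.div_atTop tendsto_const_nhds
    apply (tendsto_rpow_atTop hη).comp
    exact tendsto_atTop_add_const_right atTop 1 tendsto_natCast_atTop_atTop
  have htend2 : Tendsto (fun m : ℕ => ∫ y, clampFun ((m:ℝ)+1) y ∂ν) atTop (𝓝 0) := by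
    apply tendsto_of_tendsto_of_tendsto_of_le_of_le (g := fun m : ℕ => -(C / ((m:ℝ)+1) ^ η))
      (h := fun m : ℕ => C / ((m:ℝ)+1) ^ η) (by simpa using hMtend.neg) hMtend
    · intro m
      have := hkey ((m:ℝ)+1) (by positivity)
      linarith [(abs_le.1 this).1]
    · intro m
      have := hkey ((m:ℝ)+1) (by positivity)
      linarith [(abs_le.1 this).2]
  exact ⟨hint, tendsto_nhds_unique htend1 htend2⟩
end

section
/- Let (X_n) be a sequence of real random variables and (γ_n) a sequence of positive reals with γ_n → 0, such that X_n/γ_n converges in distribution to a real random variable Y. Assume E_n[e^{X_n}] = 1 for every n and that there exists η > 0 with limsup_n E_n[|(e^{X_n} − 1)/γ_n|^{1+η}] < ∞. Let (κ_n) be a sequence with κ_n ≥ 0 and κ_n/γ_n → a for some a ∈ [0,∞). Then E_n[(e^{X_n} − e^{κ_n})^+]/γ_n → E[(Y − a)^+] and E_n[(e^{−κ_n} − e^{X_n})^+]/γ_n → E[(Y + a)^−] as n → ∞, where x^− := max(−x, 0). -/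
open MeasureTheory Filter Topology
open scoped ENNReal NNReal


lemma aux_exp1 (x : ℝ) : |Real.exp x - 1 - x| ≤ |x| * |Real.exp x - 1| := by
  have h1 : x + 1 ≤ Real.exp x := Real.add_one_le_exp x
  have h2 : (-x) + 1 ≤ Real.exp (-x) := Real.add_one_le_exp (-x)
  have h3 : Real.exp (-x) * Real.exp x = 1 := by
    rw [← Real.exp_add]; simp
  have hpos := Real.exp_pos x
  rcases le_or_gt 0 x with hx | hx
  · have hs : (0:ℝ) ≤ Real.exp x - 1 := by nlinarith
    rw [abs_of_nonneg (by nlinarith), abs_of_nonneg hx, abs_of_nonneg hs]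
    nlinarith [mul_le_mul_of_nonneg_right h2 hpos.le]
  · have hs : Real.exp x - 1 ≤ 0 := by nlinarith [Real.exp_lt_one_iff.mpr hx]
    rw [abs_of_nonneg (by nlinarith), abs_of_neg hx, abs_of_nonpos hs]
    nlinarith [mul_le_mul_of_nonneg_right h2 hpos.le]

lemma aux_exp2 {δ x : ℝ} (hδ : 0 < δ) (hx : δ < |x|) :
    1 - Real.exp (-δ) ≤ |Real.exp x - 1| := by
  have h3 : Real.exp (-δ) * Real.exp δ = 1 := by rw [← Real.exp_add]; simp
  rcases le_or_gt 0 x with h | h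
  · rw [abs_of_nonneg h] at hx
    have : Real.exp δ ≤ Real.exp x := Real.exp_le_exp.mpr hx.le
    have h1 : (0:ℝ) ≤ Real.exp x - 1 := by nlinarith [Real.one_le_exp h]
    rw [abs_of_nonneg h1]
    nlinarith [sq_nonneg (Real.exp δ - 1), Real.exp_pos δ, Real.exp_pos (-δ)]
  · rw [abs_of_neg h] at hx
    have hxx : x < -δ := by linarith
    have : Real.exp x ≤ Real.exp (-δ) := Real.exp_le_exp.mpr hxx.le
    have h1 : Real.exp x - 1 ≤ 0 := by nlinarith [Real.exp_lt_one_iff.mpr h]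
    rw [abs_of_nonpos h1]
    linarith

lemma aux_le_rpow {t : ℝ} (ht : 0 ≤ t) {p : ℝ} (hp : 1 ≤ p) : t ≤ 1 + t ^ p := by
  rcases le_or_gt t 1 with h | h
  · have : (0:ℝ) ≤ t ^ p := Real.rpow_nonneg ht p
    linarith
  · have : t ^ (1:ℝ) ≤ t ^ p := Real.rpow_le_rpow_of_exponent_le h.le hp
    rw [Real.rpow_one] at this
    linarith [Real.rpow_nonneg ht p]

lemma moment_L1 (μ : Measure ℝ) [IsProbabilityMeasure μ] (g : ℝ → ℝ) {p : ℝ} (hp : 1 ≤ p) :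
    ∫⁻ x, ENNReal.ofReal |g x| ∂μ ≤ 1 + ∫⁻ x, ENNReal.ofReal (|g x| ^ p) ∂μ := by
  calc ∫⁻ x, ENNReal.ofReal |g x| ∂μ
      ≤ ∫⁻ x, (1 + ENNReal.ofReal (|g x| ^ p)) ∂μ := by
        apply lintegral_mono
        intro x
        have h1 : |g x| ≤ 1 + |g x| ^ p := by
          rcases le_or_gt (|g x|) 1 with h | h
          · have := Real.rpow_nonneg (abs_nonneg (g x)) p; linarith
          · have : |g x| ^ (1:ℝ) ≤ |g x| ^ p := Real.rpow_le_rpow_of_exponent_le h.le hp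
            rw [Real.rpow_one] at this
            linarith [Real.rpow_nonneg (abs_nonneg (g x)) p]
        calc ENNReal.ofReal |g x| ≤ ENNReal.ofReal (1 + |g x| ^ p) := ENNReal.ofReal_le_ofReal h1
          _ = ENNReal.ofReal 1 + ENNReal.ofReal (|g x| ^ p) :=
              ENNReal.ofReal_add zero_le_one (Real.rpow_nonneg (abs_nonneg _) _)
          _ = 1 + ENNReal.ofReal (|g x| ^ p) := by rw [ENNReal.ofReal_one]
    _ = 1 + ∫⁻ x, ENNReal.ofReal (|g x| ^ p) ∂μ := by
        rw [lintegral_add_left measurable_const, lintegral_const, one_mul, measure_univ]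

lemma tail_meas_le (μ : Measure ℝ) (g : ℝ → ℝ) (hg : Measurable g) {p : ℝ} (hp : 0 ≤ p)
    {s : ℝ} (hs : 0 ≤ s) (S : Set ℝ) (hS : MeasurableSet S)
    (hSsub : ∀ x ∈ S, 1 ≤ |g x| * s) :
    μ S ≤ (∫⁻ x, ENNReal.ofReal (|g x| ^ p) ∂μ) * ENNReal.ofReal (s ^ p) := by
  have : μ S = ∫⁻ x, S.indicator 1 x ∂μ := (lintegral_indicator_one hS).symm
  rw [this]
  calc ∫⁻ x, S.indicator 1 x ∂μ
      ≤ ∫⁻ x, ENNReal.ofReal ((|g x| * s) ^ p) ∂μ := by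
        apply lintegral_mono
        intro x
        by_cases hx : x ∈ S
        · simp only [Set.indicator_of_mem hx, Pi.one_apply]
          have h1 : (1:ℝ) ≤ (|g x| * s) ^ p := by
            calc (1:ℝ) = 1 ^ p := (Real.one_rpow p).symm
              _ ≤ (|g x| * s) ^ p := Real.rpow_le_rpow zero_le_one (hSsub x hx) hp
          exact ENNReal.one_le_ofReal.mpr h1
        · simp [Set.indicator_of_notMem hx]
    _ = (∫⁻ x, ENNReal.ofReal (|g x| ^ p) ∂μ) * ENNReal.ofReal (s ^ p) := by
        have hm : Measurable fun x => ENNReal.ofReal (|g x| ^ p) :=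
          (((Real.continuous_rpow_const hp).measurable.comp hg.abs).ennreal_ofReal)
        rw [← lintegral_mul_const _ hm]
        congr 1 with x
        show ENNReal.ofReal ((|g x| * s) ^ p) = ENNReal.ofReal (|g x| ^ p) * ENNReal.ofReal (s ^ p)
        rw [Real.mul_rpow (abs_nonneg _) hs, ENNReal.ofReal_mul (Real.rpow_nonneg (abs_nonneg _) _)]

lemma pt1 (v M : ℝ) (hM : 0 ≤ M) : |v - max (min v M) (-M)| ≤ max (|v| - M) 0 := by
  rcases le_total v M with h1 | h1
  · rcases le_total (-M) v with h2 | h2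
    · rw [min_eq_left h1, max_eq_left h2]
      simp only [sub_self, abs_zero]
      exact le_max_right _ _
    · rw [min_eq_left h1, max_eq_right h2]
      have hv : v ≤ 0 := by linarith
      rw [abs_of_nonpos (by linarith), abs_of_nonpos hv]
      refine le_trans ?_ (le_max_left _ _)
      linarith
  · rw [min_eq_right h1, max_eq_left (by linarith)]
    rw [abs_of_nonneg (by linarith), abs_of_nonneg (by linarith)]
    refine le_trans ?_ (le_max_left _ _)
    linarith

lemma pt3 {z M p : ℝ} (hz : 0 ≤ z) (hM : 0 < M) (hp : 1 < p) :
    max (z - M) 0 ≤ z ^ p / M ^ (p - 1) := by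
  have hMp : 0 < M ^ (p - 1) := Real.rpow_pos_of_pos hM _
  rcases le_or_gt z M with h | h
  · rw [max_eq_right (by linarith)]
    positivity
  · rw [max_eq_left (by linarith)]
    have hzpos : 0 < z := lt_trans hM h
    have hsplit : z ^ p = z * z ^ (p - 1) := by
      have h1 : z ^ p = z ^ ((1:ℝ) + (p - 1)) := by ring_nf
      rw [h1, Real.rpow_add hzpos, Real.rpow_one]
    have hmono : M ^ (p - 1) ≤ z ^ (p - 1) :=
      Real.rpow_le_rpow hM.le h.le (by linarith)
    rw [le_div_iff₀ hMp, hsplit]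
    nlinarith

lemma conv_Z
    (μ : ℕ → Measure ℝ) (hprob : ∀ n, IsProbabilityMeasure (μ n))
    (γ : ℕ → ℝ) (hγ : ∀ n, 0 < γ n) (hγ0 : Tendsto γ atTop (𝓝 0))
    (ν : Measure ℝ)
    (hconv : ∀ f : BoundedContinuousFunction ℝ ℝ,
      Tendsto (fun n => ∫ x, f (x / γ n) ∂(μ n)) atTop (𝓝 (∫ y, f y ∂ν)))
    (hexp : ∀ n, Integrable Real.exp (μ n))
    {p : ℝ} (hp : 1 < p)
    {C : ℝ≥0∞} (hCfin : C ≠ ⊤)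
    (hC : ∀ᶠ n in atTop, ∫⁻ x, ENNReal.ofReal (|(Real.exp x - 1)/γ n| ^ p) ∂(μ n) ≤ C)
    (f : BoundedContinuousFunction ℝ ℝ) (L : ℝ≥0) (hf : LipschitzWith L f) :
    Tendsto (fun n => ∫ x, f ((Real.exp x - 1) / γ n) ∂(μ n)) atTop (𝓝 (∫ y, f y ∂ν)) := by
  set Z : ℕ → ℝ → ℝ := fun n x => (Real.exp x - 1) / γ n with hZdef
  have hZmeas : ∀ n, Measurable (Z n) := fun n =>
    (Real.measurable_exp.sub measurable_const).div_const _
  have hZint : ∀ n, Integrable (Z n) (μ n) := fun n =>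
    ((hexp n).sub (integrable_const 1)).div_const _
  have hZabs : ∀ n x, |Z n x| = |Real.exp x - 1| / γ n := by
    intro n x
    rw [hZdef, abs_div, abs_of_pos (hγ n)]
  have hfg : ∀ (g : ℝ → ℝ), Measurable g → ∀ n, Integrable (fun x => f (g x)) (μ n) := by
    intro g hg n
    exact Integrable.mono' (integrable_const ‖f‖)
      (f.continuous.measurable.comp hg).aestronglyMeasurable
      (Filter.Eventually.of_forall fun x => f.norm_coe_le_norm _)
  -- eventual L¹ bound
  set C1 : ℝ := (1 + C).toReal + 1 with hC1def
  have hC1pos : 0 < C1 := by positivity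
  have hev1 : ∀ᶠ n in atTop, ∫ x, |Z n x| ∂(μ n) ≤ C1 := by
    filter_upwards [hC] with n hn
    have h1 : ∫ x, |Z n x| ∂(μ n) = (∫⁻ x, ENNReal.ofReal |Z n x| ∂(μ n)).toReal := by
      rw [integral_eq_lintegral_of_nonneg_ae (Filter.Eventually.of_forall fun x => abs_nonneg _)
        ((hZint n).abs.aestronglyMeasurable)]
    rw [h1]
    have h2 : ∫⁻ x, ENNReal.ofReal |Z n x| ∂(μ n) ≤ 1 + C :=
      le_trans (moment_L1 (μ n) (Z n) (le_of_lt hp)) (add_le_add_right hn 1)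
    have h3 := ENNReal.toReal_mono (ENNReal.add_ne_top.mpr ⟨ENNReal.one_ne_top, hCfin⟩) h2
    rw [hC1def]; linarith
  -- the difference tends to 0
  have hdiff : Tendsto
      (fun n => ∫ x, f (Z n x) ∂(μ n) - ∫ x, f (x / γ n) ∂(μ n)) atTop (𝓝 0) := by
    rw [Metric.tendsto_atTop]
    intro ε hε
    obtain ⟨δ, hδpos, hδ⟩ : ∃ δ : ℝ, 0 < δ ∧ (L : ℝ) * δ * C1 ≤ ε / 4 := by
      refine ⟨(ε/4) / (((L:ℝ) + 1) * C1), by positivity, ?_⟩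
      set d := (ε/4) / (((L:ℝ)+1) * C1) with hd
      have hdpos : 0 < d := by rw [hd]; positivity
      have key : ((L:ℝ)+1) * d * C1 = ε/4 := by rw [hd]; field_simp
      nlinarith [L.coe_nonneg, mul_pos hdpos hC1pos]
    set t : ℝ := 1 - Real.exp (-δ) with ht
    have htpos : 0 < t := by
      have : Real.exp (-δ) < 1 := Real.exp_lt_one_iff.mpr (by linarith)
      rw [ht]; linarith
    have hSm : MeasurableSet {x : ℝ | δ < |x|} :=
      measurableSet_lt measurable_const measurable_id.abs
    -- tail measure tends to zero
    have htail : Tendsto (fun n => ((μ n) {x | δ < |x|}).toReal) atTop (𝓝 0) := by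
      apply squeeze_zero' (Filter.Eventually.of_forall fun n => ENNReal.toReal_nonneg)
        (g := fun n => C.toReal * (γ n / t) ^ p)
      · filter_upwards [hC] with n hCn
        have hsub : ∀ x ∈ {x : ℝ | δ < |x|}, 1 ≤ |Z n x| * (γ n / t) := by
          intro x hx
          have h1 : t ≤ |Real.exp x - 1| := aux_exp2 hδpos hx
          rw [hZabs n x, div_mul_div_comm, le_div_iff₀ (mul_pos (hγ n) htpos)]
          calc 1 * (γ n * t) = t * γ n := by ring
            _ ≤ |Real.exp x - 1| * γ n := mul_le_mul_of_nonneg_right h1 (hγ n).le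
        have h4 := tail_meas_le (μ n) (Z n) (hZmeas n) (le_of_lt (lt_trans zero_lt_one hp))
          (div_nonneg (hγ n).le htpos.le) _ hSm hsub
        have hb : ((μ n) {x | δ < |x|}) ≤ C * ENNReal.ofReal ((γ n / t) ^ p) :=
          le_trans h4 (mul_le_mul_left hCn _)
        have hfin : C * ENNReal.ofReal ((γ n / t) ^ p) ≠ ⊤ :=
          ENNReal.mul_ne_top hCfin ENNReal.ofReal_ne_top
        calc ((μ n) {x | δ < |x|}).toReal ≤ (C * ENNReal.ofReal ((γ n / t) ^ p)).toReal :=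
              ENNReal.toReal_mono hfin hb
          _ = C.toReal * (γ n / t) ^ p := by
              rw [ENNReal.toReal_mul, ENNReal.toReal_ofReal
                (Real.rpow_nonneg (div_nonneg (hγ n).le htpos.le) p)]
      · have hg1 : Tendsto (fun n => (γ n / t) ^ p) atTop (𝓝 0) := by
          apply squeeze_zero' (g := fun n => γ n / t)
          · exact Filter.Eventually.of_forall fun n =>
              Real.rpow_nonneg (div_nonneg (hγ n).le htpos.le) p
          · filter_upwards [hγ0.eventually_le_const htpos] with n hn
            have hpos : 0 < γ n / t := div_pos (hγ n) htpos
            have h1 : γ n / t ≤ 1 := (div_le_one htpos).mpr hn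
            have h2 := Real.rpow_le_rpow_of_exponent_ge hpos h1 (le_of_lt hp)
            rwa [Real.rpow_one] at h2
          · simpa using hγ0.div_const t
        simpa using hg1.const_mul C.toReal
    have h2f : Tendsto (fun n => 2 * ‖f‖ * ((μ n) {x | δ < |x|}).toReal) atTop (𝓝 0) := by
      simpa using htail.const_mul (2 * ‖f‖)
    have hev2 : ∀ᶠ n in atTop,
        dist (∫ x, f (Z n x) ∂(μ n) - ∫ x, f (x / γ n) ∂(μ n)) 0 < ε := by
      filter_upwards [hev1, h2f.eventually_le_const (show (0:ℝ) < ε/4 by positivity)]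
        with n h1 h2
      have hint1 : Integrable (fun x => f (Z n x)) (μ n) := hfg (Z n) (hZmeas n) n
      have hint2 : Integrable (fun x => f (x / γ n)) (μ n) :=
        hfg (fun x => x / γ n) (measurable_id.div_const _) n
      rw [Real.dist_eq, sub_zero, ← integral_sub hint1 hint2]
      have hboundint : Integrable (fun x => (L:ℝ) * δ * |Z n x|
          + ({x : ℝ | δ < |x|}).indicator (fun _ => 2 * ‖f‖) x) (μ n) :=
        (((hZint n).abs.const_mul _).add ((integrable_const _).indicator hSm))
      have key : |∫ x, (f (Z n x) - f (x / γ n)) ∂(μ n)| ≤ (L:ℝ) * δ * C1 + ε/4 := by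
        calc |∫ x, (f (Z n x) - f (x / γ n)) ∂(μ n)|
            ≤ ∫ x, |f (Z n x) - f (x / γ n)| ∂(μ n) := by
              simpa [Real.norm_eq_abs] using
                norm_integral_le_integral_norm (μ := μ n) (fun x => f (Z n x) - f (x / γ n))
          _ ≤ ∫ x, ((L:ℝ) * δ * |Z n x|
              + ({x : ℝ | δ < |x|}).indicator (fun _ => 2 * ‖f‖) x) ∂(μ n) := by
              apply integral_mono (hint1.sub hint2).abs hboundint
              intro x
              simp only [Pi.sub_apply]
              rcases le_or_gt (|x|) δ with hx | hx
              · have hL : |f (Z n x) - f (x / γ n)| ≤ (L:ℝ) * |Z n x - x / γ n| := by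
                  have h5 := hf.dist_le_mul (Z n x) (x / γ n)
                  rwa [Real.dist_eq, Real.dist_eq] at h5
                have h3 : |Z n x - x / γ n| ≤ |x| * |Z n x| := by
                  have he : Z n x - x / γ n = (Real.exp x - 1 - x) / γ n := by
                    rw [hZdef]; ring
                  rw [he, abs_div, abs_of_pos (hγ n)]
                  calc |Real.exp x - 1 - x| / γ n
                      ≤ (|x| * |Real.exp x - 1|) / γ n := by
                        gcongr
                        · exact (hγ n).le
                        · exact aux_exp1 x
                    _ = |x| * (|Real.exp x - 1| / γ n) := by ring
                    _ = |x| * |Z n x| := by rw [hZabs n x]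
                have h6 : |f (Z n x) - f (x / γ n)| ≤ (L:ℝ) * δ * |Z n x| := by
                  calc |f (Z n x) - f (x / γ n)| ≤ (L:ℝ) * (|x| * |Z n x|) :=
                        le_trans hL (mul_le_mul_of_nonneg_left h3 L.coe_nonneg)
                    _ ≤ (L:ℝ) * δ * |Z n x| := by
                        rw [mul_assoc]
                        refine mul_le_mul_of_nonneg_left ?_ L.coe_nonneg
                        exact mul_le_mul_of_nonneg_right hx (abs_nonneg _)
                refine le_trans h6 (le_add_of_nonneg_right ?_)
                exact Set.indicator_nonneg (fun _ _ => by positivity) x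
              · have hmem : x ∈ {x : ℝ | δ < |x|} := hx
                rw [Set.indicator_of_mem hmem]
                have h7 : |f (Z n x) - f (x / γ n)| ≤ 2 * ‖f‖ := by
                  calc |f (Z n x) - f (x / γ n)| ≤ |f (Z n x)| + |f (x / γ n)| := abs_sub _ _
                    _ ≤ ‖f‖ + ‖f‖ := add_le_add (f.norm_coe_le_norm _) (f.norm_coe_le_norm _)
                    _ = 2 * ‖f‖ := by ring
                refine le_trans h7 (le_add_of_nonneg_left ?_)
                positivity
          _ = (L:ℝ) * δ * ∫ x, |Z n x| ∂(μ n)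
              + 2 * ‖f‖ * ((μ n) {x | δ < |x|}).toReal := by
              rw [integral_add ((hZint n).abs.const_mul _) ((integrable_const _).indicator hSm),
                integral_const_mul, integral_indicator_const _ hSm, smul_eq_mul, measureReal_def]
              ring
          _ ≤ (L:ℝ) * δ * C1 + ε/4 := by
              refine add_le_add ?_ h2
              exact mul_le_mul_of_nonneg_left h1 (by positivity)
      calc |∫ x, (f (Z n x) - f (x / γ n)) ∂(μ n)| ≤ (L:ℝ) * δ * C1 + ε/4 := key
        _ ≤ ε/4 + ε/4 := by linarith
        _ < ε := by linarith
    exact eventually_atTop.mp hev2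
  have hfinal := hdiff.add (hconv f)
  simpa using hfinal

lemma master
    (μ : ℕ → Measure ℝ) (hprob : ∀ n, IsProbabilityMeasure (μ n))
    (γ : ℕ → ℝ) (hγ : ∀ n, 0 < γ n)
    (ν : Measure ℝ) (hν : IsProbabilityMeasure ν)
    (hexp : ∀ n, Integrable Real.exp (μ n))
    {p : ℝ} (hp : 1 < p)
    {C : ℝ≥0∞} (hCfin : C ≠ ⊤)
    (hC : ∀ᶠ n in atTop, ∫⁻ x, ENNReal.ofReal (|(Real.exp x - 1)/γ n| ^ p) ∂(μ n) ≤ C)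
    (hconvZ : ∀ (f : BoundedContinuousFunction ℝ ℝ) (L : ℝ≥0), LipschitzWith L f →
      Tendsto (fun n => ∫ x, f ((Real.exp x - 1) / γ n) ∂(μ n)) atTop (𝓝 (∫ y, f y ∂ν)))
    (hνint : Integrable (fun y => y) ν)
    (h : ℝ → ℝ) (hlip : LipschitzWith 1 h) (habs : ∀ z, |h z| ≤ |z|) :
    Tendsto (fun n => ∫ x, h ((Real.exp x - 1) / γ n) ∂(μ n)) atTop (𝓝 (∫ y, h y ∂ν)) := by
  have hppos : (0:ℝ) < p := lt_trans zero_lt_one hp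
  set Z : ℕ → ℝ → ℝ := fun n x => (Real.exp x - 1) / γ n with hZdef
  have hZmeas : ∀ n, Measurable (Z n) := fun n =>
    (Real.measurable_exp.sub measurable_const).div_const _
  have hZint : ∀ n, Integrable (Z n) (μ n) := fun n =>
    ((hexp n).sub (integrable_const 1)).div_const _
  have hhcont : Continuous h := hlip.continuous
  have hhZint : ∀ n, Integrable (fun x => h (Z n x)) (μ n) := by
    intro n
    refine Integrable.mono' (hZint n).abs
      ((hhcont.measurable.comp (hZmeas n)).aestronglyMeasurable)
      (Filter.Eventually.of_forall fun x => ?_)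
    rw [Real.norm_eq_abs]; exact habs _
  have hhνint : Integrable (fun y => h y) ν := by
    refine Integrable.mono' hνint.abs hhcont.measurable.aestronglyMeasurable
      (Filter.Eventually.of_forall fun y => ?_)
    rw [Real.norm_eq_abs]; exact habs _
  -- clamp
  set clamp : ℝ → ℝ → ℝ := fun M v => max (min v M) (-M) with hclampdef
  have hclamp_lip : ∀ M, LipschitzWith 1 (clamp M) := fun M =>
    (LipschitzWith.id.min_const M).max_const (-M)
  have hclamp_bd : ∀ M v, 0 ≤ M → |clamp M v| ≤ M := by
    intro M v hM
    rw [abs_le]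
    constructor
    · exact le_max_right _ _
    · exact max_le (min_le_right _ _) (by linarith)
  have hclamp_int : ∀ (M : ℝ), 0 ≤ M → ∀ n, Integrable (fun x => clamp M (h (Z n x))) (μ n) := by
    intro M hM n
    refine Integrable.mono' (integrable_const M)
      (((hclamp_lip M).continuous.comp hhcont).measurable.comp (hZmeas n)
        |>.aestronglyMeasurable)
      (Filter.Eventually.of_forall fun x => ?_)
    rw [Real.norm_eq_abs]; exact hclamp_bd M _ hM
  have hclamp_νint : ∀ (M : ℝ), 0 ≤ M → Integrable (fun y => clamp M (h y)) ν := by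
    intro M hM
    refine Integrable.mono' (integrable_const M)
      (((hclamp_lip M).continuous.comp hhcont).measurable.aestronglyMeasurable)
      (Filter.Eventually.of_forall fun y => ?_)
    rw [Real.norm_eq_abs]; exact hclamp_bd M _ hM
  -- middle convergence for each M ≥ 0
  have hmid : ∀ (M : ℝ), 0 ≤ M →
      Tendsto (fun n => ∫ x, clamp M (h (Z n x)) ∂(μ n)) atTop (𝓝 (∫ y, clamp M (h y) ∂ν)) := by
    intro M hM
    set fM : BoundedContinuousFunction ℝ ℝ :=
      BoundedContinuousFunction.ofNormedAddCommGroup (fun z => clamp M (h z))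
        (((hclamp_lip M).continuous.comp hhcont)) M
        (fun z => by rw [Real.norm_eq_abs]; exact hclamp_bd M _ hM) with hfM
    have hcoe : ⇑fM = fun z => clamp M (h z) := rfl
    have hlipf : LipschitzWith 1 ⇑fM := by
      rw [hcoe]
      simpa [Function.comp_def] using (hclamp_lip M).comp hlip
    have := hconvZ fM 1 hlipf
    rw [hcoe] at this
    exact this
  -- ν-side tail tends to 0
  have hνtail : Tendsto (fun M : ℕ => ∫ y, max (|y| - M) 0 ∂ν) atTop (𝓝 0) := by
    have key := tendsto_integral_of_dominated_convergence (μ := ν)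
      (F := fun (M : ℕ) y => max (|y| - M) 0) (f := fun _ => (0:ℝ)) (bound := fun y => |y|)
      (fun M => ((continuous_abs.sub continuous_const).max continuous_const).measurable
        |>.aestronglyMeasurable)
      hνint.abs
      (fun M => Filter.Eventually.of_forall fun y => by
        rw [Real.norm_eq_abs, abs_of_nonneg (le_max_right _ _)]
        exact max_le (sub_le_self _ (Nat.cast_nonneg M)) (abs_nonneg _))
      (Filter.Eventually.of_forall fun y => by
        apply tendsto_atTop_of_eventually_const (i₀ := ⌈|y|⌉₊)
        intro M hM
        have hy : |y| ≤ (M:ℝ) := le_trans (Nat.le_ceil _) (by exact_mod_cast hM)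
        show max (|y| - (M:ℝ)) 0 = 0
        rw [max_eq_right (by linarith)])
    rw [integral_zero] at key
    exact key
  -- main estimate
  rw [Metric.tendsto_atTop]
  intro ε hε
  -- choose M
  have hMtend : Tendsto (fun M : ℕ => C.toReal / (M:ℝ) ^ (p - 1)) atTop (𝓝 0) := by
    have h1 : Tendsto (fun M : ℕ => ((M:ℝ)) ^ (p - 1)) atTop atTop :=
      (tendsto_rpow_atTop (by linarith : (0:ℝ) < p - 1)).comp tendsto_natCast_atTop_atTop
    simpa [div_eq_mul_inv] using h1.inv_tendsto_atTop.const_mul C.toReal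
  obtain ⟨M, hM1, hMa, hMb⟩ : ∃ M : ℕ, 1 ≤ M ∧ C.toReal / (M:ℝ) ^ (p - 1) ≤ ε/4 ∧
      ∫ y, max (|y| - M) 0 ∂ν ≤ ε/4 := by
    have e1 := hMtend.eventually_le_const (show (0:ℝ) < ε/4 by positivity)
    have e2 := hνtail.eventually_le_const (show (0:ℝ) < ε/4 by positivity)
    have e3 : ∀ᶠ M : ℕ in atTop, 1 ≤ M := eventually_ge_atTop 1
    rcases (e1.and (e2.and e3)).exists with ⟨M, h1, h2, h3⟩
    exact ⟨M, h3, h1, h2⟩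
  have hMpos : (0:ℝ) < M := by exact_mod_cast hM1
  -- μ-side tail bound, eventually
  have hev_mu : ∀ᶠ n in atTop,
      |(∫ x, h (Z n x) ∂(μ n)) - ∫ x, clamp M (h (Z n x)) ∂(μ n)| ≤ C.toReal / (M:ℝ) ^ (p-1) := by
    filter_upwards [hC] with n hn
    have hmeasp : Measurable fun x => |Z n x| ^ p :=
      (Real.continuous_rpow_const hppos.le).measurable.comp (hZmeas n).abs
    have hZp_int : Integrable (fun x => |Z n x| ^ p) (μ n) := by
      refine ⟨hmeasp.aestronglyMeasurable, ?_⟩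
      rw [hasFiniteIntegral_iff_ofReal
        (Filter.Eventually.of_forall fun x => Real.rpow_nonneg (abs_nonneg _) p)]
      exact lt_of_le_of_lt hn hCfin.lt_top
    have hZp_val : ∫ x, |Z n x| ^ p ∂(μ n) ≤ C.toReal := by
      rw [integral_eq_lintegral_of_nonneg_ae
        (Filter.Eventually.of_forall fun x => Real.rpow_nonneg (abs_nonneg _) p)
        hmeasp.aestronglyMeasurable]
      exact ENNReal.toReal_mono hCfin hn
    rw [← integral_sub (hhZint n) (hclamp_int M hMpos.le n)]
    calc |∫ x, (h (Z n x) - clamp M (h (Z n x))) ∂(μ n)|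
        ≤ ∫ x, |h (Z n x) - clamp M (h (Z n x))| ∂(μ n) := by
          simpa [Real.norm_eq_abs] using norm_integral_le_integral_norm (μ := μ n)
            (fun x => h (Z n x) - clamp M (h (Z n x)))
      _ ≤ ∫ x, |Z n x| ^ p / (M:ℝ) ^ (p - 1) ∂(μ n) := by
          apply integral_mono ((hhZint n).sub (hclamp_int M hMpos.le n)).abs
            (hZp_int.div_const _)
          intro x
          simp only [Pi.sub_apply]
          calc |h (Z n x) - clamp M (h (Z n x))| ≤ max (|h (Z n x)| - M) 0 :=
                pt1 _ _ hMpos.le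
            _ ≤ max (|Z n x| - M) 0 := by
                apply max_le_max _ le_rfl
                have := habs (Z n x)
                linarith
            _ ≤ |Z n x| ^ p / (M:ℝ) ^ (p - 1) := pt3 (abs_nonneg _) hMpos hp
      _ = (∫ x, |Z n x| ^ p ∂(μ n)) / (M:ℝ) ^ (p - 1) := integral_div _ _
      _ ≤ C.toReal / (M:ℝ) ^ (p-1) :=
          by gcongr <;> first
              | exact Real.rpow_pos_of_pos hMpos _
              | exact hZp_val
  -- ν-side bound
  have hν_bd : |(∫ y, h y ∂ν) - ∫ y, clamp M (h y) ∂ν| ≤ ε/4 := by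
    rw [← integral_sub hhνint (hclamp_νint M hMpos.le)]
    refine le_trans ?_ hMb
    calc |∫ y, (h y - clamp M (h y)) ∂ν| ≤ ∫ y, |h y - clamp M (h y)| ∂ν := by
          simpa [Real.norm_eq_abs] using norm_integral_le_integral_norm (μ := ν)
            (fun y => h y - clamp M (h y))
      _ ≤ ∫ y, max (|y| - M) 0 ∂ν := by
          apply integral_mono (hhνint.sub (hclamp_νint M hMpos.le)).abs
          · refine Integrable.mono' hνint.abs
              (((continuous_abs.sub continuous_const).max continuous_const).measurable
                |>.aestronglyMeasurable)
              (Filter.Eventually.of_forall fun y => ?_)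
            rw [Real.norm_eq_abs, abs_of_nonneg (le_max_right _ _)]
            refine max_le (by linarith [abs_nonneg y, (Nat.cast_nonneg M : (0:ℝ) ≤ M)]) (abs_nonneg _)
          · intro y
            simp only [Pi.sub_apply]
            calc |h y - clamp M (h y)| ≤ max (|h y| - M) 0 := pt1 _ _ hMpos.le
              _ ≤ max (|y| - M) 0 := by
                  apply max_le_max _ le_rfl
                  have := habs y
                  linarith
  -- middle eventually
  have hmid_ev : ∀ᶠ n in atTop,
      dist (∫ x, clamp M (h (Z n x)) ∂(μ n)) (∫ y, clamp M (h y) ∂ν) < ε/4 := by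
    have := Metric.tendsto_atTop.mp (hmid M hMpos.le) (ε/4) (by positivity)
    rcases this with ⟨N, hN⟩
    exact eventually_atTop.mpr ⟨N, hN⟩
  have hfinal : ∀ᶠ n in atTop,
      dist (∫ x, h (Z n x) ∂(μ n)) (∫ y, h y ∂ν) < ε := by
    filter_upwards [hev_mu, hmid_ev] with n h1 h2
    rw [Real.dist_eq] at h2 ⊢
    have tri : |(∫ x, h (Z n x) ∂(μ n)) - ∫ y, h y ∂ν| ≤
        |(∫ x, h (Z n x) ∂(μ n)) - ∫ x, clamp M (h (Z n x)) ∂(μ n)|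
        + |(∫ x, clamp M (h (Z n x)) ∂(μ n)) - ∫ y, clamp M (h y) ∂ν|
        + |(∫ y, clamp M (h y) ∂ν) - ∫ y, h y ∂ν| := by
      have := abs_sub_le (∫ x, h (Z n x) ∂(μ n)) (∫ x, clamp M (h (Z n x)) ∂(μ n)) (∫ y, h y ∂ν)
      have := abs_sub_le (∫ x, clamp M (h (Z n x)) ∂(μ n)) (∫ y, clamp M (h y) ∂ν) (∫ y, h y ∂ν)
      linarith [abs_sub_le (∫ x, h (Z n x) ∂(μ n)) (∫ x, clamp M (h (Z n x)) ∂(μ n)) (∫ y, h y ∂ν)]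
    have h3 : |(∫ y, clamp M (h y) ∂ν) - ∫ y, h y ∂ν| ≤ ε/4 := by
      rw [abs_sub_comm]; exact hν_bd
    linarith
  exact eventually_atTop.mp hfinal
/-- **Typical deviations: asymptotics of call and put prices.**
For each `n`, the law of `X_n` is the probability measure `μ n` on `ℝ`, and `ν` is the law
of `Y`. Convergence in distribution of `X_n/γ_n` to `Y` is expressed by convergence of
integrals of bounded continuous functions. If `E_n[e^{X_n}] = 1` for every `n`,
`limsup_n E_n[|(e^{X_n}-1)/γ_n|^{1+η}] < ∞` for some `η > 0`, and `κ n ≥ 0` with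
`κ n / γ n → a ∈ [0,∞)`, then `E_n[(e^{X_n}-e^{κ n})⁺]/γ n → E[(Y-a)⁺]` and
`E_n[(e^{-κ n}-e^{X_n})⁺]/γ n → E[(Y+a)⁻]`, where `x⁻ = max (-x) 0`. -/
theorem typical_deviations_option_prices
    (μ : ℕ → Measure ℝ) (hprob : ∀ n, IsProbabilityMeasure (μ n))
    (γ : ℕ → ℝ) (hγ : ∀ n, 0 < γ n) (hγ0 : Tendsto γ atTop (𝓝 0))
    (ν : Measure ℝ) (hν : IsProbabilityMeasure ν)
    (hconv : ∀ f : BoundedContinuousFunction ℝ ℝ,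
      Tendsto (fun n => ∫ x, f (x / γ n) ∂(μ n)) atTop (𝓝 (∫ y, f y ∂ν)))
    (hmart : ∀ n, ∫ x, Real.exp x ∂(μ n) = 1)
    (η : ℝ) (hη : 0 < η)
    (hmom : limsup
        (fun n => ∫⁻ x, ENNReal.ofReal (|(Real.exp x - 1) / γ n| ^ (1+η)) ∂(μ n)) atTop < ⊤)
    (κ : ℕ → ℝ) (hκ : ∀ n, 0 ≤ κ n)
    (a : ℝ) (ha : 0 ≤ a)
    (hκγ : Tendsto (fun n => κ n / γ n) atTop (𝓝 a)) :
    Tendsto (fun n => (∫ x, max (Real.exp x - Real.exp (κ n)) 0 ∂(μ n)) / γ n)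
        atTop (𝓝 (∫ y, max (y - a) 0 ∂ν)) ∧
    Tendsto (fun n => (∫ x, max (Real.exp (-κ n) - Real.exp x) 0 ∂(μ n)) / γ n)
        atTop (𝓝 (∫ y, max (-(y + a)) 0 ∂ν)) := by
  have hp : (1:ℝ) < 1 + η := by linarith
  set p : ℝ := 1 + η with hpdef
  set Z : ℕ → ℝ → ℝ := fun n x => (Real.exp x - 1) / γ n with hZdef
  -- moment bound constant
  obtain ⟨C, hCfin, hC⟩ : ∃ C : ℝ≥0∞, C ≠ ⊤ ∧ ∀ᶠ n in atTop,
      ∫⁻ x, ENNReal.ofReal (|(Real.exp x - 1) / γ n| ^ p) ∂(μ n) ≤ C := by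
    refine ⟨limsup (fun n => ∫⁻ x, ENNReal.ofReal (|(Real.exp x - 1) / γ n| ^ p) ∂(μ n)) atTop
      + 1, ?_, ?_⟩
    · exact ENNReal.add_ne_top.mpr ⟨hmom.ne, ENNReal.one_ne_top⟩
    · have hlt := eventually_lt_of_limsup_lt
        (ENNReal.lt_add_right hmom.ne one_ne_zero)
      exact hlt.mono fun n hn => hn.le
  -- integrability of exp
  have hexp : ∀ n, Integrable Real.exp (μ n) := by
    intro n
    by_contra hcon
    have h0 := integral_undef hcon
    rw [hmart n] at h0
    exact one_ne_zero h0
  have hZmeas : ∀ n, Measurable (Z n) := fun n =>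
    (Real.measurable_exp.sub measurable_const).div_const _
  have hZint : ∀ n, Integrable (Z n) (μ n) := fun n =>
    ((hexp n).sub (integrable_const 1)).div_const _
  -- weak convergence of the laws of Z n
  have hconvZ : ∀ (f : BoundedContinuousFunction ℝ ℝ) (L : ℝ≥0), LipschitzWith L ⇑f →
      Tendsto (fun n => ∫ x, f ((Real.exp x - 1) / γ n) ∂(μ n)) atTop (𝓝 (∫ y, f y ∂ν)) :=
    fun f L hf => conv_Z μ hprob γ hγ hγ0 ν hconv hexp hp hCfin hC f L hf
  -- eventual L¹ bound on Z
  set C1 : ℝ := (1 + C).toReal with hC1def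
  have hev1 : ∀ᶠ n in atTop, ∫ x, |Z n x| ∂(μ n) ≤ C1 := by
    filter_upwards [hC] with n hn
    have h1 : ∫ x, |Z n x| ∂(μ n) = (∫⁻ x, ENNReal.ofReal |Z n x| ∂(μ n)).toReal := by
      rw [integral_eq_lintegral_of_nonneg_ae (Filter.Eventually.of_forall fun x => abs_nonneg _)
        ((hZint n).abs.aestronglyMeasurable)]
    rw [h1]
    have h2 : ∫⁻ x, ENNReal.ofReal |Z n x| ∂(μ n) ≤ 1 + C :=
      le_trans (moment_L1 (μ n) (Z n) (le_of_lt hp)) (add_le_add_right hn 1)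
    exact ENNReal.toReal_mono (ENNReal.add_ne_top.mpr ⟨ENNReal.one_ne_top, hCfin⟩) h2
  -- first moment of ν
  have habsl : LipschitzWith 1 (fun z : ℝ => |z|) := lipschitzWith_one_norm
  have hνint : Integrable (fun y => y) ν := by
    have hK : ∀ K : ℕ, ∫ y, min |y| (K:ℝ) ∂ν ≤ C1 := by
      intro K
      set fK : BoundedContinuousFunction ℝ ℝ :=
        BoundedContinuousFunction.ofNormedAddCommGroup (fun z => min |z| (K:ℝ))
          (continuous_abs.min continuous_const) (K:ℝ)
          (fun z => by
            rw [Real.norm_eq_abs, abs_of_nonneg (le_min (abs_nonneg _) (Nat.cast_nonneg K))]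
            exact min_le_right _ _) with hfK
      have hcoe : ⇑fK = fun z => min |z| (K:ℝ) := rfl
      have htd := hconvZ fK 1 (by rw [hcoe]; exact habsl.min_const _)
      rw [hcoe] at htd
      refine le_of_tendsto htd ?_
      filter_upwards [hev1] with n hn
      have hKint : Integrable (fun x => min (|Z n x|) (K:ℝ)) (μ n) := by
        refine Integrable.mono' (integrable_const (K:ℝ))
          ((continuous_abs.min continuous_const).measurable.comp (hZmeas n)
            |>.aestronglyMeasurable)
          (Filter.Eventually.of_forall fun x => ?_)
        rw [Real.norm_eq_abs, abs_of_nonneg (le_min (abs_nonneg _) (Nat.cast_nonneg K))]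
        exact min_le_right _ _
      have hmono : ∫ x, min (|Z n x|) (K:ℝ) ∂(μ n) ≤ ∫ x, |Z n x| ∂(μ n) :=
        integral_mono hKint (hZint n).abs (fun x => min_le_left _ _)
      exact le_trans hmono hn
    have hfin : ∫⁻ y, ENNReal.ofReal |y| ∂ν < ⊤ := by
      have hmeasK : ∀ K : ℕ, Measurable fun y : ℝ => ENNReal.ofReal (min |y| (K:ℝ)) := fun K =>
        ((continuous_abs.min continuous_const).measurable).ennreal_ofReal
      have hmct : ∫⁻ y, ENNReal.ofReal |y| ∂ν
          = ⨆ K : ℕ, ∫⁻ y, ENNReal.ofReal (min |y| (K:ℝ)) ∂ν := by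
        rw [← lintegral_iSup hmeasK]
        · congr 1 with y
          apply le_antisymm
          · refine le_iSup_of_le ⌈|y|⌉₊ ?_
            rw [min_eq_left (Nat.le_ceil _)]
          · exact iSup_le fun K => ENNReal.ofReal_le_ofReal (min_le_left _ _)
        · intro K K' hKK' y
          exact ENNReal.ofReal_le_ofReal (min_le_min le_rfl (by exact_mod_cast hKK'))
      rw [hmct]
      refine lt_of_le_of_lt (iSup_le fun K => ?_)
        (show ENNReal.ofReal C1 < ⊤ from ENNReal.ofReal_lt_top)
      have hKint : Integrable (fun y => min |y| (K:ℝ)) ν := by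
        refine Integrable.mono' (integrable_const (K:ℝ))
          ((continuous_abs.min continuous_const).measurable.aestronglyMeasurable)
          (Filter.Eventually.of_forall fun y => ?_)
        rw [Real.norm_eq_abs, abs_of_nonneg (le_min (abs_nonneg _) (Nat.cast_nonneg K))]
        exact min_le_right _ _
      rw [← ofReal_integral_eq_lintegral_ofReal hKint
        (Filter.Eventually.of_forall fun y => le_min (abs_nonneg _) (Nat.cast_nonneg K))]
      exact ENNReal.ofReal_le_ofReal (hK K)
    refine ⟨measurable_id.aestronglyMeasurable, ?_⟩
    rw [hasFiniteIntegral_iff_norm]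
    simpa [Real.norm_eq_abs] using hfin
  -- the two Lipschitz payoff functions
  have hcall_lip : LipschitzWith 1 (fun z : ℝ => max (z - a) 0) := by
    apply LipschitzWith.of_dist_le_mul
    intro x y
    rw [NNReal.coe_one, one_mul, Real.dist_eq, Real.dist_eq]
    refine le_trans (abs_max_sub_max_le_abs _ _ _) ?_
    have : x - a - (y - a) = x - y := by ring
    rw [this]
  have hput_lip : LipschitzWith 1 (fun z : ℝ => max (-(z + a)) 0) := by
    apply LipschitzWith.of_dist_le_mul
    intro x y
    rw [NNReal.coe_one, one_mul, Real.dist_eq, Real.dist_eq]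
    refine le_trans (abs_max_sub_max_le_abs _ _ _) ?_
    have : -(x + a) - -(y + a) = -(x - y) := by ring
    rw [this, abs_neg]
  have hcall_abs : ∀ z : ℝ, |max (z - a) 0| ≤ |z| := by
    intro z
    rw [abs_of_nonneg (le_max_right _ _)]
    exact max_le (le_trans (sub_le_self z ha) (le_abs_self z)) (abs_nonneg z)
  have hput_abs : ∀ z : ℝ, |max (-(z + a)) 0| ≤ |z| := by
    intro z
    rw [abs_of_nonneg (le_max_right _ _)]
    refine max_le ?_ (abs_nonneg z)
    calc -(z + a) ≤ -z := by linarith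
      _ ≤ |z| := neg_le_abs z
  -- master applications
  have hcall := master μ hprob γ hγ ν hν hexp hp hCfin hC hconvZ hνint
    (fun z => max (z - a) 0) hcall_lip hcall_abs
  have hput := master μ hprob γ hγ ν hν hexp hp hCfin hC hconvZ hνint
    (fun z => max (-(z + a)) 0) hput_lip hput_abs
  -- strikes
  have hκ0 : Tendsto κ atTop (𝓝 0) := by
    have h1 := hκγ.mul hγ0
    rw [mul_zero] at h1
    have h2 : (fun n => κ n / γ n * γ n) = κ := by
      funext n
      exact div_mul_cancel₀ _ (hγ n).ne'
    rwa [h2] at h1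
  have hstrike : ∀ (σ : ℕ → ℝ), (∀ n, |σ n| ≤ κ n) → Tendsto σ atTop (𝓝 0) →
      ∀ (b : ℝ), Tendsto (fun n => σ n / γ n) atTop (𝓝 b) →
      Tendsto (fun n => (Real.exp (σ n) - 1) / γ n) atTop (𝓝 b) := by
    intro σ hσκ hσ0 b hσγ
    have hdiff0 : Tendsto (fun n => (Real.exp (σ n) - 1) / γ n - σ n / γ n) atTop (𝓝 0) := by
      apply squeeze_zero_norm (a := fun n => |σ n / γ n| * |Real.exp (σ n) - 1|)
      · intro n
        have h1 : (Real.exp (σ n) - 1) / γ n - σ n / γ n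
            = (Real.exp (σ n) - 1 - σ n) / γ n := by ring
        rw [Real.norm_eq_abs, h1, abs_div, abs_of_pos (hγ n)]
        calc |Real.exp (σ n) - 1 - σ n| / γ n
            ≤ (|σ n| * |Real.exp (σ n) - 1|) / γ n := by
              gcongr
              · exact (hγ n).le
              · exact aux_exp1 (σ n)
          _ = |σ n| / γ n * |Real.exp (σ n) - 1| := by ring
          _ = |σ n / γ n| * |Real.exp (σ n) - 1| := by
              rw [abs_div, abs_of_pos (hγ n)]
      · have h2 : Tendsto (fun n => |Real.exp (σ n) - 1|) atTop (𝓝 0) := by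
          have h3 : Tendsto (fun n => Real.exp (σ n)) atTop (𝓝 1) := by
            have := (Real.continuous_exp.tendsto 0).comp hσ0
            simpa [Function.comp_def] using this
          have h4 := (h3.sub_const 1).abs
          simpa using h4
        have h5 := hσγ.abs.mul h2
        simpa using h5
    have := hdiff0.add hσγ
    simpa using this
  have hc : Tendsto (fun n => (Real.exp (κ n) - 1) / γ n) atTop (𝓝 a) :=
    hstrike κ (fun n => le_of_eq (abs_of_nonneg (hκ n))) hκ0 a hκγ
  have hd : Tendsto (fun n => (Real.exp (-κ n) - 1) / γ n) atTop (𝓝 (-a)) := by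
    have h1 : Tendsto (fun n => (-κ n) / γ n) atTop (𝓝 (-a)) := by
      have := hκγ.neg
      simpa [neg_div] using this
    exact hstrike (fun n => -κ n) (fun n => le_of_eq (by rw [abs_neg, abs_of_nonneg (hκ n)]))
      (by simpa using hκ0.neg) (-a) h1
  -- comparison between moving strike and limit strike
  have hcomp : ∀ (c : ℕ → ℝ) (e : ℝ) (n : ℕ),
      |(∫ x, max (Z n x - c n) 0 ∂(μ n)) - ∫ x, max (Z n x - e) 0 ∂(μ n)| ≤ |c n - e| := by
    intro c e n
    have hint1 : Integrable (fun x => max (Z n x - c n) 0) (μ n) :=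
      ((hZint n).sub (integrable_const _)).pos_part
    have hint2 : Integrable (fun x => max (Z n x - e) 0) (μ n) :=
      ((hZint n).sub (integrable_const _)).pos_part
    rw [← integral_sub hint1 hint2]
    calc |∫ x, (max (Z n x - c n) 0 - max (Z n x - e) 0) ∂(μ n)|
        ≤ ∫ x, |max (Z n x - c n) 0 - max (Z n x - e) 0| ∂(μ n) := by
          simpa [Real.norm_eq_abs] using norm_integral_le_integral_norm (μ := μ n)
            (fun x => max (Z n x - c n) 0 - max (Z n x - e) 0)
      _ ≤ ∫ _x, |c n - e| ∂(μ n) := by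
          apply integral_mono (hint1.sub hint2).abs (integrable_const _)
          intro x
          simp only [Pi.sub_apply]
          refine le_trans (abs_max_sub_max_le_abs _ _ _) ?_
          have h6 : Z n x - c n - (Z n x - e) = -(c n - e) := by ring
          rw [h6, abs_neg]
      _ = |c n - e| := by
          rw [integral_const, probReal_univ, one_smul]
  constructor
  · -- call
    have hrw : (fun n => (∫ x, max (Real.exp x - Real.exp (κ n)) 0 ∂(μ n)) / γ n)
        = fun n => ∫ x, max (Z n x - (Real.exp (κ n) - 1) / γ n) 0 ∂(μ n) := by
      funext n
      rw [← integral_div]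
      congr 1
      funext x
      rw [← max_div_div_right (hγ n).le, zero_div]
      congr 1
      rw [hZdef]
      ring
    rw [hrw]
    have hD : Tendsto (fun n => (∫ x, max (Z n x - (Real.exp (κ n) - 1) / γ n) 0 ∂(μ n))
        - ∫ x, max (Z n x - a) 0 ∂(μ n)) atTop (𝓝 0) := by
      apply squeeze_zero_norm (a := fun n => |(Real.exp (κ n) - 1) / γ n - a|)
      · intro n
        rw [Real.norm_eq_abs]
        exact hcomp (fun m => (Real.exp (κ m) - 1) / γ m) a n
      · have := (hc.sub_const a).abs
        simpa using this
    have := hD.add hcall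
    simpa [hZdef] using this
  · -- put
    have hrw : (fun n => (∫ x, max (Real.exp (-κ n) - Real.exp x) 0 ∂(μ n)) / γ n)
        = fun n => ∫ x, max ((Real.exp (-κ n) - 1) / γ n - Z n x) 0 ∂(μ n) := by
      funext n
      rw [← integral_div]
      congr 1
      funext x
      rw [← max_div_div_right (hγ n).le, zero_div]
      congr 1
      rw [hZdef]
      ring
    rw [hrw]
    have hcomp' : ∀ n,
        |(∫ x, max ((Real.exp (-κ n) - 1) / γ n - Z n x) 0 ∂(μ n))
          - ∫ x, max (-(Z n x + a)) 0 ∂(μ n)| ≤ |(Real.exp (-κ n) - 1) / γ n - (-a)| := by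
      intro n
      have hint1 : Integrable (fun x => max ((Real.exp (-κ n) - 1) / γ n - Z n x) 0) (μ n) :=
        ((integrable_const _).sub (hZint n)).pos_part
      have hint2 : Integrable (fun x => max (-(Z n x + a)) 0) (μ n) :=
        (((hZint n).add (integrable_const a)).neg).pos_part
      rw [← integral_sub hint1 hint2]
      calc |∫ x, (max ((Real.exp (-κ n) - 1) / γ n - Z n x) 0 - max (-(Z n x + a)) 0) ∂(μ n)|
          ≤ ∫ x, |max ((Real.exp (-κ n) - 1) / γ n - Z n x) 0 - max (-(Z n x + a)) 0| ∂(μ n) := by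
            simpa [Real.norm_eq_abs] using norm_integral_le_integral_norm (μ := μ n)
              (fun x => max ((Real.exp (-κ n) - 1) / γ n - Z n x) 0 - max (-(Z n x + a)) 0)
        _ ≤ ∫ _x, |(Real.exp (-κ n) - 1) / γ n - (-a)| ∂(μ n) := by
            apply integral_mono (hint1.sub hint2).abs (integrable_const _)
            intro x
            simp only [Pi.sub_apply]
            refine le_trans (abs_max_sub_max_le_abs _ _ _) ?_
            have h6 : (Real.exp (-κ n) - 1) / γ n - Z n x - -(Z n x + a)
                = (Real.exp (-κ n) - 1) / γ n - (-a) := by ring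
            rw [h6]
        _ = |(Real.exp (-κ n) - 1) / γ n - (-a)| := by
            rw [integral_const, probReal_univ, one_smul]
    have hD : Tendsto (fun n => (∫ x, max ((Real.exp (-κ n) - 1) / γ n - Z n x) 0 ∂(μ n))
        - ∫ x, max (-(Z n x + a)) 0 ∂(μ n)) atTop (𝓝 0) := by
      apply squeeze_zero_norm (a := fun n => |(Real.exp (-κ n) - 1) / γ n - (-a)|)
      · intro n
        rw [Real.norm_eq_abs]
        exact hcomp' n
      · have := (hd.sub_const (-a)).abs
        simpa using this
    have := hD.add hput
    simpa [hZdef] using this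
end
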